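/- arXiv:1903.05767 — 5 statements merged into one kernel-verified Lean document; each statement's English description precedes it below -/
import Mathlib

section
/- Under the hypotheses of the generalized SDP bound (symmetric polynomial F with triple-sum lower bound N³f_0, F(x,x,1) ≤ B + 2g_T(x) on [-1,cos θ], F(x,y,z) ≤ g_T(x)+g_T(y)+g_T(z) on D(θ)), suppose T ⊆ [-1, cos θ] and g(t) ≤ -a < 0 for all t ∈ T. Then for every spherical code C of size N with minimal angular distance θ, the distance distribution satisfies A(T) := (1/N) · #{(u,v) ∈ C² : u ≠ v, u·v ∈ T} ≤ (2/N)·⌊Q⌋ where Q := (F(1,1,1) + 3(N-1)B - f_0 N²)/(6a). In particular, if T = {t} and Q < 1, then no two distinct points of C have inner product t. -/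
open scoped RealInnerProductSpace

lemma even_card_of_swap' {α : Type*} [DecidableEq α] :
    ∀ s : Finset (α × α), (∀ p ∈ s, Prod.swap p ∈ s) → (∀ p ∈ s, p.1 ≠ p.2) →
      Even s.card := by
  intro s
  induction s using Finset.strongInduction with
  | _ s ih =>
    intro hs hd
    rcases s.eq_empty_or_nonempty with rfl | ⟨p, hp⟩
    · simp
    · have hps : Prod.swap p ∈ s := hs p hp
      have hne : Prod.swap p ≠ p := by
        intro h
        exact hd p hp (Prod.ext_iff.mp h).2
      have hmemswap : Prod.swap p ∈ s.erase p := Finset.mem_erase.mpr ⟨hne, hps⟩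
      set s' := (s.erase p).erase (Prod.swap p) with hs'
      have hsub : s' ⊂ s :=
        lt_of_le_of_lt (Finset.erase_subset _ _) (Finset.erase_ssubset hp)
      have hcard : s.card = s'.card + 2 := by
        rw [hs', Finset.card_erase_of_mem hmemswap, Finset.card_erase_of_mem hp]
        have h2 : 0 < (s.erase p).card := Finset.card_pos.mpr ⟨_, hmemswap⟩
        rw [Finset.card_erase_of_mem hp] at h2
        omega
      have hclosed : ∀ q ∈ s', Prod.swap q ∈ s' := by
        intro q hq
        rw [hs', Finset.mem_erase, Finset.mem_erase] at hq ⊢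
        obtain ⟨hq1, hq2, hq3⟩ := hq
        refine ⟨fun h => hq2 (Prod.swap_injective h), fun h => hq1 ?_, hs q hq3⟩
        rw [← Prod.swap_swap q, h]
      obtain ⟨k, hk⟩ := ih s' hsub hclosed
        (fun q hq => hd q (Finset.mem_of_mem_erase (Finset.mem_of_mem_erase hq)))
      exact ⟨k + 1, by omega⟩

lemma gram_det_nonneg' {E : Type*} [NormedAddCommGroup E] [InnerProductSpace ℝ E]
    {u v w : E} (hu : ‖u‖ = 1) (hv : ‖v‖ = 1) (hw : ‖w‖ = 1) :
    0 ≤ 1 + 2 * ⟪u, v⟫ * ⟪u, w⟫ * ⟪v, w⟫ - ⟪u, v⟫ ^ 2 - ⟪u, w⟫ ^ 2 - ⟪v, w⟫ ^ 2 := by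
  have huu : ⟪u, u⟫ = (1 : ℝ) := by rw [real_inner_self_eq_norm_sq, hu]; norm_num
  have hvv : ⟪v, v⟫ = (1 : ℝ) := by rw [real_inner_self_eq_norm_sq, hv]; norm_num
  have hww : ⟪w, w⟫ = (1 : ℝ) := by rw [real_inner_self_eq_norm_sq, hw]; norm_num
  set p := ⟪u, v⟫ with hpdef
  set q := ⟪u, w⟫ with hqdef
  set r := ⟪v, w⟫ with hrdef
  have hvu : ⟪v, u⟫ = p := (real_inner_comm v u).symm
  have hwu : ⟪w, u⟫ = q := (real_inner_comm w u).symm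
  have hwv : ⟪w, v⟫ = r := (real_inner_comm w v).symm
  by_cases hp : p ^ 2 = 1
  · have h0 : u - p • v = 0 := by
      have hps : ‖p • v‖ ^ 2 = p ^ 2 := by rw [norm_smul, hv, mul_one, Real.norm_eq_abs, sq_abs]
      have hn : ‖u - p • v‖ ^ 2 = 0 := by
        rw [norm_sub_sq_real, real_inner_smul_right, hu, hps]
        rw [← hpdef]
        linear_combination -hp
      have := (pow_eq_zero_iff two_ne_zero).mp hn
      exact norm_eq_zero.mp this
    have hq : q = p * r := by
      have hupv : u = p • v := by rwa [sub_eq_zero] at h0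
      rw [hqdef, hupv, real_inner_smul_left, hrdef]
    rw [hq]
    nlinarith [hp, sq_nonneg r]
  · have hple : p ^ 2 < 1 := by
      have h := abs_real_inner_le_norm u v
      rw [hu, hv, mul_one] at h
      have h2 : p ^ 2 ≤ 1 := by nlinarith [sq_abs p, abs_nonneg p]
      exact lt_of_le_of_ne h2 hp
    have hcc : (0:ℝ) ≤ ⟪(1 - p ^ 2) • w - (q - p * r) • u - (r - p * q) • v,
        (1 - p ^ 2) • w - (q - p * r) • u - (r - p * q) • v⟫ := real_inner_self_nonneg
    simp only [inner_sub_left, inner_sub_right, real_inner_smul_left, real_inner_smul_right,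
      huu, hvv, hww, hvu, hwu, hwv, ← hpdef, ← hqdef, ← hrdef] at hcc
    nlinarith [hcc, hple]

open Classical in
/-- Corollary 1: upper bound for the distance distribution `A(T)` of a spherical
code, where `g ≤ -a < 0` on `T ⊆ [-1, cos θ]`. In particular if `T = {t}` and
`Q < 1` then no two distinct code points have inner product `t`. -/
theorem distance_distribution_upper_bound (n : ℕ) (θ f₀ B a : ℝ) (hf₀ : 0 < f₀)
    (T : Set ℝ) (hT : T ⊆ Set.Icc (-1 : ℝ) (Real.cos θ)) (g : ℝ → ℝ)
    (ha : 0 < a) (hga : ∀ t ∈ T, g t ≤ -a)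
    (F : ℝ → ℝ → ℝ → ℝ)
    (hFsymm : ∀ x y z : ℝ, F x y z = F y x z ∧ F x y z = F x z y)
    (hFpsd : ∀ (C : Finset (EuclideanSpace ℝ (Fin n))), (∀ x ∈ C, ‖x‖ = 1) →
      (C.card : ℝ) ^ 3 * f₀ ≤ ∑ x ∈ C, ∑ y ∈ C, ∑ z ∈ C, F ⟪x, y⟫ ⟪x, z⟫ ⟪y, z⟫)
    (gT : ℝ → ℝ) (hgT : ∀ x, gT x = if x ∈ T then g x else 0)
    (hFdiag : ∀ x ∈ Set.Icc (-1 : ℝ) (Real.cos θ), F x x 1 ≤ B + 2 * gT x)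
    (hFD : ∀ x y z : ℝ, x ∈ Set.Icc (-1 : ℝ) (Real.cos θ) →
      y ∈ Set.Icc (-1 : ℝ) (Real.cos θ) → z ∈ Set.Icc (-1 : ℝ) (Real.cos θ) →
      0 ≤ 1 + 2*x*y*z - x^2 - y^2 - z^2 → F x y z ≤ gT x + gT y + gT z)
    (C : Finset (EuclideanSpace ℝ (Fin n))) (hCne : 0 < C.card)
    (hCsph : ∀ x ∈ C, ‖x‖ = 1)
    (hCcode : ∀ x ∈ C, ∀ y ∈ C, x ≠ y → ⟪x, y⟫ ≤ Real.cos θ)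
    (N : ℝ) (hN : N = (C.card : ℝ))
    (Q : ℝ) (hQ : Q = (F 1 1 1 + 3 * (N - 1) * B - f₀ * N ^ 2) / (6 * a)) :
    (((C ×ˢ C).filter (fun p => p.1 ≠ p.2 ∧ ⟪p.1, p.2⟫ ∈ T)).card : ℝ) / N ≤
      2 / N * (⌊Q⌋ : ℝ) ∧
    (∀ t : ℝ, T = {t} → Q < 1 →
      ((C ×ˢ C).filter (fun p => p.1 ≠ p.2 ∧ ⟪p.1, p.2⟫ ∈ T)).card = 0) := by
  classical
  have hN0 : (0 : ℝ) < N := by rw [hN]; exact_mod_cast hCne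
  have hone : ∀ x ∈ C, (⟪x, x⟫ : ℝ) = 1 := fun x hx => by
    rw [real_inner_self_eq_norm_sq, hCsph x hx]; norm_num
  have hmem : ∀ x ∈ C, ∀ y ∈ C, x ≠ y → (⟪x, y⟫ : ℝ) ∈ Set.Icc (-1 : ℝ) (Real.cos θ) := by
    intro x hx y hy hxy
    refine ⟨?_, hCcode x hx y hy hxy⟩
    have h := abs_real_inner_le_norm x y
    rw [hCsph x hx, hCsph y hy, mul_one] at h
    linarith [neg_abs_le (⟪x, y⟫ : ℝ)]
  have hgT0 : ∀ s : ℝ, gT s ≤ 0 := fun s => by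
    rw [hgT]; split_ifs with h
    · linarith [hga s h]
    · exact le_rfl
  set E := (C ×ˢ C).filter (fun p => p.1 ≠ p.2 ∧ ⟪p.1, p.2⟫ ∈ T) with hE
  set P : ℝ := ∑ x ∈ C, ∑ y ∈ C.erase x, gT ⟪x, y⟫ with hP
  -- cardinalities of erased sets
  have hcard1 : ∀ x ∈ C, ((C.erase x).card : ℝ) = N - 1 := by
    intro x hx
    rw [Finset.card_erase_of_mem hx, Nat.cast_sub hCne, Nat.cast_one, hN]
  have hcard2 : ∀ x ∈ C, ∀ y ∈ C.erase x, (((C.erase x).erase y).card : ℝ) = N - 2 := by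
    intro x hx y hy
    have h2 : 2 ≤ C.card := by
      have : 1 < C.card := Finset.one_lt_card.mpr
        ⟨y, Finset.mem_of_mem_erase hy, x, hx, Finset.ne_of_mem_erase hy⟩
      omega
    rw [Finset.card_erase_of_mem hy, Finset.card_erase_of_mem hx]
    rw [show C.card - 1 - 1 = C.card - 2 by omega, Nat.cast_sub h2, hN]
    norm_num
  -- step A : exact decomposition of the triple sum
  have hsplit : ∑ x ∈ C, ∑ y ∈ C, ∑ z ∈ C, F ⟪x, y⟫ ⟪x, z⟫ ⟪y, z⟫
      = ∑ x ∈ C, (F 1 1 1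
        + ∑ z ∈ C.erase x, F 1 ⟪x, z⟫ ⟪x, z⟫
        + ∑ y ∈ C.erase x, (F ⟪x, y⟫ 1 ⟪y, x⟫ + (F ⟪x, y⟫ ⟪x, y⟫ 1
            + ∑ z ∈ (C.erase x).erase y, F ⟪x, y⟫ ⟪x, z⟫ ⟪y, z⟫))) := by
    refine Finset.sum_congr rfl fun x hx => ?_
    rw [← Finset.add_sum_erase C (fun y => ∑ z ∈ C, F ⟪x, y⟫ ⟪x, z⟫ ⟪y, z⟫) hx]
    congr 1
    · rw [← Finset.add_sum_erase C (fun z => F ⟪x, x⟫ ⟪x, z⟫ ⟪x, z⟫) hx, hone x hx]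
    · refine Finset.sum_congr rfl fun y hy => ?_
      have hyC : y ∈ C := Finset.mem_of_mem_erase hy
      rw [← Finset.add_sum_erase C (fun z => F ⟪x, y⟫ ⟪x, z⟫ ⟪y, z⟫) hx,
        ← Finset.add_sum_erase (C.erase x) (fun z => F ⟪x, y⟫ ⟪x, z⟫ ⟪y, z⟫) hy,
        hone x hx, hone y hyC]
  -- generic computation for the "two indices equal" parts
  have hBP : ∑ x ∈ C, ∑ z ∈ C.erase x, (B + 2 * gT ⟪x, z⟫) = N * (N - 1) * B + 2 * P := by
    have h1 : ∀ x ∈ C, ∑ z ∈ C.erase x, (B + 2 * gT ⟪x, z⟫)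
        = (N - 1) * B + 2 * ∑ z ∈ C.erase x, gT ⟪x, z⟫ := by
      intro x hx
      rw [Finset.sum_add_distrib, Finset.sum_const, nsmul_eq_mul, hcard1 x hx,
        ← Finset.mul_sum]
    rw [Finset.sum_congr rfl h1, Finset.sum_add_distrib, Finset.sum_const, nsmul_eq_mul,
      ← Finset.mul_sum, ← hN, ← hP]
    ring
  -- bounds for the three "two equal" sums
  have b1 : ∑ x ∈ C, ∑ z ∈ C.erase x, F 1 ⟪x, z⟫ ⟪x, z⟫ ≤ N * (N - 1) * B + 2 * P := by
    rw [← hBP]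
    refine Finset.sum_le_sum fun x hx => Finset.sum_le_sum fun z hz => ?_
    rw [(hFsymm 1 ⟪x, z⟫ ⟪x, z⟫).1, (hFsymm (⟪x, z⟫ : ℝ) 1 ⟪x, z⟫).2]
    exact hFdiag _ (hmem x hx z (Finset.mem_of_mem_erase hz)
      (Ne.symm (Finset.ne_of_mem_erase hz)))
  have b2 : ∑ x ∈ C, ∑ y ∈ C.erase x, F ⟪x, y⟫ 1 ⟪y, x⟫ ≤ N * (N - 1) * B + 2 * P := by
    rw [← hBP]
    refine Finset.sum_le_sum fun x hx => Finset.sum_le_sum fun y hy => ?_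
    rw [real_inner_comm x y, (hFsymm (⟪x, y⟫ : ℝ) 1 ⟪x, y⟫).2]
    exact hFdiag _ (hmem x hx y (Finset.mem_of_mem_erase hy)
      (Ne.symm (Finset.ne_of_mem_erase hy)))
  have b3 : ∑ x ∈ C, ∑ y ∈ C.erase x, F ⟪x, y⟫ ⟪x, y⟫ 1 ≤ N * (N - 1) * B + 2 * P := by
    rw [← hBP]
    refine Finset.sum_le_sum fun x hx => Finset.sum_le_sum fun y hy => ?_
    exact hFdiag _ (hmem x hx y (Finset.mem_of_mem_erase hy)
      (Ne.symm (Finset.ne_of_mem_erase hy)))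
  -- bound for the "all distinct" sum
  have b4 : ∑ x ∈ C, ∑ y ∈ C.erase x, ∑ z ∈ (C.erase x).erase y,
      F ⟪x, y⟫ ⟪x, z⟫ ⟪y, z⟫ ≤ 3 * (N - 2) * P := by
    have step : ∑ x ∈ C, ∑ y ∈ C.erase x, ∑ z ∈ (C.erase x).erase y,
        F ⟪x, y⟫ ⟪x, z⟫ ⟪y, z⟫
        ≤ ∑ x ∈ C, ∑ y ∈ C.erase x, ∑ z ∈ (C.erase x).erase y,
          (gT ⟪x, y⟫ + gT ⟪x, z⟫ + gT ⟪y, z⟫) := by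
      refine Finset.sum_le_sum fun x hx => Finset.sum_le_sum fun y hy =>
        Finset.sum_le_sum fun z hz => ?_
      have hyC : y ∈ C := Finset.mem_of_mem_erase hy
      have hzx : z ∈ C.erase x := Finset.mem_of_mem_erase hz
      have hzC : z ∈ C := Finset.mem_of_mem_erase hzx
      have hxy : x ≠ y := Ne.symm (Finset.ne_of_mem_erase hy)
      have hxz : x ≠ z := Ne.symm (Finset.ne_of_mem_erase hzx)
      have hyz : y ≠ z := Ne.symm (Finset.ne_of_mem_erase hz)
      exact hFD _ _ _ (hmem x hx y hyC hxy) (hmem x hx z hzC hxz) (hmem y hyC z hzC hyz)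
        (gram_det_nonneg' (hCsph x hx) (hCsph y hyC) (hCsph z hzC))
    refine step.trans (le_of_eq ?_)
    simp only [Finset.sum_add_distrib]
    have S1 : ∑ x ∈ C, ∑ y ∈ C.erase x, ∑ _z ∈ (C.erase x).erase y, gT ⟪x, y⟫
        = (N - 2) * P := by
      have h1 : ∀ x ∈ C, ∀ y ∈ C.erase x,
          ∑ _z ∈ (C.erase x).erase y, gT ⟪x, y⟫ = (N - 2) * gT ⟪x, y⟫ := by
        intro x hx y hy
        rw [Finset.sum_const, nsmul_eq_mul, hcard2 x hx y hy]
      rw [Finset.sum_congr rfl (fun x hx => Finset.sum_congr rfl (h1 x hx)), hP,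
        Finset.mul_sum]
      exact Finset.sum_congr rfl fun x hx => (Finset.mul_sum _ _ _).symm
    have S2 : ∑ x ∈ C, ∑ y ∈ C.erase x, ∑ z ∈ (C.erase x).erase y, gT ⟪x, z⟫
        = (N - 2) * P := by
      have h1 : ∀ x ∈ C, ∀ y ∈ C.erase x, ∑ z ∈ (C.erase x).erase y, gT ⟪x, z⟫
          = ∑ z ∈ C.erase x, gT ⟪x, z⟫ - gT ⟪x, y⟫ := by
        intro x hx y hy
        exact Finset.sum_erase_eq_sub hy
      have h2 : ∀ x ∈ C, ∑ y ∈ C.erase x, (∑ z ∈ C.erase x, gT ⟪x, z⟫ - gT ⟪x, y⟫)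
          = (N - 2) * ∑ z ∈ C.erase x, gT ⟪x, z⟫ := by
        intro x hx
        rw [Finset.sum_sub_distrib, Finset.sum_const, nsmul_eq_mul, hcard1 x hx]
        ring
      rw [Finset.sum_congr rfl (fun x hx => Finset.sum_congr rfl (h1 x hx)),
        Finset.sum_congr rfl h2, hP, Finset.mul_sum]
    have S3 : ∑ x ∈ C, ∑ y ∈ C.erase x, ∑ z ∈ (C.erase x).erase y, gT ⟪y, z⟫
        = (N - 2) * P := by
      have h1 : ∀ x ∈ C, ∀ y ∈ C.erase x, ∑ z ∈ (C.erase x).erase y, gT ⟪y, z⟫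
          = ∑ z ∈ C.erase y, gT ⟪y, z⟫ - gT ⟪y, x⟫ := by
        intro x hx y hy
        have hec : (C.erase x).erase y = (C.erase y).erase x := by
          ext z; simp only [Finset.mem_erase]; tauto
        rw [hec]
        exact Finset.sum_erase_eq_sub (Finset.mem_erase.mpr
          ⟨(Finset.ne_of_mem_erase hy).symm, hx⟩)
      have h2 : ∑ x ∈ C, ∑ y ∈ C.erase x,
          (∑ z ∈ C.erase y, gT ⟪y, z⟫ - gT ⟪y, x⟫)
          = ∑ x ∈ C, ∑ y ∈ C.erase x, ∑ z ∈ C.erase y, gT ⟪y, z⟫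
            - ∑ x ∈ C, ∑ y ∈ C.erase x, gT ⟪y, x⟫ := by
        rw [← Finset.sum_sub_distrib]
        exact Finset.sum_congr rfl fun x hx => Finset.sum_sub_distrib _ _
      have h3 : ∑ x ∈ C, ∑ y ∈ C.erase x, ∑ z ∈ C.erase y, gT ⟪y, z⟫
          = (N - 1) * P := by
        have hinner : ∀ x ∈ C, ∑ y ∈ C.erase x, ∑ z ∈ C.erase y, gT ⟪y, z⟫
            = P - ∑ z ∈ C.erase x, gT ⟪x, z⟫ := by
          intro x hx
          rw [hP]
          exact Finset.sum_erase_eq_sub hx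
        rw [Finset.sum_congr rfl hinner, Finset.sum_sub_distrib, Finset.sum_const,
          nsmul_eq_mul, ← hN, ← hP]
        ring
      have h4 : ∑ x ∈ C, ∑ y ∈ C.erase x, gT ⟪y, x⟫ = P := by
        rw [hP]
        refine Finset.sum_congr rfl fun x hx => Finset.sum_congr rfl fun y hy => ?_
        rw [real_inner_comm]
      rw [Finset.sum_congr rfl (fun x hx => Finset.sum_congr rfl (h1 x hx)), h2, h3, h4]
      ring
    rw [S1, S2, S3]
    ring
  -- the main chain
  have hsumF111 : ∑ _x ∈ C, F 1 1 1 = N * F 1 1 1 := by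
    rw [Finset.sum_const, nsmul_eq_mul, ← hN]
  have hkey : (N : ℝ) ^ 3 * f₀ ≤ N * F 1 1 1 + 3 * N * (N - 1) * B + 3 * N * P := by
    have hpsd := hFpsd C hCsph
    rw [← hN] at hpsd
    refine hpsd.trans ?_
    rw [hsplit]
    simp only [Finset.sum_add_distrib]
    rw [hsumF111]
    linarith [b1, b2, b3, b4]
  -- relating P to the cardinality of E
  have hEcard : E.card = ∑ x ∈ C, ∑ y ∈ C.erase x,
      (if (⟪x, y⟫ : ℝ) ∈ T then 1 else 0) := by
    rw [hE, Finset.card_filter, Finset.sum_product]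
    refine Finset.sum_congr rfl fun x hx => ?_
    rw [← Finset.add_sum_erase C
      (fun y => if x ≠ y ∧ (⟪x, y⟫ : ℝ) ∈ T then 1 else 0) hx]
    simp only [ne_eq, not_true_eq_false, false_and, if_false, zero_add]
    refine Finset.sum_congr rfl fun y hy => ?_
    have hxy : x ≠ y := Ne.symm (Finset.ne_of_mem_erase hy)
    simp [hxy]
  have hPE : P ≤ -a * (E.card : ℝ) := by
    rw [hEcard, hP]
    push_cast
    rw [Finset.mul_sum]
    refine Finset.sum_le_sum fun x hx => ?_
    rw [Finset.mul_sum]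
    refine Finset.sum_le_sum fun y hy => ?_
    rw [hgT]
    split_ifs with h
    · rw [mul_one]; exact hga _ h
    · rw [mul_zero]
  -- evenness of E.card
  have heven : Even E.card := by
    refine even_card_of_swap' E (fun p hp => ?_) (fun p hp => ?_)
    · rw [hE, Finset.mem_filter, Finset.mem_product] at hp ⊢
      obtain ⟨⟨h1, h2⟩, h3, h4⟩ := hp
      exact ⟨⟨h2, h1⟩, Ne.symm h3, by rwa [Prod.fst_swap, Prod.snd_swap, real_inner_comm]⟩
    · rw [hE, Finset.mem_filter] at hp
      exact hp.2.1
  obtain ⟨M, hM⟩ := heven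
  -- final arithmetic
  have h2 : f₀ * N ^ 2 ≤ F 1 1 1 + 3 * (N - 1) * B - 3 * a * (E.card : ℝ) := by
    refine le_of_mul_le_mul_left ?_ hN0
    nlinarith [hkey, hPE, hN0]
  have hnum : F 1 1 1 + 3 * (N - 1) * B - f₀ * N ^ 2 = 6 * a * Q := by
    rw [hQ]; field_simp
  have hMQ : (M : ℝ) ≤ Q := by
    have hc : (E.card : ℝ) = (M : ℝ) + (M : ℝ) := by rw [hM]; push_cast; ring
    have h3 : 3 * a * ((M : ℝ) + (M : ℝ)) ≤ 6 * a * Q := by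
      rw [← hc]; linarith [h2, hnum]
    nlinarith [h3, ha]
  have hfloor : (M : ℤ) ≤ ⌊Q⌋ := Int.le_floor.mpr (by exact_mod_cast hMQ)
  have hEle : (E.card : ℝ) ≤ 2 * (⌊Q⌋ : ℝ) := by
    have hfl : ((M : ℤ) : ℝ) ≤ ((⌊Q⌋ : ℤ) : ℝ) := by exact_mod_cast hfloor
    rw [hM]; push_cast at hfl ⊢; linarith
  constructor
  · rw [show (2 : ℝ) / N * (⌊Q⌋ : ℝ) = 2 * (⌊Q⌋ : ℝ) / N by ring]
    exact (div_le_div_iff_of_pos_right hN0).mpr hEle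
  · intro t hTt hQ1
    have h0 : (⌊Q⌋ : ℤ) < 1 := Int.floor_lt.mpr (by exact_mod_cast hQ1)
    have h0' : ((⌊Q⌋ : ℤ) : ℝ) ≤ 0 := by exact_mod_cast (by omega : (⌊Q⌋ : ℤ) ≤ 0)
    have : (E.card : ℝ) ≤ 0 := hEle.trans (by linarith)
    have : E.card = 0 := by exact_mod_cast le_antisymm (by exact_mod_cast this) (Nat.zero_le _)
    exact this
end

section
/- The polynomial g(t) = (2t-1)t²(2t+1)²(t+1), when expanded in the Gegenbauer polynomials G_k^{(8)} for ℝ⁸ (normalized with G_k^{(8)}(1) = 1) as g(t) = Σ_{k=0}^6 c_k G_k^{(8)}(t), has all coefficients c_k > 0, and moreover g(1) = 240·c_0. -/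
open MeasureTheory intervalIntegral

noncomputable def Mom (a : ℕ) : ℝ := ∫ t in (-1:ℝ)..1, t^a * (1 - t^2) ^ ((5:ℝ)/2)

lemma contW : Continuous (fun t : ℝ => (1 - t^2) ^ ((5:ℝ)/2)) := by
  apply Continuous.rpow_const (by continuity)
  intro x; right; norm_num

lemma intgW (f : ℝ → ℝ) (hf : Continuous f) :
    IntervalIntegrable (fun t => f t * (1 - t^2) ^ ((5:ℝ)/2)) volume (-1) 1 :=
  (hf.mul contW).intervalIntegrable _ _

lemma hd7 (t : ℝ) : HasDerivAt (fun t : ℝ => (1 - t^2) ^ ((7:ℝ)/2))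
    (-7 * t * (1 - t^2) ^ ((5:ℝ)/2)) t := by
  have h1 : HasDerivAt (fun t : ℝ => 1 - t^2) (-(2*t)) t := by
    simpa using ((hasDerivAt_pow 2 t).const_sub 1)
  have h2 := (Real.hasDerivAt_rpow_const (p := (7:ℝ)/2) (x := 1 - t^2)
    (Or.inr (by norm_num))).comp t h1
  refine h2.congr_deriv ?_
  norm_num
  ring

lemma contV : Continuous (fun t : ℝ => (1 - t^2) ^ ((7:ℝ)/2)) := by
  apply Continuous.rpow_const (by continuity)
  intro x; right; norm_num

lemma v75 {t : ℝ} (ht : t ∈ Set.uIcc (-1:ℝ) 1) :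
    (1 - t^2) ^ ((7:ℝ)/2) = (1 - t^2) * (1 - t^2) ^ ((5:ℝ)/2) := by
  rw [Set.uIcc_of_le (by norm_num), Set.mem_Icc] at ht
  have h : (0:ℝ) ≤ 1 - t^2 := by nlinarith [ht.1, ht.2]
  rcases h.eq_or_lt with h0 | h0
  · rw [← h0, Real.zero_rpow (by norm_num), Real.zero_rpow (by norm_num), mul_zero]
  · rw [show (7:ℝ)/2 = 1 + 5/2 by norm_num, Real.rpow_add h0, Real.rpow_one]

lemma mom_rec (a : ℕ) : ((a:ℝ)+1) * Mom a = ((a:ℝ)+8) * Mom (a+2) := by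
  have hderiv : ∀ t ∈ Set.uIcc (-1:ℝ) 1, HasDerivAt
      (fun t : ℝ => t^(a+1) * (1 - t^2) ^ ((7:ℝ)/2))
      (((a:ℝ)+1) * (t^a * (1 - t^2) ^ ((7:ℝ)/2)) - 7 * (t^(a+2) * (1 - t^2) ^ ((5:ℝ)/2))) t := by
    intro t _
    have h := (hasDerivAt_pow (a+1) t).mul (hd7 t)
    refine h.congr_deriv ?_
    push_cast
    ring
  have hint : IntervalIntegrable (fun t : ℝ =>
      ((a:ℝ)+1) * (t^a * (1 - t^2) ^ ((7:ℝ)/2)) - 7 * (t^(a+2) * (1 - t^2) ^ ((5:ℝ)/2)))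
      volume (-1) 1 := by
    apply IntervalIntegrable.sub
    · exact (((continuous_const.mul ((continuous_pow a).mul contV)))).intervalIntegrable _ _
    · exact ((continuous_const.mul ((continuous_pow (a+2)).mul contW))).intervalIntegrable _ _
  have hftc := integral_eq_sub_of_hasDerivAt hderiv hint
  have hz : ((1:ℝ)^(a+1) * (1 - 1^2) ^ ((7:ℝ)/2)) - ((-1:ℝ)^(a+1) * (1 - (-1:ℝ)^2) ^ ((7:ℝ)/2)) = 0 := by
    norm_num
  rw [hz] at hftc
  have hsplit : (∫ t in (-1:ℝ)..1,
      (((a:ℝ)+1) * (t^a * (1 - t^2) ^ ((7:ℝ)/2)) - 7 * (t^(a+2) * (1 - t^2) ^ ((5:ℝ)/2))))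
      = ((a:ℝ)+1) * (∫ t in (-1:ℝ)..1, t^a * (1 - t^2) ^ ((7:ℝ)/2))
        - 7 * Mom (a+2) := by
    rw [integral_sub (by exact (((continuous_const.mul ((continuous_pow a).mul contV)))).intervalIntegrable _ _ : IntervalIntegrable (fun t : ℝ => ((a:ℝ)+1) * (t^a * (1 - t^2) ^ ((7:ℝ)/2))) volume (-1) 1)
        (by exact ((continuous_const.mul ((continuous_pow (a+2)).mul contW))).intervalIntegrable _ _ : IntervalIntegrable (fun t : ℝ => 7 * (t^(a+2) * (1 - t^2) ^ ((5:ℝ)/2))) volume (-1) 1),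
      intervalIntegral.integral_const_mul, intervalIntegral.integral_const_mul]
    rfl
  have hV : (∫ t in (-1:ℝ)..1, t^a * (1 - t^2) ^ ((7:ℝ)/2))
      = Mom a - Mom (a+2) := by
    have : (∫ t in (-1:ℝ)..1, t^a * (1 - t^2) ^ ((7:ℝ)/2))
        = ∫ t in (-1:ℝ)..1, (t^a * (1 - t^2) ^ ((5:ℝ)/2) - t^(a+2) * (1 - t^2) ^ ((5:ℝ)/2)) := by
      apply integral_congr
      intro t ht
      dsimp only
      rw [v75 ht]
      ring
    rw [this, integral_sub (intgW _ (continuous_pow a)) (intgW _ (continuous_pow (a+2)))]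
    rfl
  rw [hsplit, hV] at hftc
  linarith [hftc]

lemma mom_one : Mom 1 = 0 := by
  have hderiv : ∀ t ∈ Set.uIcc (-1:ℝ) 1, HasDerivAt
      (fun t : ℝ => (1 - t^2) ^ ((7:ℝ)/2))
      (-7 * (t^1 * (1 - t^2) ^ ((5:ℝ)/2))) t := by
    intro t _
    convert hd7 t using 1
    ring
  have hint : IntervalIntegrable (fun t : ℝ => -7 * (t^1 * (1 - t^2) ^ ((5:ℝ)/2))) volume (-1) 1 :=
    ((continuous_const.mul ((continuous_pow 1).mul contW))).intervalIntegrable _ _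
  have hftc := integral_eq_sub_of_hasDerivAt hderiv hint
  rw [intervalIntegral.integral_const_mul] at hftc
  have hz : ((1:ℝ) - 1^2) ^ ((7:ℝ)/2) - ((1:ℝ) - (-1:ℝ)^2) ^ ((7:ℝ)/2) = 0 := by
    norm_num
  rw [hz] at hftc
  have : Mom 1 = ∫ t in (-1:ℝ)..1, t^1 * (1 - t^2) ^ ((5:ℝ)/2) := rfl
  rw [this]
  linarith [hftc]

lemma mom_zero_pos : 0 < Mom 0 := by
  apply intervalIntegral.intervalIntegral_pos_of_pos_on
  · exact intgW _ (continuous_pow 0)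
  · intro x hx
    have h : (0:ℝ) < 1 - x^2 := by nlinarith [hx.1, hx.2]
    simpa using Real.rpow_pos_of_pos h _
  · norm_num

lemma mom2 : Mom 2 = (1/8) * Mom 0 := by have := mom_rec 0; push_cast at this; linarith
lemma mom4 : Mom 4 = (3/80) * Mom 0 := by have := mom_rec 2; rw [mom2] at this; push_cast at this; linarith
lemma mom6 : Mom 6 = (1/64) * Mom 0 := by have := mom_rec 4; rw [mom4] at this; push_cast at this; linarith
lemma mom8 : Mom 8 = (1/128) * Mom 0 := by have := mom_rec 6; rw [mom6] at this; push_cast at this; linarith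
lemma mom10 : Mom 10 = (9/2048) * Mom 0 := by have := mom_rec 8; rw [mom8] at this; push_cast at this; linarith
lemma mom3 : Mom 3 = 0 := by have := mom_rec 1; rw [mom_one] at this; push_cast at this; linarith
lemma mom5 : Mom 5 = 0 := by have := mom_rec 3; rw [mom3] at this; push_cast at this; linarith
lemma mom7 : Mom 7 = 0 := by have := mom_rec 5; rw [mom5] at this; push_cast at this; linarith
lemma mom9 : Mom 9 = 0 := by have := mom_rec 7; rw [mom7] at this; push_cast at this; linarith
lemma mom11 : Mom 11 = 0 := by have := mom_rec 9; rw [mom9] at this; push_cast at this; linarith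

lemma EML (P : Polynomial ℝ) (hP : P.natDegree < 7) (i : ℕ) :
    (∫ t in (-1:ℝ)..1, t^i * P.eval t * (1 - t^2) ^ ((5:ℝ)/2))
      = ∑ j ∈ Finset.range 7, P.coeff j * Mom (i+j) := by
  have hfe : (fun t : ℝ => t^i * P.eval t * (1 - t^2) ^ ((5:ℝ)/2))
      = fun t => ∑ j ∈ Finset.range 7, (P.coeff j) * (t^(i+j) * (1 - t^2) ^ ((5:ℝ)/2)) := by
    funext t
    rw [Polynomial.eval_eq_sum_range' hP t, Finset.mul_sum, Finset.sum_mul]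
    apply Finset.sum_congr rfl
    intro j _
    rw [pow_add]
    ring
  rw [hfe, intervalIntegral.integral_finset_sum]
  · apply Finset.sum_congr rfl
    intro j _
    rw [intervalIntegral.integral_const_mul]
    rfl
  · intro j _
    exact (continuous_const.mul ((continuous_pow (i+j)).mul contW)).intervalIntegrable _ _

lemma EML2 (P Q : Polynomial ℝ) (hP : P.natDegree < 7) (hQ : Q.natDegree < 7) :
    (∫ t in (-1:ℝ)..1, P.eval t * Q.eval t * (1 - t^2) ^ ((5:ℝ)/2))
      = ∑ i ∈ Finset.range 7, ∑ j ∈ Finset.range 7, P.coeff i * Q.coeff j * Mom (i+j) := by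
  have hfe : (fun t : ℝ => P.eval t * Q.eval t * (1 - t^2) ^ ((5:ℝ)/2))
      = fun t => ∑ i ∈ Finset.range 7, (P.coeff i) * (t^i * Q.eval t * (1 - t^2) ^ ((5:ℝ)/2)) := by
    funext t
    rw [Polynomial.eval_eq_sum_range' hP t, Finset.sum_mul, Finset.sum_mul]
    apply Finset.sum_congr rfl
    intro j _
    ring
  rw [hfe, intervalIntegral.integral_finset_sum]
  · apply Finset.sum_congr rfl
    intro i _
    rw [intervalIntegral.integral_const_mul, EML Q hQ i, Finset.mul_sum]
    apply Finset.sum_congr rfl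
    intro j _
    ring
  · intro i _
    exact (continuous_const.mul (((continuous_pow i).mul (Q.continuous)).mul contW)).intervalIntegrable _ _

lemma mom12 : Mom 12 = (11/4096) * Mom 0 := by
  have := mom_rec 10; rw [mom10] at this; push_cast at this; linarith
set_option maxHeartbeats 1000000 in
/-- The expansion of `g(t) = (2t-1) t² (2t+1)² (t+1)` in the Gegenbauer
polynomials for dimension 8 (characterized by their degrees, the normalization
`G k (1) = 1`, and orthogonality on `[-1,1]` with weight `(1-t²)^{5/2}`) has all
coefficients positive, and `g(1) = 240 c₀`. -/
theorem gegenbauer_expansion_dim8 (G : ℕ → Polynomial ℝ)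
    (hdeg : ∀ k, (G k).degree = k)
    (hnorm : ∀ k, (G k).eval 1 = 1)
    (horth : ∀ j k, j ≠ k →
      ∫ t in (-1 : ℝ)..1,
        (G j).eval t * (G k).eval t * (1 - t^2) ^ ((5 : ℝ)/2) = 0) :
    ∃ c : ℕ → ℝ, (∀ k ≤ 6, 0 < c k) ∧
      (∀ t : ℝ, (2*t - 1) * t^2 * (2*t + 1)^2 * (t + 1) =
        ∑ k ∈ Finset.range 7, c k * (G k).eval t) ∧
      (2*(1:ℝ) - 1) * 1^2 * (2*1 + 1)^2 * (1 + 1) = 240 * c 0 := by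
  have hnd : ∀ k, k ≤ 6 → (G k).natDegree < 7 := fun k hk => by
    rw [Polynomial.natDegree_eq_of_degree_eq_some (hdeg k)]; omega
  have hzero : ∀ k j : ℕ, k < j → (G k).coeff j = 0 := fun k j h =>
    Polynomial.coeff_eq_zero_of_degree_lt (by rw [hdeg k]; exact_mod_cast h)
  have hm0 : Mom 0 ≠ 0 := ne_of_gt mom_zero_pos
  have horthX : ∀ j k : ℕ, j ≠ k → j ≤ 6 → k ≤ 6 →
      (1 : ℝ) * ((G j).coeff 0 * (G k).coeff 0) * Mom 0 + (1/8 : ℝ) * ((G j).coeff 0 * (G k).coeff 2) * Mom 0 + (3/80 : ℝ) * ((G j).coeff 0 * (G k).coeff 4) * Mom 0 + (1/64 : ℝ) * ((G j).coeff 0 * (G k).coeff 6) * Mom 0 + (1/8 : ℝ) * ((G j).coeff 1 * (G k).coeff 1) * Mom 0 + (3/80 : ℝ) * ((G j).coeff 1 * (G k).coeff 3) * Mom 0 + (1/64 : ℝ) * ((G j).coeff 1 * (G k).coeff 5) * Mom 0 + (1/8 : ℝ) * ((G j).coeff 2 * (G k).coeff 0) * Mom 0 + (3/80 : ℝ) *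 ((G j).coeff 2 * (G k).coeff 2) * Mom 0 + (1/64 : ℝ) * ((G j).coeff 2 * (G k).coeff 4) * Mom 0 + (1/128 : ℝ) * ((G j).coeff 2 * (G k).coeff 6) * Mom 0 + (3/80 : ℝ) * ((G j).coeff 3 * (G k).coeff 1) * Mom 0 + (1/64 : ℝ) * ((G j).coeff 3 * (G k).coeff 3) * Mom 0 + (1/128 : ℝ) * ((G j).coeff 3 * (G k).coeff 5) * Mom 0 + (3/80 : ℝ) * ((G j).coeff 4 * (G k).coeff 0) * Mom 0 + (1/64 : ℝ) * ((G j).coeff 4 * (G k).coeff 2) * Mom 0 + (1/128 : ℝ) * ((G j).coeff 4 * (G k).coeff 4) * Mom 0 + (9/2048 : ℝ) * ((G j).coeff 4 * (G k).coeff 6) * Mom 0 + (1/64 : ℝ) * ((G j).coeff 5 * (G k).coeff 1) * Mom 0 + (1/128 : ℝ) * ((G j).coeff 5 * (G k).coeff 3) * Mom 0 + (9/2048 : ℝ) * ((G j).coeff 5 * (G k).coeff 5) * Mom 0 + (1/64 : ℝ) * ((G j).coeff 6 * (G k).coeff 0) * Mom 0 + (1/128 : ℝ) * ((G j).coeff 6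 * (G k).coeff 2) * Mom 0 + (9/2048 : ℝ) * ((G j).coeff 6 * (G k).coeff 4) * Mom 0 + (11/4096 : ℝ) * ((G j).coeff 6 * (G k).coeff 6) * Mom 0 = 0 := by
    intro j k hjk hj hk
    have h := horth j k hjk
    rw [EML2 _ _ (hnd j hj) (hnd k hk)] at h
    simp only [Finset.sum_range_succ, Finset.sum_range_zero, Nat.reduceAdd,
      mom_one, mom2, mom3, mom4, mom5, mom6, mom7, mom8, mom9, mom10, mom11, mom12] at h
    linear_combination h
  have hnormX : ∀ k : ℕ, k ≤ 6 → (G k).coeff 0 + (G k).coeff 1 + (G k).coeff 2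
      + (G k).coeff 3 + (G k).coeff 4 + (G k).coeff 5 + (G k).coeff 6 = 1 := by
    intro k hk
    have h := hnorm k
    rw [Polynomial.eval_eq_sum_range' (hnd k hk) 1] at h
    simp only [Finset.sum_range_succ, Finset.sum_range_zero, one_pow, mul_one] at h
    linear_combination h
  -- determine G 0
  have en0 := hnormX 0 (by norm_num)
  have hc0_1 : (G 0).coeff 1 = 0 := hzero 0 1 (by norm_num)
  have hc0_2 : (G 0).coeff 2 = 0 := hzero 0 2 (by norm_num)
  have hc0_3 : (G 0).coeff 3 = 0 := hzero 0 3 (by norm_num)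
  have hc0_4 : (G 0).coeff 4 = 0 := hzero 0 4 (by norm_num)
  have hc0_5 : (G 0).coeff 5 = 0 := hzero 0 5 (by norm_num)
  have hc0_6 : (G 0).coeff 6 = 0 := hzero 0 6 (by norm_num)
  have hc0_0 : (G 0).coeff 0 = (1 : ℝ) := by linear_combination (1 : ℝ) * en0 + (-1 : ℝ) * hc0_1 + (-1 : ℝ) * hc0_2 + (-1 : ℝ) * hc0_3 + (-1 : ℝ) * hc0_4 + (-1 : ℝ) * hc0_5 + (-1 : ℝ) * hc0_6
  have hev0 : ∀ t : ℝ, (G 0).eval t = (1 : ℝ) * t^0 := fun t => by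
    rw [Polynomial.eval_eq_sum_range' (hnd 0 (by norm_num)) t]
    simp only [Finset.sum_range_succ, Finset.sum_range_zero, hc0_0, hc0_1, hc0_2, hc0_3, hc0_4, hc0_5, hc0_6]
    ring
  -- determine G 1
  have en1 := hnormX 1 (by norm_num)
  have hc1_2 : (G 1).coeff 2 = 0 := hzero 1 2 (by norm_num)
  have hc1_3 : (G 1).coeff 3 = 0 := hzero 1 3 (by norm_num)
  have hc1_4 : (G 1).coeff 4 = 0 := hzero 1 4 (by norm_num)
  have hc1_5 : (G 1).coeff 5 = 0 := hzero 1 5 (by norm_num)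
  have hc1_6 : (G 1).coeff 6 = 0 := hzero 1 6 (by norm_num)
  have eo0_1 := horthX 0 1 (by norm_num) (by norm_num) (by norm_num)
  have f0_1 : (1 : ℝ) * (G 1).coeff 0 = 0 := by
    have h2 : ((1 : ℝ) * (G 1).coeff 0) * Mom 0 = 0 := by linear_combination eo0_1 + (((-1 : ℝ) * (G 1).coeff 0 + (-1/8 : ℝ) * (G 1).coeff 2 + (-3/80 : ℝ) * (G 1).coeff 4 + (-1/64 : ℝ) * (G 1).coeff 6) * Mom 0) * hc0_0 + (((-1/8 : ℝ) * (G 1).coeff 1 + (-3/80 : ℝ) * (G 1).coeff 3 + (-1/64 : ℝ) * (G 1).coeff 5) * Mom 0) * hc0_1 + (((-1/8 : ℝ) * (G 1).coeff 0 + (-3/80 : ℝ) * (G 1).coeff 2 + (-1/64 : ℝ) * (G 1).coeff 4 + (-1/128 : ℝ) * (G 1).coeff 6) * Mom 0) * hc0_2 + (((-3/80 : ℝ) * (G 1).coeff 1 + (-1/64 : ℝ) * (G 1).coeff 3 + (-1/128 : ℝ) * (G 1).coeff 5) * Mom 0) * hc0_3 + (((-3/80 : ℝ) * (G 1).coeff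 0 + (-1/64 : ℝ) * (G 1).coeff 2 + (-1/128 : ℝ) * (G 1).coeff 4 + (-9/2048 : ℝ) * (G 1).coeff 6) * Mom 0) * hc0_4 + (((-1/64 : ℝ) * (G 1).coeff 1 + (-1/128 : ℝ) * (G 1).coeff 3 + (-9/2048 : ℝ) * (G 1).coeff 5) * Mom 0) * hc0_5 + (((-1/64 : ℝ) * (G 1).coeff 0 + (-1/128 : ℝ) * (G 1).coeff 2 + (-9/2048 : ℝ) * (G 1).coeff 4 + (-11/4096 : ℝ) * (G 1).coeff 6) * Mom 0) * hc0_6 + ((-1/8 : ℝ) * Mom 0) * hc1_2 + ((-3/80 : ℝ) * Mom 0) * hc1_4 + ((-1/64 : ℝ) * Mom 0) * hc1_6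
    exact (mul_eq_zero.mp h2).resolve_right hm0
  have hc1_0 : (G 1).coeff 0 = (0 : ℝ) := by linear_combination (1 : ℝ) * f0_1
  have hc1_1 : (G 1).coeff 1 = (1 : ℝ) := by linear_combination (-1 : ℝ) * f0_1 + (1 : ℝ) * en1 + (-1 : ℝ) * hc1_2 + (-1 : ℝ) * hc1_3 + (-1 : ℝ) * hc1_4 + (-1 : ℝ) * hc1_5 + (-1 : ℝ) * hc1_6
  have hev1 : ∀ t : ℝ, (G 1).eval t = (1 : ℝ) * t^1 := fun t => by
    rw [Polynomial.eval_eq_sum_range' (hnd 1 (by norm_num)) t]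
    simp only [Finset.sum_range_succ, Finset.sum_range_zero, hc1_0, hc1_1, hc1_2, hc1_3, hc1_4, hc1_5, hc1_6]
    ring
  -- determine G 2
  have en2 := hnormX 2 (by norm_num)
  have hc2_3 : (G 2).coeff 3 = 0 := hzero 2 3 (by norm_num)
  have hc2_4 : (G 2).coeff 4 = 0 := hzero 2 4 (by norm_num)
  have hc2_5 : (G 2).coeff 5 = 0 := hzero 2 5 (by norm_num)
  have hc2_6 : (G 2).coeff 6 = 0 := hzero 2 6 (by norm_num)
  have eo0_2 := horthX 0 2 (by norm_num) (by norm_num) (by norm_num)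
  have f0_2 : (1 : ℝ) * (G 2).coeff 0 + (1/8 : ℝ) * (G 2).coeff 2 = 0 := by
    have h2 : ((1 : ℝ) * (G 2).coeff 0 + (1/8 : ℝ) * (G 2).coeff 2) * Mom 0 = 0 := by linear_combination eo0_2 + (((-1 : ℝ) * (G 2).coeff 0 + (-1/8 : ℝ) * (G 2).coeff 2 + (-3/80 : ℝ) * (G 2).coeff 4 + (-1/64 : ℝ) * (G 2).coeff 6) * Mom 0) * hc0_0 + (((-1/8 : ℝ) * (G 2).coeff 1 + (-3/80 : ℝ) * (G 2).coeff 3 + (-1/64 : ℝ) * (G 2).coeff 5) * Mom 0) * hc0_1 + (((-1/8 : ℝ) * (G 2).coeff 0 + (-3/80 : ℝ) * (G 2).coeff 2 + (-1/64 : ℝ) * (G 2).coeff 4 + (-1/128 : ℝ) * (G 2).coeff 6) * Mom 0) * hc0_2 + (((-3/80 : ℝ) * (G 2).coeff 1 + (-1/64 : ℝ) * (G 2).coeff 3 + (-1/128 : ℝ) * (G 2).coeff 5) * Mom 0) * hc0_3 + (((-3/80 : ℝ) * (G 2).coeff 0 + (-1/64 : ℝ) * (G 2).coeff 2 + (-1/128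 : ℝ) * (G 2).coeff 4 + (-9/2048 : ℝ) * (G 2).coeff 6) * Mom 0) * hc0_4 + (((-1/64 : ℝ) * (G 2).coeff 1 + (-1/128 : ℝ) * (G 2).coeff 3 + (-9/2048 : ℝ) * (G 2).coeff 5) * Mom 0) * hc0_5 + (((-1/64 : ℝ) * (G 2).coeff 0 + (-1/128 : ℝ) * (G 2).coeff 2 + (-9/2048 : ℝ) * (G 2).coeff 4 + (-11/4096 : ℝ) * (G 2).coeff 6) * Mom 0) * hc0_6 + ((-3/80 : ℝ) * Mom 0) * hc2_4 + ((-1/64 : ℝ) * Mom 0) * hc2_6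
    exact (mul_eq_zero.mp h2).resolve_right hm0
  have eo1_2 := horthX 1 2 (by norm_num) (by norm_num) (by norm_num)
  have f1_2 : (1/8 : ℝ) * (G 2).coeff 1 = 0 := by
    have h2 : ((1/8 : ℝ) * (G 2).coeff 1) * Mom 0 = 0 := by linear_combination eo1_2 + (((-1 : ℝ) * (G 2).coeff 0 + (-1/8 : ℝ) * (G 2).coeff 2 + (-3/80 : ℝ) * (G 2).coeff 4 + (-1/64 : ℝ) * (G 2).coeff 6) * Mom 0) * hc1_0 + (((-1/8 : ℝ) * (G 2).coeff 1 + (-3/80 : ℝ) * (G 2).coeff 3 + (-1/64 : ℝ) * (G 2).coeff 5) * Mom 0) * hc1_1 + (((-1/8 : ℝ) * (G 2).coeff 0 + (-3/80 : ℝ) * (G 2).coeff 2 + (-1/64 : ℝ) * (G 2).coeff 4 + (-1/128 : ℝ) * (G 2).coeff 6) * Mom 0) * hc1_2 + (((-3/80 : ℝ) * (G 2).coeff 1 + (-1/64 : ℝ) * (G 2).coeff 3 + (-1/128 : ℝ) * (G 2).coeff 5) * Mom 0) * hc1_3 + (((-3/80 : ℝ) * (G 2).coeff 0 + (-1/64 :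 ℝ) * (G 2).coeff 2 + (-1/128 : ℝ) * (G 2).coeff 4 + (-9/2048 : ℝ) * (G 2).coeff 6) * Mom 0) * hc1_4 + (((-1/64 : ℝ) * (G 2).coeff 1 + (-1/128 : ℝ) * (G 2).coeff 3 + (-9/2048 : ℝ) * (G 2).coeff 5) * Mom 0) * hc1_5 + (((-1/64 : ℝ) * (G 2).coeff 0 + (-1/128 : ℝ) * (G 2).coeff 2 + (-9/2048 : ℝ) * (G 2).coeff 4 + (-11/4096 : ℝ) * (G 2).coeff 6) * Mom 0) * hc1_6 + ((-3/80 : ℝ) * Mom 0) * hc2_3 + ((-1/64 : ℝ) * Mom 0) * hc2_5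
    exact (mul_eq_zero.mp h2).resolve_right hm0
  have hc2_0 : (G 2).coeff 0 = (-1/7 : ℝ) := by linear_combination (8/7 : ℝ) * f0_2 + (8/7 : ℝ) * f1_2 + (-1/7 : ℝ) * en2 + (1/7 : ℝ) * hc2_3 + (1/7 : ℝ) * hc2_4 + (1/7 : ℝ) * hc2_5 + (1/7 : ℝ) * hc2_6
  have hc2_1 : (G 2).coeff 1 = (0 : ℝ) := by linear_combination (8 : ℝ) * f1_2
  have hc2_2 : (G 2).coeff 2 = (8/7 : ℝ) := by linear_combination (-8/7 : ℝ) * f0_2 + (-64/7 : ℝ) * f1_2 + (8/7 : ℝ) * en2 + (-8/7 : ℝ) * hc2_3 + (-8/7 : ℝ) * hc2_4 + (-8/7 : ℝ) * hc2_5 + (-8/7 : ℝ) * hc2_6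
  have hev2 : ∀ t : ℝ, (G 2).eval t = (-1/7 : ℝ) * t^0 + (8/7 : ℝ) * t^2 := fun t => by
    rw [Polynomial.eval_eq_sum_range' (hnd 2 (by norm_num)) t]
    simp only [Finset.sum_range_succ, Finset.sum_range_zero, hc2_0, hc2_1, hc2_2, hc2_3, hc2_4, hc2_5, hc2_6]
    ring
  -- determine G 3
  have en3 := hnormX 3 (by norm_num)
  have hc3_4 : (G 3).coeff 4 = 0 := hzero 3 4 (by norm_num)
  have hc3_5 : (G 3).coeff 5 = 0 := hzero 3 5 (by norm_num)
  have hc3_6 : (G 3).coeff 6 = 0 := hzero 3 6 (by norm_num)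
  have eo0_3 := horthX 0 3 (by norm_num) (by norm_num) (by norm_num)
  have f0_3 : (1 : ℝ) * (G 3).coeff 0 + (1/8 : ℝ) * (G 3).coeff 2 = 0 := by
    have h2 : ((1 : ℝ) * (G 3).coeff 0 + (1/8 : ℝ) * (G 3).coeff 2) * Mom 0 = 0 := by linear_combination eo0_3 + (((-1 : ℝ) * (G 3).coeff 0 + (-1/8 : ℝ) * (G 3).coeff 2 + (-3/80 : ℝ) * (G 3).coeff 4 + (-1/64 : ℝ) * (G 3).coeff 6) * Mom 0) * hc0_0 + (((-1/8 : ℝ) * (G 3).coeff 1 + (-3/80 : ℝ) * (G 3).coeff 3 + (-1/64 : ℝ) * (G 3).coeff 5) * Mom 0) * hc0_1 + (((-1/8 : ℝ) * (G 3).coeff 0 + (-3/80 : ℝ) * (G 3).coeff 2 + (-1/64 : ℝ) * (G 3).coeff 4 + (-1/128 : ℝ) * (G 3).coeff 6) * Mom 0) * hc0_2 + (((-3/80 : ℝ) * (G 3).coeff 1 + (-1/64 : ℝ) * (G 3).coeff 3 + (-1/128 : ℝ) * (G 3).coeff 5) * Mom 0) * hc0_3 + (((-3/80 : ℝ) * (G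 3).coeff 0 + (-1/64 : ℝ) * (G 3).coeff 2 + (-1/128 : ℝ) * (G 3).coeff 4 + (-9/2048 : ℝ) * (G 3).coeff 6) * Mom 0) * hc0_4 + (((-1/64 : ℝ) * (G 3).coeff 1 + (-1/128 : ℝ) * (G 3).coeff 3 + (-9/2048 : ℝ) * (G 3).coeff 5) * Mom 0) * hc0_5 + (((-1/64 : ℝ) * (G 3).coeff 0 + (-1/128 : ℝ) * (G 3).coeff 2 + (-9/2048 : ℝ) * (G 3).coeff 4 + (-11/4096 : ℝ) * (G 3).coeff 6) * Mom 0) * hc0_6 + ((-3/80 : ℝ) * Mom 0) * hc3_4 + ((-1/64 : ℝ) * Mom 0) * hc3_6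
    exact (mul_eq_zero.mp h2).resolve_right hm0
  have eo1_3 := horthX 1 3 (by norm_num) (by norm_num) (by norm_num)
  have f1_3 : (1/8 : ℝ) * (G 3).coeff 1 + (3/80 : ℝ) * (G 3).coeff 3 = 0 := by
    have h2 : ((1/8 : ℝ) * (G 3).coeff 1 + (3/80 : ℝ) * (G 3).coeff 3) * Mom 0 = 0 := by linear_combination eo1_3 + (((-1 : ℝ) * (G 3).coeff 0 + (-1/8 : ℝ) * (G 3).coeff 2 + (-3/80 : ℝ) * (G 3).coeff 4 + (-1/64 : ℝ) * (G 3).coeff 6) * Mom 0) * hc1_0 + (((-1/8 : ℝ) * (G 3).coeff 1 + (-3/80 : ℝ) * (G 3).coeff 3 + (-1/64 : ℝ) * (G 3).coeff 5) * Mom 0) * hc1_1 + (((-1/8 : ℝ) * (G 3).coeff 0 + (-3/80 : ℝ) * (G 3).coeff 2 + (-1/64 : ℝ) * (G 3).coeff 4 + (-1/128 : ℝ) * (G 3).coeff 6) * Mom 0) * hc1_2 + (((-3/80 : ℝ) * (G 3).coeff 1 + (-1/64 : ℝ) * (G 3).coeff 3 + (-1/128 : ℝ) * (G 3).coeff 5)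 * Mom 0) * hc1_3 + (((-3/80 : ℝ) * (G 3).coeff 0 + (-1/64 : ℝ) * (G 3).coeff 2 + (-1/128 : ℝ) * (G 3).coeff 4 + (-9/2048 : ℝ) * (G 3).coeff 6) * Mom 0) * hc1_4 + (((-1/64 : ℝ) * (G 3).coeff 1 + (-1/128 : ℝ) * (G 3).coeff 3 + (-9/2048 : ℝ) * (G 3).coeff 5) * Mom 0) * hc1_5 + (((-1/64 : ℝ) * (G 3).coeff 0 + (-1/128 : ℝ) * (G 3).coeff 2 + (-9/2048 : ℝ) * (G 3).coeff 4 + (-11/4096 : ℝ) * (G 3).coeff 6) * Mom 0) * hc1_6 + ((-1/64 : ℝ) * Mom 0) * hc3_5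
    exact (mul_eq_zero.mp h2).resolve_right hm0
  have eo2_3 := horthX 2 3 (by norm_num) (by norm_num) (by norm_num)
  have f2_3 : (1/40 : ℝ) * (G 3).coeff 2 = 0 := by
    have h2 : ((1/40 : ℝ) * (G 3).coeff 2) * Mom 0 = 0 := by linear_combination eo2_3 + (((-1 : ℝ) * (G 3).coeff 0 + (-1/8 : ℝ) * (G 3).coeff 2 + (-3/80 : ℝ) * (G 3).coeff 4 + (-1/64 : ℝ) * (G 3).coeff 6) * Mom 0) * hc2_0 + (((-1/8 : ℝ) * (G 3).coeff 1 + (-3/80 : ℝ) * (G 3).coeff 3 + (-1/64 : ℝ) * (G 3).coeff 5) * Mom 0) * hc2_1 + (((-1/8 : ℝ) * (G 3).coeff 0 + (-3/80 : ℝ) * (G 3).coeff 2 + (-1/64 : ℝ) * (G 3).coeff 4 + (-1/128 : ℝ) * (G 3).coeff 6) * Mom 0) * hc2_2 + (((-3/80 : ℝ) * (G 3).coeff 1 + (-1/64 : ℝ) * (G 3).coeff 3 + (-1/128 : ℝ) * (G 3).coeff 5) * Mom 0) * hc2_3 + (((-3/80 : ℝ) * (G 3).coeff 0 + (-1/64 :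 ℝ) * (G 3).coeff 2 + (-1/128 : ℝ) * (G 3).coeff 4 + (-9/2048 : ℝ) * (G 3).coeff 6) * Mom 0) * hc2_4 + (((-1/64 : ℝ) * (G 3).coeff 1 + (-1/128 : ℝ) * (G 3).coeff 3 + (-9/2048 : ℝ) * (G 3).coeff 5) * Mom 0) * hc2_5 + (((-1/64 : ℝ) * (G 3).coeff 0 + (-1/128 : ℝ) * (G 3).coeff 2 + (-9/2048 : ℝ) * (G 3).coeff 4 + (-11/4096 : ℝ) * (G 3).coeff 6) * Mom 0) * hc2_6 + ((-1/80 : ℝ) * Mom 0) * hc3_4 + ((-3/448 : ℝ) * Mom 0) * hc3_6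
    exact (mul_eq_zero.mp h2).resolve_right hm0
  have hc3_0 : (G 3).coeff 0 = (0 : ℝ) := by linear_combination (1 : ℝ) * f0_3 + (-5 : ℝ) * f2_3
  have hc3_1 : (G 3).coeff 1 = (-3/7 : ℝ) := by linear_combination (3/7 : ℝ) * f0_3 + (80/7 : ℝ) * f1_3 + (15 : ℝ) * f2_3 + (-3/7 : ℝ) * en3 + (3/7 : ℝ) * hc3_4 + (3/7 : ℝ) * hc3_5 + (3/7 : ℝ) * hc3_6
  have hc3_2 : (G 3).coeff 2 = (0 : ℝ) := by linear_combination (40 : ℝ) * f2_3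
  have hc3_3 : (G 3).coeff 3 = (10/7 : ℝ) := by linear_combination (-10/7 : ℝ) * f0_3 + (-80/7 : ℝ) * f1_3 + (-50 : ℝ) * f2_3 + (10/7 : ℝ) * en3 + (-10/7 : ℝ) * hc3_4 + (-10/7 : ℝ) * hc3_5 + (-10/7 : ℝ) * hc3_6
  have hev3 : ∀ t : ℝ, (G 3).eval t = (-3/7 : ℝ) * t^1 + (10/7 : ℝ) * t^3 := fun t => by
    rw [Polynomial.eval_eq_sum_range' (hnd 3 (by norm_num)) t]
    simp only [Finset.sum_range_succ, Finset.sum_range_zero, hc3_0, hc3_1, hc3_2, hc3_3, hc3_4, hc3_5, hc3_6]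
    ring
  -- determine G 4
  have en4 := hnormX 4 (by norm_num)
  have hc4_5 : (G 4).coeff 5 = 0 := hzero 4 5 (by norm_num)
  have hc4_6 : (G 4).coeff 6 = 0 := hzero 4 6 (by norm_num)
  have eo0_4 := horthX 0 4 (by norm_num) (by norm_num) (by norm_num)
  have f0_4 : (1 : ℝ) * (G 4).coeff 0 + (1/8 : ℝ) * (G 4).coeff 2 + (3/80 : ℝ) * (G 4).coeff 4 = 0 := by
    have h2 : ((1 : ℝ) * (G 4).coeff 0 + (1/8 : ℝ) * (G 4).coeff 2 + (3/80 : ℝ) * (G 4).coeff 4) * Mom 0 = 0 := by linear_combination eo0_4 + (((-1 : ℝ) * (G 4).coeff 0 + (-1/8 : ℝ) * (G 4).coeff 2 + (-3/80 : ℝ) * (G 4).coeff 4 + (-1/64 : ℝ) * (G 4).coeff 6) * Mom 0) * hc0_0 + (((-1/8 : ℝ) * (G 4).coeff 1 + (-3/80 : ℝ) * (G 4).coeff 3 + (-1/64 : ℝ) * (G 4).coeff 5) * Mom 0) * hc0_1 + (((-1/8 : ℝ) * (G 4).coeff 0 + (-3/80 : ℝ) * (G 4).coeff 2 + (-1/64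 : ℝ) * (G 4).coeff 4 + (-1/128 : ℝ) * (G 4).coeff 6) * Mom 0) * hc0_2 + (((-3/80 : ℝ) * (G 4).coeff 1 + (-1/64 : ℝ) * (G 4).coeff 3 + (-1/128 : ℝ) * (G 4).coeff 5) * Mom 0) * hc0_3 + (((-3/80 : ℝ) * (G 4).coeff 0 + (-1/64 : ℝ) * (G 4).coeff 2 + (-1/128 : ℝ) * (G 4).coeff 4 + (-9/2048 : ℝ) * (G 4).coeff 6) * Mom 0) * hc0_4 + (((-1/64 : ℝ) * (G 4).coeff 1 + (-1/128 : ℝ) * (G 4).coeff 3 + (-9/2048 : ℝ) * (G 4).coeff 5) * Mom 0) * hc0_5 + (((-1/64 : ℝ) * (G 4).coeff 0 + (-1/128 : ℝ) * (G 4).coeff 2 + (-9/2048 : ℝ) * (G 4).coeff 4 + (-11/4096 : ℝ) * (G 4).coeff 6) * Mom 0) * hc0_6 + ((-1/64 : ℝ) * Mom 0) * hc4_6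
    exact (mul_eq_zero.mp h2).resolve_right hm0
  have eo1_4 := horthX 1 4 (by norm_num) (by norm_num) (by norm_num)
  have f1_4 : (1/8 : ℝ) * (G 4).coeff 1 + (3/80 : ℝ) * (G 4).coeff 3 = 0 := by
    have h2 : ((1/8 : ℝ) * (G 4).coeff 1 + (3/80 : ℝ) * (G 4).coeff 3) * Mom 0 = 0 := by linear_combination eo1_4 + (((-1 : ℝ) * (G 4).coeff 0 + (-1/8 : ℝ) * (G 4).coeff 2 + (-3/80 : ℝ) * (G 4).coeff 4 + (-1/64 : ℝ) * (G 4).coeff 6) * Mom 0) * hc1_0 + (((-1/8 : ℝ) * (G 4).coeff 1 + (-3/80 : ℝ) * (G 4).coeff 3 + (-1/64 : ℝ) * (G 4).coeff 5) * Mom 0) * hc1_1 + (((-1/8 : ℝ) * (G 4).coeff 0 + (-3/80 : ℝ) * (G 4).coeff 2 + (-1/64 : ℝ) * (G 4).coeff 4 + (-1/128 : ℝ) * (G 4).coeff 6) * Mom 0) * hc1_2 + (((-3/80 : ℝ) * (G 4).coeff 1 + (-1/64 : ℝ) * (G 4).coeff 3 + (-1/128 : ℝ) * (G 4).coeff 5)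 * Mom 0) * hc1_3 + (((-3/80 : ℝ) * (G 4).coeff 0 + (-1/64 : ℝ) * (G 4).coeff 2 + (-1/128 : ℝ) * (G 4).coeff 4 + (-9/2048 : ℝ) * (G 4).coeff 6) * Mom 0) * hc1_4 + (((-1/64 : ℝ) * (G 4).coeff 1 + (-1/128 : ℝ) * (G 4).coeff 3 + (-9/2048 : ℝ) * (G 4).coeff 5) * Mom 0) * hc1_5 + (((-1/64 : ℝ) * (G 4).coeff 0 + (-1/128 : ℝ) * (G 4).coeff 2 + (-9/2048 : ℝ) * (G 4).coeff 4 + (-11/4096 : ℝ) * (G 4).coeff 6) * Mom 0) * hc1_6 + ((-1/64 : ℝ) * Mom 0) * hc4_5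
    exact (mul_eq_zero.mp h2).resolve_right hm0
  have eo2_4 := horthX 2 4 (by norm_num) (by norm_num) (by norm_num)
  have f2_4 : (1/40 : ℝ) * (G 4).coeff 2 + (1/80 : ℝ) * (G 4).coeff 4 = 0 := by
    have h2 : ((1/40 : ℝ) * (G 4).coeff 2 + (1/80 : ℝ) * (G 4).coeff 4) * Mom 0 = 0 := by linear_combination eo2_4 + (((-1 : ℝ) * (G 4).coeff 0 + (-1/8 : ℝ) * (G 4).coeff 2 + (-3/80 : ℝ) * (G 4).coeff 4 + (-1/64 : ℝ) * (G 4).coeff 6) * Mom 0) * hc2_0 + (((-1/8 : ℝ) * (G 4).coeff 1 + (-3/80 : ℝ) * (G 4).coeff 3 + (-1/64 : ℝ) * (G 4).coeff 5) * Mom 0) * hc2_1 + (((-1/8 : ℝ) * (G 4).coeff 0 + (-3/80 : ℝ) * (G 4).coeff 2 + (-1/64 : ℝ) * (G 4).coeff 4 + (-1/128 : ℝ) * (G 4).coeff 6) * Mom 0) * hc2_2 + (((-3/80 : ℝ) * (G 4).coeff 1 + (-1/64 : ℝ) * (G 4).coeff 3 + (-1/128 : ℝ) * (G 4).coeff 5)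 * Mom 0) * hc2_3 + (((-3/80 : ℝ) * (G 4).coeff 0 + (-1/64 : ℝ) * (G 4).coeff 2 + (-1/128 : ℝ) * (G 4).coeff 4 + (-9/2048 : ℝ) * (G 4).coeff 6) * Mom 0) * hc2_4 + (((-1/64 : ℝ) * (G 4).coeff 1 + (-1/128 : ℝ) * (G 4).coeff 3 + (-9/2048 : ℝ) * (G 4).coeff 5) * Mom 0) * hc2_5 + (((-1/64 : ℝ) * (G 4).coeff 0 + (-1/128 : ℝ) * (G 4).coeff 2 + (-9/2048 : ℝ) * (G 4).coeff 4 + (-11/4096 : ℝ) * (G 4).coeff 6) * Mom 0) * hc2_6 + ((-3/448 : ℝ) * Mom 0) * hc4_6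
    exact (mul_eq_zero.mp h2).resolve_right hm0
  have eo3_4 := horthX 3 4 (by norm_num) (by norm_num) (by norm_num)
  have f3_4 : (1/160 : ℝ) * (G 4).coeff 3 = 0 := by
    have h2 : ((1/160 : ℝ) * (G 4).coeff 3) * Mom 0 = 0 := by linear_combination eo3_4 + (((-1 : ℝ) * (G 4).coeff 0 + (-1/8 : ℝ) * (G 4).coeff 2 + (-3/80 : ℝ) * (G 4).coeff 4 + (-1/64 : ℝ) * (G 4).coeff 6) * Mom 0) * hc3_0 + (((-1/8 : ℝ) * (G 4).coeff 1 + (-3/80 : ℝ) * (G 4).coeff 3 + (-1/64 : ℝ) * (G 4).coeff 5) * Mom 0) * hc3_1 + (((-1/8 : ℝ) * (G 4).coeff 0 + (-3/80 : ℝ) * (G 4).coeff 2 + (-1/64 : ℝ) * (G 4).coeff 4 + (-1/128 : ℝ) * (G 4).coeff 6) * Mom 0) * hc3_2 + (((-3/80 : ℝ) * (G 4).coeff 1 + (-1/64 : ℝ) * (G 4).coeff 3 + (-1/128 : ℝ) * (G 4).coeff 5) * Mom 0) * hc3_3 + (((-3/80 : ℝ) * (G 4).coeff 0 + (-1/64 :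 ℝ) * (G 4).coeff 2 + (-1/128 : ℝ) * (G 4).coeff 4 + (-9/2048 : ℝ) * (G 4).coeff 6) * Mom 0) * hc3_4 + (((-1/64 : ℝ) * (G 4).coeff 1 + (-1/128 : ℝ) * (G 4).coeff 3 + (-9/2048 : ℝ) * (G 4).coeff 5) * Mom 0) * hc3_5 + (((-1/64 : ℝ) * (G 4).coeff 0 + (-1/128 : ℝ) * (G 4).coeff 2 + (-9/2048 : ℝ) * (G 4).coeff 4 + (-11/4096 : ℝ) * (G 4).coeff 6) * Mom 0) * hc3_6 + ((-1/224 : ℝ) * Mom 0) * hc4_5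
    exact (mul_eq_zero.mp h2).resolve_right hm0
  have hc4_0 : (G 4).coeff 0 = (1/21 : ℝ) := by linear_combination (20/21 : ℝ) * f0_4 + (-8/21 : ℝ) * f1_4 + (-20/3 : ℝ) * f2_4 + (-16/3 : ℝ) * f3_4 + (1/21 : ℝ) * en4 + (-1/21 : ℝ) * hc4_5 + (-1/21 : ℝ) * hc4_6
  have hc4_1 : (G 4).coeff 1 = (0 : ℝ) := by linear_combination (8 : ℝ) * f1_4 + (-48 : ℝ) * f3_4
  have hc4_2 : (G 4).coeff 2 = (-20/21 : ℝ) := by linear_combination (20/21 : ℝ) * f0_4 + (160/21 : ℝ) * f1_4 + (220/3 : ℝ) * f2_4 + (320/3 : ℝ) * f3_4 + (-20/21 : ℝ) * en4 + (20/21 : ℝ) * hc4_5 + (20/21 : ℝ) * hc4_6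
  have hc4_3 : (G 4).coeff 3 = (0 : ℝ) := by linear_combination (160 : ℝ) * f3_4
  have hc4_4 : (G 4).coeff 4 = (40/21 : ℝ) := by linear_combination (-40/21 : ℝ) * f0_4 + (-320/21 : ℝ) * f1_4 + (-200/3 : ℝ) * f2_4 + (-640/3 : ℝ) * f3_4 + (40/21 : ℝ) * en4 + (-40/21 : ℝ) * hc4_5 + (-40/21 : ℝ) * hc4_6
  have hev4 : ∀ t : ℝ, (G 4).eval t = (1/21 : ℝ) * t^0 + (-20/21 : ℝ) * t^2 + (40/21 : ℝ) * t^4 := fun t => by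
    rw [Polynomial.eval_eq_sum_range' (hnd 4 (by norm_num)) t]
    simp only [Finset.sum_range_succ, Finset.sum_range_zero, hc4_0, hc4_1, hc4_2, hc4_3, hc4_4, hc4_5, hc4_6]
    ring
  -- determine G 5
  have en5 := hnormX 5 (by norm_num)
  have hc5_6 : (G 5).coeff 6 = 0 := hzero 5 6 (by norm_num)
  have eo0_5 := horthX 0 5 (by norm_num) (by norm_num) (by norm_num)
  have f0_5 : (1 : ℝ) * (G 5).coeff 0 + (1/8 : ℝ) * (G 5).coeff 2 + (3/80 : ℝ) * (G 5).coeff 4 = 0 := by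
    have h2 : ((1 : ℝ) * (G 5).coeff 0 + (1/8 : ℝ) * (G 5).coeff 2 + (3/80 : ℝ) * (G 5).coeff 4) * Mom 0 = 0 := by linear_combination eo0_5 + (((-1 : ℝ) * (G 5).coeff 0 + (-1/8 : ℝ) * (G 5).coeff 2 + (-3/80 : ℝ) * (G 5).coeff 4 + (-1/64 : ℝ) * (G 5).coeff 6) * Mom 0) * hc0_0 + (((-1/8 : ℝ) * (G 5).coeff 1 + (-3/80 : ℝ) * (G 5).coeff 3 + (-1/64 : ℝ) * (G 5).coeff 5) * Mom 0) * hc0_1 + (((-1/8 : ℝ) * (G 5).coeff 0 + (-3/80 : ℝ) * (G 5).coeff 2 + (-1/64 : ℝ) * (G 5).coeff 4 + (-1/128 : ℝ) * (G 5).coeff 6) * Mom 0) * hc0_2 + (((-3/80 : ℝ) * (G 5).coeff 1 + (-1/64 : ℝ) * (G 5).coeff 3 + (-1/128 : ℝ) * (G 5).coeff 5) * Mom 0) * hc0_3 + (((-3/80 : ℝ) * (G 5).coeff 0 + (-1/64 : ℝ) * (G 5).coeff 2 + (-1/128 : ℝ) * (G 5).coeff 4 + (-9/2048 : ℝ) *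 (G 5).coeff 6) * Mom 0) * hc0_4 + (((-1/64 : ℝ) * (G 5).coeff 1 + (-1/128 : ℝ) * (G 5).coeff 3 + (-9/2048 : ℝ) * (G 5).coeff 5) * Mom 0) * hc0_5 + (((-1/64 : ℝ) * (G 5).coeff 0 + (-1/128 : ℝ) * (G 5).coeff 2 + (-9/2048 : ℝ) * (G 5).coeff 4 + (-11/4096 : ℝ) * (G 5).coeff 6) * Mom 0) * hc0_6 + ((-1/64 : ℝ) * Mom 0) * hc5_6
    exact (mul_eq_zero.mp h2).resolve_right hm0
  have eo1_5 := horthX 1 5 (by norm_num) (by norm_num) (by norm_num)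
  have f1_5 : (1/8 : ℝ) * (G 5).coeff 1 + (3/80 : ℝ) * (G 5).coeff 3 + (1/64 : ℝ) * (G 5).coeff 5 = 0 := by
    have h2 : ((1/8 : ℝ) * (G 5).coeff 1 + (3/80 : ℝ) * (G 5).coeff 3 + (1/64 : ℝ) * (G 5).coeff 5) * Mom 0 = 0 := by linear_combination eo1_5 + (((-1 : ℝ) * (G 5).coeff 0 + (-1/8 : ℝ) * (G 5).coeff 2 + (-3/80 : ℝ) * (G 5).coeff 4 + (-1/64 : ℝ) * (G 5).coeff 6) * Mom 0) * hc1_0 + (((-1/8 : ℝ) * (G 5).coeff 1 + (-3/80 : ℝ) * (G 5).coeff 3 + (-1/64 : ℝ) * (G 5).coeff 5) * Mom 0) * hc1_1 + (((-1/8 : ℝ) * (G 5).coeff 0 + (-3/80 : ℝ) * (G 5).coeff 2 + (-1/64 : ℝ) * (G 5).coeff 4 + (-1/128 : ℝ) * (G 5).coeff 6) * Mom 0) * hc1_2 + (((-3/80 : ℝ) * (G 5).coeff 1 + (-1/64 : ℝ) * (G 5).coeff 3 + (-1/128 : ℝ) * (G 5).coeff 5) * Mom 0) * hc1_3 + (((-3/80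 : ℝ) * (G 5).coeff 0 + (-1/64 : ℝ) * (G 5).coeff 2 + (-1/128 : ℝ) * (G 5).coeff 4 + (-9/2048 : ℝ) * (G 5).coeff 6) * Mom 0) * hc1_4 + (((-1/64 : ℝ) * (G 5).coeff 1 + (-1/128 : ℝ) * (G 5).coeff 3 + (-9/2048 : ℝ) * (G 5).coeff 5) * Mom 0) * hc1_5 + (((-1/64 : ℝ) * (G 5).coeff 0 + (-1/128 : ℝ) * (G 5).coeff 2 + (-9/2048 : ℝ) * (G 5).coeff 4 + (-11/4096 : ℝ) * (G 5).coeff 6) * Mom 0) * hc1_6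
    exact (mul_eq_zero.mp h2).resolve_right hm0
  have eo2_5 := horthX 2 5 (by norm_num) (by norm_num) (by norm_num)
  have f2_5 : (1/40 : ℝ) * (G 5).coeff 2 + (1/80 : ℝ) * (G 5).coeff 4 = 0 := by
    have h2 : ((1/40 : ℝ) * (G 5).coeff 2 + (1/80 : ℝ) * (G 5).coeff 4) * Mom 0 = 0 := by linear_combination eo2_5 + (((-1 : ℝ) * (G 5).coeff 0 + (-1/8 : ℝ) * (G 5).coeff 2 + (-3/80 : ℝ) * (G 5).coeff 4 + (-1/64 : ℝ) * (G 5).coeff 6) * Mom 0) * hc2_0 + (((-1/8 : ℝ) * (G 5).coeff 1 + (-3/80 : ℝ) * (G 5).coeff 3 + (-1/64 : ℝ) * (G 5).coeff 5) * Mom 0) * hc2_1 + (((-1/8 : ℝ) * (G 5).coeff 0 + (-3/80 : ℝ) * (G 5).coeff 2 + (-1/64 : ℝ) * (G 5).coeff 4 + (-1/128 : ℝ) * (G 5).coeff 6) * Mom 0) * hc2_2 + (((-3/80 : ℝ) * (G 5).coeff 1 + (-1/64 : ℝ) * (G 5).coeff 3 + (-1/128 : ℝ) * (G 5).coeff 5)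 * Mom 0) * hc2_3 + (((-3/80 : ℝ) * (G 5).coeff 0 + (-1/64 : ℝ) * (G 5).coeff 2 + (-1/128 : ℝ) * (G 5).coeff 4 + (-9/2048 : ℝ) * (G 5).coeff 6) * Mom 0) * hc2_4 + (((-1/64 : ℝ) * (G 5).coeff 1 + (-1/128 : ℝ) * (G 5).coeff 3 + (-9/2048 : ℝ) * (G 5).coeff 5) * Mom 0) * hc2_5 + (((-1/64 : ℝ) * (G 5).coeff 0 + (-1/128 : ℝ) * (G 5).coeff 2 + (-9/2048 : ℝ) * (G 5).coeff 4 + (-11/4096 : ℝ) * (G 5).coeff 6) * Mom 0) * hc2_6 + ((-3/448 : ℝ) * Mom 0) * hc5_6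
    exact (mul_eq_zero.mp h2).resolve_right hm0
  have eo3_5 := horthX 3 5 (by norm_num) (by norm_num) (by norm_num)
  have f3_5 : (1/160 : ℝ) * (G 5).coeff 3 + (1/224 : ℝ) * (G 5).coeff 5 = 0 := by
    have h2 : ((1/160 : ℝ) * (G 5).coeff 3 + (1/224 : ℝ) * (G 5).coeff 5) * Mom 0 = 0 := by linear_combination eo3_5 + (((-1 : ℝ) * (G 5).coeff 0 + (-1/8 : ℝ) * (G 5).coeff 2 + (-3/80 : ℝ) * (G 5).coeff 4 + (-1/64 : ℝ) * (G 5).coeff 6) * Mom 0) * hc3_0 + (((-1/8 : ℝ) * (G 5).coeff 1 + (-3/80 : ℝ) * (G 5).coeff 3 + (-1/64 : ℝ) * (G 5).coeff 5) * Mom 0) * hc3_1 + (((-1/8 : ℝ) * (G 5).coeff 0 + (-3/80 : ℝ) * (G 5).coeff 2 + (-1/64 : ℝ) * (G 5).coeff 4 + (-1/128 : ℝ) * (G 5).coeff 6) * Mom 0) * hc3_2 + (((-3/80 : ℝ) * (G 5).coeff 1 + (-1/64 : ℝ) * (G 5).coeff 3 + (-1/128 : ℝ) * (G 5).coeff 5)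 * Mom 0) * hc3_3 + (((-3/80 : ℝ) * (G 5).coeff 0 + (-1/64 : ℝ) * (G 5).coeff 2 + (-1/128 : ℝ) * (G 5).coeff 4 + (-9/2048 : ℝ) * (G 5).coeff 6) * Mom 0) * hc3_4 + (((-1/64 : ℝ) * (G 5).coeff 1 + (-1/128 : ℝ) * (G 5).coeff 3 + (-9/2048 : ℝ) * (G 5).coeff 5) * Mom 0) * hc3_5 + (((-1/64 : ℝ) * (G 5).coeff 0 + (-1/128 : ℝ) * (G 5).coeff 2 + (-9/2048 : ℝ) * (G 5).coeff 4 + (-11/4096 : ℝ) * (G 5).coeff 6) * Mom 0) * hc3_6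
    exact (mul_eq_zero.mp h2).resolve_right hm0
  have eo4_5 := horthX 4 5 (by norm_num) (by norm_num) (by norm_num)
  have f4_5 : (1/560 : ℝ) * (G 5).coeff 4 = 0 := by
    have h2 : ((1/560 : ℝ) * (G 5).coeff 4) * Mom 0 = 0 := by linear_combination eo4_5 + (((-1 : ℝ) * (G 5).coeff 0 + (-1/8 : ℝ) * (G 5).coeff 2 + (-3/80 : ℝ) * (G 5).coeff 4 + (-1/64 : ℝ) * (G 5).coeff 6) * Mom 0) * hc4_0 + (((-1/8 : ℝ) * (G 5).coeff 1 + (-3/80 : ℝ) * (G 5).coeff 3 + (-1/64 : ℝ) * (G 5).coeff 5) * Mom 0) * hc4_1 + (((-1/8 : ℝ) * (G 5).coeff 0 + (-3/80 : ℝ) * (G 5).coeff 2 + (-1/64 : ℝ) * (G 5).coeff 4 + (-1/128 : ℝ) * (G 5).coeff 6) * Mom 0) * hc4_2 + (((-3/80 : ℝ) * (G 5).coeff 1 + (-1/64 : ℝ) * (G 5).coeff 3 + (-1/128 : ℝ) * (G 5).coeff 5) * Mom 0) * hc4_3 + (((-3/80 : ℝ) * (G 5).coeff 0 + (-1/64 :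 ℝ) * (G 5).coeff 2 + (-1/128 : ℝ) * (G 5).coeff 4 + (-9/2048 : ℝ) * (G 5).coeff 6) * Mom 0) * hc4_4 + (((-1/64 : ℝ) * (G 5).coeff 1 + (-1/128 : ℝ) * (G 5).coeff 3 + (-9/2048 : ℝ) * (G 5).coeff 5) * Mom 0) * hc4_5 + (((-1/64 : ℝ) * (G 5).coeff 0 + (-1/128 : ℝ) * (G 5).coeff 2 + (-9/2048 : ℝ) * (G 5).coeff 4 + (-11/4096 : ℝ) * (G 5).coeff 6) * Mom 0) * hc4_6 + ((-3/1792 : ℝ) * Mom 0) * hc5_6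
    exact (mul_eq_zero.mp h2).resolve_right hm0
  have hc5_0 : (G 5).coeff 0 = (0 : ℝ) := by linear_combination (1 : ℝ) * f0_5 + (-5 : ℝ) * f2_5 + (14 : ℝ) * f4_5
  have hc5_1 : (G 5).coeff 1 = (5/21 : ℝ) := by linear_combination (-5/21 : ℝ) * f0_5 + (128/21 : ℝ) * f1_5 + (-25/3 : ℝ) * f2_5 + (-224/3 : ℝ) * f3_5 + (-70 : ℝ) * f4_5 + (5/21 : ℝ) * en5 + (-5/21 : ℝ) * hc5_6
  have hc5_2 : (G 5).coeff 2 = (0 : ℝ) := by linear_combination (40 : ℝ) * f2_5 + (-280 : ℝ) * f4_5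
  have hc5_3 : (G 5).coeff 3 = (-40/21 : ℝ) := by linear_combination (40/21 : ℝ) * f0_5 + (320/21 : ℝ) * f1_5 + (200/3 : ℝ) * f2_5 + (1120/3 : ℝ) * f3_5 + (560 : ℝ) * f4_5 + (-40/21 : ℝ) * en5 + (40/21 : ℝ) * hc5_6
  have hc5_4 : (G 5).coeff 4 = (0 : ℝ) := by linear_combination (560 : ℝ) * f4_5
  have hc5_5 : (G 5).coeff 5 = (8/3 : ℝ) := by linear_combination (-8/3 : ℝ) * f0_5 + (-64/3 : ℝ) * f1_5 + (-280/3 : ℝ) * f2_5 + (-896/3 : ℝ) * f3_5 + (-784 : ℝ) * f4_5 + (8/3 : ℝ) * en5 + (-8/3 : ℝ) * hc5_6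
  have hev5 : ∀ t : ℝ, (G 5).eval t = (5/21 : ℝ) * t^1 + (-40/21 : ℝ) * t^3 + (8/3 : ℝ) * t^5 := fun t => by
    rw [Polynomial.eval_eq_sum_range' (hnd 5 (by norm_num)) t]
    simp only [Finset.sum_range_succ, Finset.sum_range_zero, hc5_0, hc5_1, hc5_2, hc5_3, hc5_4, hc5_5, hc5_6]
    ring
  -- determine G 6
  have en6 := hnormX 6 (by norm_num)
  have eo0_6 := horthX 0 6 (by norm_num) (by norm_num) (by norm_num)
  have f0_6 : (1 : ℝ) * (G 6).coeff 0 + (1/8 : ℝ) * (G 6).coeff 2 + (3/80 : ℝ) * (G 6).coeff 4 + (1/64 : ℝ) * (G 6).coeff 6 = 0 := by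
    have h2 : ((1 : ℝ) * (G 6).coeff 0 + (1/8 : ℝ) * (G 6).coeff 2 + (3/80 : ℝ) * (G 6).coeff 4 + (1/64 : ℝ) * (G 6).coeff 6) * Mom 0 = 0 := by linear_combination eo0_6 + (((-1 : ℝ) * (G 6).coeff 0 + (-1/8 : ℝ) * (G 6).coeff 2 + (-3/80 : ℝ) * (G 6).coeff 4 + (-1/64 : ℝ) * (G 6).coeff 6) * Mom 0) * hc0_0 + (((-1/8 : ℝ) * (G 6).coeff 1 + (-3/80 : ℝ) * (G 6).coeff 3 + (-1/64 : ℝ) * (G 6).coeff 5) * Mom 0) * hc0_1 + (((-1/8 : ℝ) * (G 6).coeff 0 + (-3/80 : ℝ) * (G 6).coeff 2 + (-1/64 : ℝ) * (G 6).coeff 4 + (-1/128 : ℝ) * (G 6).coeff 6) * Mom 0) * hc0_2 + (((-3/80 : ℝ) * (G 6).coeff 1 + (-1/64 : ℝ) * (G 6).coeff 3 + (-1/128 : ℝ) * (G 6).coeff 5) * Mom 0) * hc0_3 + (((-3/80 : ℝ) * (G 6).coeff 0 + (-1/64 : ℝ) * (G 6).coeff 2 + (-1/128 : ℝ) * (G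 6).coeff 4 + (-9/2048 : ℝ) * (G 6).coeff 6) * Mom 0) * hc0_4 + (((-1/64 : ℝ) * (G 6).coeff 1 + (-1/128 : ℝ) * (G 6).coeff 3 + (-9/2048 : ℝ) * (G 6).coeff 5) * Mom 0) * hc0_5 + (((-1/64 : ℝ) * (G 6).coeff 0 + (-1/128 : ℝ) * (G 6).coeff 2 + (-9/2048 : ℝ) * (G 6).coeff 4 + (-11/4096 : ℝ) * (G 6).coeff 6) * Mom 0) * hc0_6
    exact (mul_eq_zero.mp h2).resolve_right hm0
  have eo1_6 := horthX 1 6 (by norm_num) (by norm_num) (by norm_num)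
  have f1_6 : (1/8 : ℝ) * (G 6).coeff 1 + (3/80 : ℝ) * (G 6).coeff 3 + (1/64 : ℝ) * (G 6).coeff 5 = 0 := by
    have h2 : ((1/8 : ℝ) * (G 6).coeff 1 + (3/80 : ℝ) * (G 6).coeff 3 + (1/64 : ℝ) * (G 6).coeff 5) * Mom 0 = 0 := by linear_combination eo1_6 + (((-1 : ℝ) * (G 6).coeff 0 + (-1/8 : ℝ) * (G 6).coeff 2 + (-3/80 : ℝ) * (G 6).coeff 4 + (-1/64 : ℝ) * (G 6).coeff 6) * Mom 0) * hc1_0 + (((-1/8 : ℝ) * (G 6).coeff 1 + (-3/80 : ℝ) * (G 6).coeff 3 + (-1/64 : ℝ) * (G 6).coeff 5) * Mom 0) * hc1_1 + (((-1/8 : ℝ) * (G 6).coeff 0 + (-3/80 : ℝ) * (G 6).coeff 2 + (-1/64 : ℝ) * (G 6).coeff 4 + (-1/128 : ℝ) * (G 6).coeff 6) * Mom 0) * hc1_2 + (((-3/80 : ℝ) * (G 6).coeff 1 + (-1/64 : ℝ) * (G 6).coeff 3 + (-1/128 : ℝ) * (G 6).coeff 5) * Mom 0) * hc1_3 + (((-3/80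 : ℝ) * (G 6).coeff 0 + (-1/64 : ℝ) * (G 6).coeff 2 + (-1/128 : ℝ) * (G 6).coeff 4 + (-9/2048 : ℝ) * (G 6).coeff 6) * Mom 0) * hc1_4 + (((-1/64 : ℝ) * (G 6).coeff 1 + (-1/128 : ℝ) * (G 6).coeff 3 + (-9/2048 : ℝ) * (G 6).coeff 5) * Mom 0) * hc1_5 + (((-1/64 : ℝ) * (G 6).coeff 0 + (-1/128 : ℝ) * (G 6).coeff 2 + (-9/2048 : ℝ) * (G 6).coeff 4 + (-11/4096 : ℝ) * (G 6).coeff 6) * Mom 0) * hc1_6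
    exact (mul_eq_zero.mp h2).resolve_right hm0
  have eo2_6 := horthX 2 6 (by norm_num) (by norm_num) (by norm_num)
  have f2_6 : (1/40 : ℝ) * (G 6).coeff 2 + (1/80 : ℝ) * (G 6).coeff 4 + (3/448 : ℝ) * (G 6).coeff 6 = 0 := by
    have h2 : ((1/40 : ℝ) * (G 6).coeff 2 + (1/80 : ℝ) * (G 6).coeff 4 + (3/448 : ℝ) * (G 6).coeff 6) * Mom 0 = 0 := by linear_combination eo2_6 + (((-1 : ℝ) * (G 6).coeff 0 + (-1/8 : ℝ) * (G 6).coeff 2 + (-3/80 : ℝ) * (G 6).coeff 4 + (-1/64 : ℝ) * (G 6).coeff 6) * Mom 0) * hc2_0 + (((-1/8 : ℝ) * (G 6).coeff 1 + (-3/80 : ℝ) * (G 6).coeff 3 + (-1/64 : ℝ) * (G 6).coeff 5) * Mom 0) * hc2_1 + (((-1/8 : ℝ) * (G 6).coeff 0 + (-3/80 : ℝ) * (G 6).coeff 2 + (-1/64 : ℝ) * (G 6).coeff 4 + (-1/128 : ℝ) * (G 6).coeff 6) * Mom 0) * hc2_2 + (((-3/80 : ℝ) * (G 6).coeff 1 +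 (-1/64 : ℝ) * (G 6).coeff 3 + (-1/128 : ℝ) * (G 6).coeff 5) * Mom 0) * hc2_3 + (((-3/80 : ℝ) * (G 6).coeff 0 + (-1/64 : ℝ) * (G 6).coeff 2 + (-1/128 : ℝ) * (G 6).coeff 4 + (-9/2048 : ℝ) * (G 6).coeff 6) * Mom 0) * hc2_4 + (((-1/64 : ℝ) * (G 6).coeff 1 + (-1/128 : ℝ) * (G 6).coeff 3 + (-9/2048 : ℝ) * (G 6).coeff 5) * Mom 0) * hc2_5 + (((-1/64 : ℝ) * (G 6).coeff 0 + (-1/128 : ℝ) * (G 6).coeff 2 + (-9/2048 : ℝ) * (G 6).coeff 4 + (-11/4096 : ℝ) * (G 6).coeff 6) * Mom 0) * hc2_6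
    exact (mul_eq_zero.mp h2).resolve_right hm0
  have eo3_6 := horthX 3 6 (by norm_num) (by norm_num) (by norm_num)
  have f3_6 : (1/160 : ℝ) * (G 6).coeff 3 + (1/224 : ℝ) * (G 6).coeff 5 = 0 := by
    have h2 : ((1/160 : ℝ) * (G 6).coeff 3 + (1/224 : ℝ) * (G 6).coeff 5) * Mom 0 = 0 := by linear_combination eo3_6 + (((-1 : ℝ) * (G 6).coeff 0 + (-1/8 : ℝ) * (G 6).coeff 2 + (-3/80 : ℝ) * (G 6).coeff 4 + (-1/64 : ℝ) * (G 6).coeff 6) * Mom 0) * hc3_0 + (((-1/8 : ℝ) * (G 6).coeff 1 + (-3/80 : ℝ) * (G 6).coeff 3 + (-1/64 : ℝ) * (G 6).coeff 5) * Mom 0) * hc3_1 + (((-1/8 : ℝ) * (G 6).coeff 0 + (-3/80 : ℝ) * (G 6).coeff 2 + (-1/64 : ℝ) * (G 6).coeff 4 + (-1/128 : ℝ) * (G 6).coeff 6) * Mom 0) * hc3_2 + (((-3/80 : ℝ) * (G 6).coeff 1 + (-1/64 : ℝ) * (G 6).coeff 3 + (-1/128 : ℝ) * (G 6).coeff 5)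 * Mom 0) * hc3_3 + (((-3/80 : ℝ) * (G 6).coeff 0 + (-1/64 : ℝ) * (G 6).coeff 2 + (-1/128 : ℝ) * (G 6).coeff 4 + (-9/2048 : ℝ) * (G 6).coeff 6) * Mom 0) * hc3_4 + (((-1/64 : ℝ) * (G 6).coeff 1 + (-1/128 : ℝ) * (G 6).coeff 3 + (-9/2048 : ℝ) * (G 6).coeff 5) * Mom 0) * hc3_5 + (((-1/64 : ℝ) * (G 6).coeff 0 + (-1/128 : ℝ) * (G 6).coeff 2 + (-9/2048 : ℝ) * (G 6).coeff 4 + (-11/4096 : ℝ) * (G 6).coeff 6) * Mom 0) * hc3_6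
    exact (mul_eq_zero.mp h2).resolve_right hm0
  have eo4_6 := horthX 4 6 (by norm_num) (by norm_num) (by norm_num)
  have f4_6 : (1/560 : ℝ) * (G 6).coeff 4 + (3/1792 : ℝ) * (G 6).coeff 6 = 0 := by
    have h2 : ((1/560 : ℝ) * (G 6).coeff 4 + (3/1792 : ℝ) * (G 6).coeff 6) * Mom 0 = 0 := by linear_combination eo4_6 + (((-1 : ℝ) * (G 6).coeff 0 + (-1/8 : ℝ) * (G 6).coeff 2 + (-3/80 : ℝ) * (G 6).coeff 4 + (-1/64 : ℝ) * (G 6).coeff 6) * Mom 0) * hc4_0 + (((-1/8 : ℝ) * (G 6).coeff 1 + (-3/80 : ℝ) * (G 6).coeff 3 + (-1/64 : ℝ) * (G 6).coeff 5) * Mom 0) * hc4_1 + (((-1/8 : ℝ) * (G 6).coeff 0 + (-3/80 : ℝ) * (G 6).coeff 2 + (-1/64 : ℝ) * (G 6).coeff 4 + (-1/128 : ℝ) * (G 6).coeff 6) * Mom 0) * hc4_2 + (((-3/80 : ℝ) * (G 6).coeff 1 + (-1/64 : ℝ) * (G 6).coeff 3 + (-1/128 : ℝ) * (G 6).coeff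 5) * Mom 0) * hc4_3 + (((-3/80 : ℝ) * (G 6).coeff 0 + (-1/64 : ℝ) * (G 6).coeff 2 + (-1/128 : ℝ) * (G 6).coeff 4 + (-9/2048 : ℝ) * (G 6).coeff 6) * Mom 0) * hc4_4 + (((-1/64 : ℝ) * (G 6).coeff 1 + (-1/128 : ℝ) * (G 6).coeff 3 + (-9/2048 : ℝ) * (G 6).coeff 5) * Mom 0) * hc4_5 + (((-1/64 : ℝ) * (G 6).coeff 0 + (-1/128 : ℝ) * (G 6).coeff 2 + (-9/2048 : ℝ) * (G 6).coeff 4 + (-11/4096 : ℝ) * (G 6).coeff 6) * Mom 0) * hc4_6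
    exact (mul_eq_zero.mp h2).resolve_right hm0
  have eo5_6 := horthX 5 6 (by norm_num) (by norm_num) (by norm_num)
  have f5_6 : (1/1792 : ℝ) * (G 6).coeff 5 = 0 := by
    have h2 : ((1/1792 : ℝ) * (G 6).coeff 5) * Mom 0 = 0 := by linear_combination eo5_6 + (((-1 : ℝ) * (G 6).coeff 0 + (-1/8 : ℝ) * (G 6).coeff 2 + (-3/80 : ℝ) * (G 6).coeff 4 + (-1/64 : ℝ) * (G 6).coeff 6) * Mom 0) * hc5_0 + (((-1/8 : ℝ) * (G 6).coeff 1 + (-3/80 : ℝ) * (G 6).coeff 3 + (-1/64 : ℝ) * (G 6).coeff 5) * Mom 0) * hc5_1 + (((-1/8 : ℝ) * (G 6).coeff 0 + (-3/80 : ℝ) * (G 6).coeff 2 + (-1/64 : ℝ) * (G 6).coeff 4 + (-1/128 : ℝ) * (G 6).coeff 6) * Mom 0) * hc5_2 + (((-3/80 : ℝ) * (G 6).coeff 1 + (-1/64 : ℝ) * (G 6).coeff 3 + (-1/128 : ℝ) * (G 6).coeff 5) * Mom 0) * hc5_3 + (((-3/80 : ℝ) * (G 6).coeff 0 + (-1/64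 : ℝ) * (G 6).coeff 2 + (-1/128 : ℝ) * (G 6).coeff 4 + (-9/2048 : ℝ) * (G 6).coeff 6) * Mom 0) * hc5_4 + (((-1/64 : ℝ) * (G 6).coeff 1 + (-1/128 : ℝ) * (G 6).coeff 3 + (-9/2048 : ℝ) * (G 6).coeff 5) * Mom 0) * hc5_5 + (((-1/64 : ℝ) * (G 6).coeff 0 + (-1/128 : ℝ) * (G 6).coeff 2 + (-9/2048 : ℝ) * (G 6).coeff 4 + (-11/4096 : ℝ) * (G 6).coeff 6) * Mom 0) * hc5_6
    exact (mul_eq_zero.mp h2).resolve_right hm0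
  have hc6_0 : (G 6).coeff 0 = (-5/231 : ℝ) := by linear_combination (236/231 : ℝ) * f0_6 + (40/231 : ℝ) * f1_6 + (-140/33 : ℝ) * f2_6 + (80/33 : ℝ) * f3_6 + (224/11 : ℝ) * f4_6 + (160/11 : ℝ) * f5_6 + (-5/231 : ℝ) * en6
  have hc6_1 : (G 6).coeff 1 = (0 : ℝ) := by linear_combination (8 : ℝ) * f1_6 + (-48 : ℝ) * f3_6 + (160 : ℝ) * f5_6
  have hc6_2 : (G 6).coeff 2 = (60/77 : ℝ) := by linear_combination (-60/77 : ℝ) * f0_6 + (-480/77 : ℝ) * f1_6 + (140/11 : ℝ) * f2_6 + (-960/11 : ℝ) * f3_6 + (-5600/11 : ℝ) * f4_6 + (-5760/11 : ℝ) * f5_6 + (60/77 : ℝ) * en6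
  have hc6_3 : (G 6).coeff 3 = (0 : ℝ) := by linear_combination (160 : ℝ) * f3_6 + (-1280 : ℝ) * f5_6
  have hc6_4 : (G 6).coeff 4 = (-40/11 : ℝ) := by linear_combination (40/11 : ℝ) * f0_6 + (320/11 : ℝ) * f1_6 + (1400/11 : ℝ) * f2_6 + (4480/11 : ℝ) * f3_6 + (17920/11 : ℝ) * f4_6 + (26880/11 : ℝ) * f5_6 + (-40/11 : ℝ) * en6
  have hc6_5 : (G 6).coeff 5 = (0 : ℝ) := by linear_combination (1792 : ℝ) * f5_6
  have hc6_6 : (G 6).coeff 6 = (128/33 : ℝ) := by linear_combination (-128/33 : ℝ) * f0_6 + (-1024/33 : ℝ) * f1_6 + (-4480/33 : ℝ) * f2_6 + (-14336/33 : ℝ) * f3_6 + (-12544/11 : ℝ) * f4_6 + (-28672/11 : ℝ) * f5_6 + (128/33 : ℝ) * en6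
  have hev6 : ∀ t : ℝ, (G 6).eval t = (-5/231 : ℝ) * t^0 + (60/77 : ℝ) * t^2 + (-40/11 : ℝ) * t^4 + (128/33 : ℝ) * t^6 := fun t => by
    rw [Polynomial.eval_eq_sum_range' (hnd 6 (by norm_num)) t]
    simp only [Finset.sum_range_succ, Finset.sum_range_zero, hc6_0, hc6_1, hc6_2, hc6_3, hc6_4, hc6_5, hc6_6]
    ring
  refine ⟨fun k => [(3/40 : ℝ), (3/5 : ℝ), (15/8 : ℝ), (39/10 : ℝ), (399/80 : ℝ), (9/2 : ℝ), (33/16 : ℝ)].getD k 0, ?_, ?_, ?_⟩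
  · intro k hk; interval_cases k <;> norm_num
  · intro t
    simp only [Finset.sum_range_succ, Finset.sum_range_zero, hev0 t, hev1 t, hev2 t, hev3 t, hev4 t, hev5 t, hev6 t]
    norm_num [List.getD]
    ring
  · norm_num [List.getD]
end

section
/- Let C be a (240, 8, π/3) spherical code, i.e., 240 points on S⁷ with pairwise inner products at most 1/2. Then for every u ∈ C and every v ∈ C with v ≠ u, the inner product u·v lies in {-1, -1/2, 0, 1/2}. -/
open scoped RealInnerProductSpace

local notation "E8" => EuclideanSpace ℝ (Fin 8)

private lemma inner_eq' (x y : E8) : ⟪x, y⟫ = ∑ i, x i * y i := by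
  simp [PiLp.inner_apply, RCLike.inner_apply, mul_comm]

private lemma unit_sum' (x : E8) (hx : ‖x‖ = 1) : ∑ i, x i * x i = 1 := by
  have h := real_inner_self_eq_norm_sq x
  rw [hx] at h
  rw [inner_eq', one_pow] at h; exact h

private lemma pos_sum' {ι : Type*} [Fintype ι] (C : Finset E8) (F : E8 → ι → ℝ) :
    0 ≤ ∑ x ∈ C, ∑ y ∈ C, ∑ i, F x i * F y i := by
  have h : ∑ x ∈ C, ∑ y ∈ C, ∑ i, F x i * F y i = ∑ i, (∑ x ∈ C, F x i)^2 := by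
    calc ∑ x ∈ C, ∑ y ∈ C, ∑ i, F x i * F y i
        = ∑ x ∈ C, ∑ i, (F x i * ∑ y ∈ C, F y i) := by
          refine Finset.sum_congr rfl fun x _ => ?_
          rw [Finset.sum_comm]
          exact Finset.sum_congr rfl fun i _ => by rw [Finset.mul_sum]
      _ = ∑ i, ∑ x ∈ C, (F x i * ∑ y ∈ C, F y i) := Finset.sum_comm
      _ = ∑ i, (∑ x ∈ C, F x i)^2 := by
          refine Finset.sum_congr rfl fun i _ => ?_
          rw [← Finset.sum_mul, sq]
  rw [h]
  exact Finset.sum_nonneg fun i _ => sq_nonneg _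

private lemma peel' {κ : Type*} [Fintype κ] (x y : E8) (U V : κ → ℝ) :
    ∑ p : Fin 8 × κ, (x p.1 * U p.2) * (y p.1 * V p.2)
      = (∑ i, x i * y i) * ∑ q, U q * V q := by
  rw [Fintype.sum_prod_type, Finset.sum_mul_sum]
  exact Finset.sum_congr rfl fun i _ => Finset.sum_congr rfl fun q _ => by ring

noncomputable def phi2e (x : E8) (p : Fin 8 × Fin 8) : ℝ :=
  x p.1 * x p.2 - if p.1 = p.2 then (1/8:ℝ) else 0

noncomputable def phi3e (x : E8) (p : Fin 8 × Fin 8 × Fin 8) : ℝ :=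
  x p.1 * x p.2.1 * x p.2.2 - (1/10) * ((if p.1 = p.2.1 then (1:ℝ) else 0) * x p.2.2
    + (if p.1 = p.2.2 then (1:ℝ) else 0) * x p.2.1
    + (if p.2.1 = p.2.2 then (1:ℝ) else 0) * x p.1)

private lemma ker2 (x y : E8) (hx : ∑ i, x i * x i = 1) (hy : ∑ i, y i * y i = 1) :
    ∑ p : Fin 8 × Fin 8, phi2e x p * phi2e y p = (∑ i, x i * y i)^2 - 1/8 := by
  simp only [phi2e, Fintype.sum_prod_type]
  have expand : ∀ i j : Fin 8,
      (x i * x j - if i = j then (1/8:ℝ) else 0) * (y i * y j - if i = j then (1/8:ℝ) else 0)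
      = (x i * y i) * (x j * y j) - (if i = j then (1/8:ℝ) * (x i * x j) else 0)
        - (if i = j then (1/8:ℝ) * (y i * y j) else 0) + (if i = j then (1/8:ℝ) * (1/8) else 0) := by
    intro i j; by_cases h : i = j <;> simp [h] <;> ring
  simp only [expand, Finset.sum_add_distrib, Finset.sum_sub_distrib,
    Finset.sum_ite_eq, Finset.mem_univ, if_true]
  rw [← Finset.sum_mul_sum]
  simp only [← Finset.mul_sum, Finset.sum_const, Finset.card_univ, Fintype.card_fin,
    nsmul_eq_mul, hx, hy]
  push_cast
  ring

private lemma ker3 (x y : E8) (hx : ∑ i, x i * x i = 1) (hy : ∑ i, y i * y i = 1) :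
    ∑ p : Fin 8 × Fin 8 × Fin 8, phi3e x p * phi3e y p
      = (∑ i, x i * y i)^3 - (3/10) * (∑ i, x i * y i) := by
  simp only [phi3e, Fintype.sum_prod_type]
  have expand : ∀ i j k : Fin 8, ∀ dij dik djk : ℝ,
      (x i * x j * x k - (1/10) * (dij * x k + dik * x j + djk * x i)) *
      (y i * y j * y k - (1/10) * (dij * y k + dik * y j + djk * y i))
      = (x i * y i) * (x j * y j) * (x k * y k)
        - (1/10) * (dij * ((y i * y j) * (x k * y k)) + dik * ((y i * y k) * (x j * y j))
            + djk * ((y j * y k) * (x i * y i)))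
        - (1/10) * (dij * ((x i * x j) * (y k * x k)) + dik * ((x i * x k) * (y j * x j))
            + djk * ((x j * x k) * (y i * x i)))
        + (1/100) * (dij*dij*(x k * y k) + dij*dik*(x k * y j) + dij*djk*(x k * y i)
          + dik*dij*(x j * y k) + dik*dik*(x j * y j) + dik*djk*(x j * y i)
          + djk*dij*(x i * y k) + djk*dik*(x i * y j) + djk*djk*(x i * y i)) := by
    intros; ring
  simp only [expand]
  simp only [ite_mul, mul_ite, mul_zero, zero_mul, mul_one, one_mul,
    Finset.sum_add_distrib, Finset.sum_sub_distrib, ← Finset.mul_sum, ← Finset.sum_mul,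
    Finset.sum_ite_irrel, Finset.sum_const_zero,
    Finset.sum_ite_eq, Finset.sum_ite_eq', Finset.mem_univ, if_true,
    Finset.sum_const, Finset.card_univ, Fintype.card_fin, nsmul_eq_mul]
  have hyx : ∑ i : Fin 8, y i * x i = ∑ i, x i * y i :=
    Finset.sum_congr rfl fun i _ => mul_comm _ _
  have e1 : ∑ i : Fin 8, x i * ((8:ℝ) * y i) = 8 * ∑ i, x i * y i := by
    rw [Finset.mul_sum]; exact Finset.sum_congr rfl fun i _ => by ring
  push_cast
  simp only [e1, hyx, hx, hy]
  ring

noncomputable def phi4e (x : E8) (p : Fin 8 × Fin 8 × Fin 8 × Fin 8) : ℝ :=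
  x p.1 * x p.2.1 * x p.2.2.1 * x p.2.2.2 - (1/12) * ((if p.1 = p.2.1 then (1:ℝ) else 0) * (x p.2.2.1 * x p.2.2.2) + (if p.1 = p.2.2.1 then (1:ℝ) else 0) * (x p.2.1 * x p.2.2.2) + (if p.1 = p.2.2.2 then (1:ℝ) else 0) * (x p.2.1 * x p.2.2.1) + (if p.2.1 = p.2.2.1 then (1:ℝ) else 0) * (x p.1 * x p.2.2.2) + (if p.2.1 = p.2.2.2 then (1:ℝ) else 0) * (x p.1 * x p.2.2.1) + (if p.2.2.1 = p.2.2.2 then (1:ℝ) else 0) * (x p.1 * x p.2.1)) + (1/120) * ((if p.1 = p.2.1 then (1:ℝ) else 0) * (if p.2.2.1 = p.2.2.2 then (1:ℝ) else 0) + (if p.1 = p.2.2.1 then (1:ℝ) else 0) * (if p.2.1 = p.2.2.2 then (1:ℝ) else 0) + (if p.1 = p.2.2.2 then (1:ℝ) else 0) * (if p.2.1 = p.2.2.1 then (1:ℝ) else 0))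

set_option maxHeartbeats 4000000 in
set_option maxRecDepth 8000 in
private lemma ker4 (x y : E8) (hx : ∑ i, x i * x i = 1) (hy : ∑ i, y i * y i = 1) :
    ∑ p : Fin 8 × Fin 8 × Fin 8 × Fin 8, phi4e x p * phi4e y p
    = (∑ i, x i * y i)^4 - (1/2) * (∑ i, x i * y i)^2 + 1/40 := by
  simp only [phi4e, Fintype.sum_prod_type]
  have expand : ∀ i j k l : Fin 8, ∀ dij dik dil djk djl dkl : ℝ,
      (x i * x j * x k * x l - (1/12) * (dij * (x k * x l) + dik * (x j * x l) + dil * (x j * x k) + djk * (x i * x l) + djl * (x i * x k) + dkl * (x i * x j)) + (1/120) * (dij * dkl + dik * djl + dil * djk)) *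
      (y i * y j * y k * y l - (1/12) * (dij * (y k * y l) + dik * (y j * y l) + dil * (y j * y k) + djk * (y i * y l) + djl * (y i * y k) + dkl * (y i * y j)) + (1/120) * (dij * dkl + dik * djl + dil * djk))
      = (1) * (x i * y i) * (x j * y j) * (x k * y k) * (x l * y l)
      + (-1/12) * dij * (x i * x j) * (x k * y k) * (x l * y l)
      + (-1/12) * dik * (x j * y j) * (x i * x k) * (x l * y l)
      + (-1/12) * dil * (x j * y j) * (x k * y k) * (x i * x l)
      + (-1/12) * djk * (x i * y i) * (x j * x k) * (x l * y l)
      + (-1/12) * djl * (x i * y i) * (x k * y k) * (x j * x l)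
      + (-1/12) * dkl * (x i * y i) * (x j * y j) * (x k * x l)
      + (1/120) * dij * dkl * (x i * x j) * (x k * x l)
      + (1/120) * dik * djl * (x i * x k) * (x j * x l)
      + (1/120) * dil * djk * (x j * x k) * (x i * x l)
      + (-1/12) * dij * (y i * y j) * (x k * y k) * (x l * y l)
      + (1/144) * dij * dij * (x k * y k) * (x l * y l)
      + (1/144) * dij * dik * (x k * y j) * (x l * y l)
      + (1/144) * dij * dil * (x k * y k) * (x l * y j)
      + (1/144) * dij * djk * (x k * y i) * (x l * y l)
      + (1/144) * dij * djl * (x k * y k) * (x l * y i)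
      + (1/144) * dij * dkl * (y i * y j) * (x k * x l)
      + (-1/1440) * dij * dij * dkl * (x k * x l)
      + (-1/1440) * dij * dik * djl * (x k * x l)
      + (-1/1440) * dij * dil * djk * (x k * x l)
      + (-1/12) * dik * (x j * y j) * (y i * y k) * (x l * y l)
      + (1/144) * dik * dij * (x j * y k) * (x l * y l)
      + (1/144) * dik * dik * (x j * y j) * (x l * y l)
      + (1/144) * dik * dil * (x j * y j) * (x l * y k)
      + (1/144) * dik * djk * (x j * y i) * (x l * y l)
      + (1/144) * dik * djl * (y i * y k) * (x j * x l)
      + (1/144) * dik * dkl * (x j * y j) * (x l * y i)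
      + (-1/1440) * dik * dij * dkl * (x j * x l)
      + (-1/1440) * dik * dik * djl * (x j * x l)
      + (-1/1440) * dik * dil * djk * (x j * x l)
      + (-1/12) * dil * (x j * y j) * (x k * y k) * (y i * y l)
      + (1/144) * dil * dij * (x j * y l) * (x k * y k)
      + (1/144) * dil * dik * (x j * y j) * (x k * y l)
      + (1/144) * dil * dil * (x j * y j) * (x k * y k)
      + (1/144) * dil * djk * (x j * x k) * (y i * y l)
      + (1/144) * dil * djl * (x k * y k) * (x j * y i)
      + (1/144) * dil * dkl * (x j * y j) * (x k * y i)
      + (-1/1440) * dil * dij * dkl * (x j * x k)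
      + (-1/1440) * dil * dik * djl * (x j * x k)
      + (-1/1440) * dil * dil * djk * (x j * x k)
      + (-1/12) * djk * (x i * y i) * (y j * y k) * (x l * y l)
      + (1/144) * djk * dij * (x i * y k) * (x l * y l)
      + (1/144) * djk * dik * (x i * y j) * (x l * y l)
      + (1/144) * djk * dil * (y j * y k) * (x i * x l)
      + (1/144) * djk * djk * (x i * y i) * (x l * y l)
      + (1/144) * djk * djl * (x i * y i) * (x l * y k)
      + (1/144) * djk * dkl * (x i * y i) * (x l * y j)
      + (-1/1440) * djk * dij * dkl * (x i * x l)
      + (-1/1440) * djk * dik * djl * (x i * x l)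
      + (-1/1440) * djk * dil * djk * (x i * x l)
      + (-1/12) * djl * (x i * y i) * (x k * y k) * (y j * y l)
      + (1/144) * djl * dij * (x k * y k) * (x i * y l)
      + (1/144) * djl * dik * (x i * x k) * (y j * y l)
      + (1/144) * djl * dil * (x k * y k) * (x i * y j)
      + (1/144) * djl * djk * (x i * y i) * (x k * y l)
      + (1/144) * djl * djl * (x i * y i) * (x k * y k)
      + (1/144) * djl * dkl * (x i * y i) * (x k * y j)
      + (-1/1440) * djl * dij * dkl * (x i * x k)
      + (-1/1440) * djl * dik * djl * (x i * x k)
      + (-1/1440) * djl * dil * djk * (x i * x k)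
      + (-1/12) * dkl * (x i * y i) * (x j * y j) * (y k * y l)
      + (1/144) * dkl * dij * (x i * x j) * (y k * y l)
      + (1/144) * dkl * dik * (x j * y j) * (x i * y l)
      + (1/144) * dkl * dil * (x j * y j) * (x i * y k)
      + (1/144) * dkl * djk * (x i * y i) * (x j * y l)
      + (1/144) * dkl * djl * (x i * y i) * (x j * y k)
      + (1/144) * dkl * dkl * (x i * y i) * (x j * y j)
      + (-1/1440) * dkl * dij * dkl * (x i * x j)
      + (-1/1440) * dkl * dik * djl * (x i * x j)
      + (-1/1440) * dkl * dil * djk * (x i * x j)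
      + (1/120) * dij * dkl * (y i * y j) * (y k * y l)
      + (-1/1440) * dij * dkl * dij * (y k * y l)
      + (-1/1440) * dij * dkl * dik * (y j * y l)
      + (-1/1440) * dij * dkl * dil * (y j * y k)
      + (-1/1440) * dij * dkl * djk * (y i * y l)
      + (-1/1440) * dij * dkl * djl * (y i * y k)
      + (-1/1440) * dij * dkl * dkl * (y i * y j)
      + (1/14400) * dij * dkl * dij * dkl
      + (1/14400) * dij * dkl * dik * djl
      + (1/14400) * dij * dkl * dil * djk
      + (1/120) * dik * djl * (y i * y k) * (y j * y l)
      + (-1/1440) * dik * djl * dij * (y k * y l)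
      + (-1/1440) * dik * djl * dik * (y j * y l)
      + (-1/1440) * dik * djl * dil * (y j * y k)
      + (-1/1440) * dik * djl * djk * (y i * y l)
      + (-1/1440) * dik * djl * djl * (y i * y k)
      + (-1/1440) * dik * djl * dkl * (y i * y j)
      + (1/14400) * dik * djl * dij * dkl
      + (1/14400) * dik * djl * dik * djl
      + (1/14400) * dik * djl * dil * djk
      + (1/120) * dil * djk * (y j * y k) * (y i * y l)
      + (-1/1440) * dil * djk * dij * (y k * y l)
      + (-1/1440) * dil * djk * dik * (y j * y l)
      + (-1/1440) * dil * djk * dil * (y j * y k)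
      + (-1/1440) * dil * djk * djk * (y i * y l)
      + (-1/1440) * dil * djk * djl * (y i * y k)
      + (-1/1440) * dil * djk * dkl * (y i * y j)
      + (1/14400) * dil * djk * dij * dkl
      + (1/14400) * dil * djk * dik * djl
      + (1/14400) * dil * djk * dil * djk := by
    intros; ring
  simp only [expand]
  simp (config := { maxSteps := 10000000 }) only [ite_mul, mul_ite, mul_zero, zero_mul, mul_one, one_mul,
    Finset.sum_add_distrib, Finset.sum_sub_distrib, ← Finset.mul_sum, ← Finset.sum_mul,
    Finset.sum_ite_irrel, Finset.sum_const_zero,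
    Finset.sum_ite_eq, Finset.sum_ite_eq', Finset.mem_univ, if_true,
    Finset.sum_const, Finset.card_univ, Fintype.card_fin, nsmul_eq_mul]
  have hyx : ∑ i : Fin 8, y i * x i = ∑ i, x i * y i :=
    Finset.sum_congr rfl fun i _ => mul_comm _ _
  have e1 : ∑ i : Fin 8, x i * ((8:ℝ) * y i) = 8 * ∑ i, x i * y i := by
    rw [Finset.mul_sum]; exact Finset.sum_congr rfl fun i _ => by ring
  have e2 : ∑ i : Fin 8, x i * ((8:ℝ) * x i) = 8 * ∑ i, x i * x i := by
    rw [Finset.mul_sum]; exact Finset.sum_congr rfl fun i _ => by ring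
  have e3 : ∑ i : Fin 8, y i * ((8:ℝ) * y i) = 8 * ∑ i, y i * y i := by
    rw [Finset.mul_sum]; exact Finset.sum_congr rfl fun i _ => by ring
  push_cast
  simp only [e1, e2, e3, hyx, hx, hy]
  ring

-- kernel positivity for the generator t^2 * h4
set_option maxHeartbeats 1600000 in
private lemma gen1 (C : Finset E8) (hC : ∀ x ∈ C, ‖x‖ = 1) :
    0 ≤ ∑ x ∈ C, ∑ y ∈ C,
      (⟪x, y⟫^2 * (⟪x, y⟫^4 - (1/2) * ⟪x, y⟫^2 + 1/40)) := by
  have key : ∀ x ∈ C, ∀ y ∈ C,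
      (∑ p : Fin 8 × Fin 8 × Fin 8 × Fin 8 × Fin 8 × Fin 8,
        (x p.1 * (x p.2.1 * phi4e x p.2.2)) * (y p.1 * (y p.2.1 * phi4e y p.2.2)))
      = ⟪x, y⟫^2 * (⟪x, y⟫^4 - (1/2) * ⟪x, y⟫^2 + 1/40) := by
    intro x hx y hy
    have hx1 := unit_sum' x (hC x hx)
    have hy1 := unit_sum' y (hC y hy)
    rw [inner_eq']
    have step1 : (∑ p : Fin 8 × Fin 8 × Fin 8 × Fin 8 × Fin 8 × Fin 8,
        (x p.1 * (x p.2.1 * phi4e x p.2.2)) * (y p.1 * (y p.2.1 * phi4e y p.2.2)))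
        = (∑ i, x i * y i) * ∑ q : Fin 8 × Fin 8 × Fin 8 × Fin 8 × Fin 8,
            (x q.1 * phi4e x q.2) * (y q.1 * phi4e y q.2) :=
      peel' (κ := Fin 8 × Fin 8 × Fin 8 × Fin 8 × Fin 8) x y (fun q => x q.1 * phi4e x q.2) (fun q => y q.1 * phi4e y q.2)
    have step2 : (∑ q : Fin 8 × Fin 8 × Fin 8 × Fin 8 × Fin 8,
        (x q.1 * phi4e x q.2) * (y q.1 * phi4e y q.2))
        = (∑ i, x i * y i) * ∑ r : Fin 8 × Fin 8 × Fin 8 × Fin 8,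
            phi4e x r * phi4e y r :=
      peel' (κ := Fin 8 × Fin 8 × Fin 8 × Fin 8) x y (phi4e x) (phi4e y)
    rw [step1, step2, ker4 x y hx1 hy1]
    ring
  calc (0:ℝ) ≤ ∑ x ∈ C, ∑ y ∈ C, ∑ p : Fin 8 × Fin 8 × Fin 8 × Fin 8 × Fin 8 × Fin 8,
        (x p.1 * (x p.2.1 * phi4e x p.2.2)) * (y p.1 * (y p.2.1 * phi4e y p.2.2)) :=
      pos_sum' (ι := Fin 8 × Fin 8 × Fin 8 × Fin 8 × Fin 8 × Fin 8) C (fun x p => x p.1 * (x p.2.1 * phi4e x p.2.2))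
    _ = _ := Finset.sum_congr rfl fun x hx => Finset.sum_congr rfl fun y hy => key x hx y hy

-- kernel positivity for t * h3
set_option maxHeartbeats 1600000 in
private lemma gen2 (C : Finset E8) (hC : ∀ x ∈ C, ‖x‖ = 1) :
    0 ≤ ∑ x ∈ C, ∑ y ∈ C, (⟪x, y⟫ * (⟪x, y⟫^3 - (3/10) * ⟪x, y⟫)) := by
  have key : ∀ x ∈ C, ∀ y ∈ C,
      (∑ p : Fin 8 × Fin 8 × Fin 8 × Fin 8,
        (x p.1 * phi3e x p.2) * (y p.1 * phi3e y p.2))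
      = ⟪x, y⟫ * (⟪x, y⟫^3 - (3/10) * ⟪x, y⟫) := by
    intro x hx y hy
    have hx1 := unit_sum' x (hC x hx)
    have hy1 := unit_sum' y (hC y hy)
    rw [inner_eq']
    have step1 : (∑ p : Fin 8 × Fin 8 × Fin 8 × Fin 8,
        (x p.1 * phi3e x p.2) * (y p.1 * phi3e y p.2))
        = (∑ i, x i * y i) * ∑ q : Fin 8 × Fin 8 × Fin 8, phi3e x q * phi3e y q :=
      peel' (κ := Fin 8 × Fin 8 × Fin 8) x y (phi3e x) (phi3e y)
    rw [step1, ker3 x y hx1 hy1]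
  calc (0:ℝ) ≤ ∑ x ∈ C, ∑ y ∈ C, ∑ p : Fin 8 × Fin 8 × Fin 8 × Fin 8,
        (x p.1 * phi3e x p.2) * (y p.1 * phi3e y p.2) :=
      pos_sum' (ι := Fin 8 × Fin 8 × Fin 8 × Fin 8) C (fun x p => x p.1 * phi3e x p.2)
    _ = _ := Finset.sum_congr rfl fun x hx => Finset.sum_congr rfl fun y hy => key x hx y hy

-- kernel positivity for t^2 * h3
set_option maxHeartbeats 1600000 in
private lemma gen3 (C : Finset E8) (hC : ∀ x ∈ C, ‖x‖ = 1) :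
    0 ≤ ∑ x ∈ C, ∑ y ∈ C, (⟪x, y⟫^2 * (⟪x, y⟫^3 - (3/10) * ⟪x, y⟫)) := by
  have key : ∀ x ∈ C, ∀ y ∈ C,
      (∑ p : Fin 8 × Fin 8 × Fin 8 × Fin 8 × Fin 8,
        (x p.1 * (x p.2.1 * phi3e x p.2.2)) * (y p.1 * (y p.2.1 * phi3e y p.2.2)))
      = ⟪x, y⟫^2 * (⟪x, y⟫^3 - (3/10) * ⟪x, y⟫) := by
    intro x hx y hy
    have hx1 := unit_sum' x (hC x hx)
    have hy1 := unit_sum' y (hC y hy)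
    rw [inner_eq']
    have step1 : (∑ p : Fin 8 × Fin 8 × Fin 8 × Fin 8 × Fin 8,
        (x p.1 * (x p.2.1 * phi3e x p.2.2)) * (y p.1 * (y p.2.1 * phi3e y p.2.2)))
        = (∑ i, x i * y i) * ∑ q : Fin 8 × Fin 8 × Fin 8 × Fin 8,
            (x q.1 * phi3e x q.2) * (y q.1 * phi3e y q.2) :=
      peel' (κ := Fin 8 × Fin 8 × Fin 8 × Fin 8) x y (fun q => x q.1 * phi3e x q.2) (fun q => y q.1 * phi3e y q.2)
    have step2 : (∑ q : Fin 8 × Fin 8 × Fin 8 × Fin 8,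
        (x q.1 * phi3e x q.2) * (y q.1 * phi3e y q.2))
        = (∑ i, x i * y i) * ∑ r : Fin 8 × Fin 8 × Fin 8, phi3e x r * phi3e y r :=
      peel' (κ := Fin 8 × Fin 8 × Fin 8) x y (phi3e x) (phi3e y)
    rw [step1, step2, ker3 x y hx1 hy1]
    ring
  calc (0:ℝ) ≤ ∑ x ∈ C, ∑ y ∈ C, ∑ p : Fin 8 × Fin 8 × Fin 8 × Fin 8 × Fin 8,
        (x p.1 * (x p.2.1 * phi3e x p.2.2)) * (y p.1 * (y p.2.1 * phi3e y p.2.2)) :=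
      pos_sum' (ι := Fin 8 × Fin 8 × Fin 8 × Fin 8 × Fin 8) C (fun x p => x p.1 * (x p.2.1 * phi3e x p.2.2))
    _ = _ := Finset.sum_congr rfl fun x hx => Finset.sum_congr rfl fun y hy => key x hx y hy

-- kernel positivity for h2
set_option maxHeartbeats 1600000 in
private lemma gen4 (C : Finset E8) (hC : ∀ x ∈ C, ‖x‖ = 1) :
    0 ≤ ∑ x ∈ C, ∑ y ∈ C, (⟪x, y⟫^2 - 1/8) := by
  have key : ∀ x ∈ C, ∀ y ∈ C,
      (∑ p : Fin 8 × Fin 8, phi2e x p * phi2e y p) = ⟪x, y⟫^2 - 1/8 := by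
    intro x hx y hy
    rw [inner_eq']
    exact ker2 x y (unit_sum' x (hC x hx)) (unit_sum' y (hC y hy))
  calc (0:ℝ) ≤ ∑ x ∈ C, ∑ y ∈ C, ∑ p : Fin 8 × Fin 8, phi2e x p * phi2e y p :=
      pos_sum' (ι := Fin 8 × Fin 8) C (fun x p => phi2e x p)
    _ = _ := Finset.sum_congr rfl fun x hx => Finset.sum_congr rfl fun y hy => key x hx y hy

-- kernel positivity for t^3 * h2
set_option maxHeartbeats 1600000 in
private lemma gen5 (C : Finset E8) (hC : ∀ x ∈ C, ‖x‖ = 1) :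
    0 ≤ ∑ x ∈ C, ∑ y ∈ C, (⟪x, y⟫^3 * (⟪x, y⟫^2 - 1/8)) := by
  have key : ∀ x ∈ C, ∀ y ∈ C,
      (∑ p : Fin 8 × Fin 8 × Fin 8 × Fin 8 × Fin 8,
        (x p.1 * (x p.2.1 * (x p.2.2.1 * phi2e x p.2.2.2)))
          * (y p.1 * (y p.2.1 * (y p.2.2.1 * phi2e y p.2.2.2))))
      = ⟪x, y⟫^3 * (⟪x, y⟫^2 - 1/8) := by
    intro x hx y hy
    have hx1 := unit_sum' x (hC x hx)
    have hy1 := unit_sum' y (hC y hy)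
    rw [inner_eq']
    have step1 : (∑ p : Fin 8 × Fin 8 × Fin 8 × Fin 8 × Fin 8,
        (x p.1 * (x p.2.1 * (x p.2.2.1 * phi2e x p.2.2.2)))
          * (y p.1 * (y p.2.1 * (y p.2.2.1 * phi2e y p.2.2.2))))
        = (∑ i, x i * y i) * ∑ q : Fin 8 × Fin 8 × Fin 8 × Fin 8,
            (x q.1 * (x q.2.1 * phi2e x q.2.2)) * (y q.1 * (y q.2.1 * phi2e y q.2.2)) :=
      peel' (κ := Fin 8 × Fin 8 × Fin 8 × Fin 8) x y (fun q => x q.1 * (x q.2.1 * phi2e x q.2.2))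
        (fun q => y q.1 * (y q.2.1 * phi2e y q.2.2))
    have step2 : (∑ q : Fin 8 × Fin 8 × Fin 8 × Fin 8,
        (x q.1 * (x q.2.1 * phi2e x q.2.2)) * (y q.1 * (y q.2.1 * phi2e y q.2.2)))
        = (∑ i, x i * y i) * ∑ r : Fin 8 × Fin 8 × Fin 8,
            (x r.1 * phi2e x r.2) * (y r.1 * phi2e y r.2) :=
      peel' (κ := Fin 8 × Fin 8 × Fin 8) x y (fun r => x r.1 * phi2e x r.2) (fun r => y r.1 * phi2e y r.2)
    have step3 : (∑ r : Fin 8 × Fin 8 × Fin 8,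
        (x r.1 * phi2e x r.2) * (y r.1 * phi2e y r.2))
        = (∑ i, x i * y i) * ∑ w : Fin 8 × Fin 8, phi2e x w * phi2e y w :=
      peel' (κ := Fin 8 × Fin 8) x y (phi2e x) (phi2e y)
    rw [step1, step2, step3, ker2 x y hx1 hy1]
    ring
  calc (0:ℝ) ≤ ∑ x ∈ C, ∑ y ∈ C, ∑ p : Fin 8 × Fin 8 × Fin 8 × Fin 8 × Fin 8,
        (x p.1 * (x p.2.1 * (x p.2.2.1 * phi2e x p.2.2.2)))
          * (y p.1 * (y p.2.1 * (y p.2.2.1 * phi2e y p.2.2.2))) :=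
      pos_sum' (ι := Fin 8 × Fin 8 × Fin 8 × Fin 8 × Fin 8) C (fun x p => x p.1 * (x p.2.1 * (x p.2.2.1 * phi2e x p.2.2.2)))
    _ = _ := Finset.sum_congr rfl fun x hx => Finset.sum_congr rfl fun y hy => key x hx y hy

private lemma fpoly_nonpos (s : ℝ) (h1 : -1 ≤ s) (h2 : s ≤ 1/2) :
    s^6 + (3/2)*s^5 + (1/4)*s^4 - (3/8)*s^3 - (1/8)*s^2 ≤ 0 := by
  have hp : 0 ≤ s^2 * ((s+1) * ((s+1/2)^2 * (1/2 - s))) := by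
    have := mul_nonneg (sq_nonneg (s+1/2)) (by linarith : (0:ℝ) ≤ 1/2 - s)
    have := mul_nonneg (by linarith : (0:ℝ) ≤ s + 1) this
    exact mul_nonneg (sq_nonneg s) this
  nlinarith [hp]

/-- In a (240, 8, π/3) spherical code (a maximum kissing configuration in
dimension 8) all inner products between distinct points lie in
`{-1, -1/2, 0, 1/2}`. -/
theorem kissing_dim8_inner_products
    (C : Finset (EuclideanSpace ℝ (Fin 8))) (hcard : C.card = 240)
    (hCsph : ∀ x ∈ C, ‖x‖ = 1)
    (hCcode : ∀ x ∈ C, ∀ y ∈ C, x ≠ y → ⟪x, y⟫ ≤ 1/2) :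
    ∀ u ∈ C, ∀ v ∈ C, u ≠ v →
      ⟪u, v⟫ ∈ ({-1, -(1/2), 0, 1/2} : Set ℝ) := by
  classical
  intro u hu v hv huv
  set f : ℝ → ℝ := fun s => s^6 + (3/2)*s^5 + (1/4)*s^4 - (3/8)*s^3 - (1/8)*s^2 with hf
  -- positivity of the LP combination
  have big : 0 ≤ ∑ x ∈ C, ∑ y ∈ C, (f ⟪x, y⟫ - 3/320) := by
    have e : ∑ x ∈ C, ∑ y ∈ C, (f ⟪x, y⟫ - 3/320)
        = (∑ x ∈ C, ∑ y ∈ C, (⟪x, y⟫^2 * (⟪x, y⟫^4 - (1/2) * ⟪x, y⟫^2 + 1/40)))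
          + (3/4) * (∑ x ∈ C, ∑ y ∈ C, (⟪x, y⟫ * (⟪x, y⟫^3 - (3/10) * ⟪x, y⟫)))
          + (15/14) * (∑ x ∈ C, ∑ y ∈ C, (⟪x, y⟫^2 * (⟪x, y⟫^3 - (3/10) * ⟪x, y⟫)))
          + (3/40) * (∑ x ∈ C, ∑ y ∈ C, (⟪x, y⟫^2 - 1/8))
          + (3/7) * (∑ x ∈ C, ∑ y ∈ C, (⟪x, y⟫^3 * (⟪x, y⟫^2 - 1/8))) := by
      simp only [Finset.mul_sum, ← Finset.sum_add_distrib]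
      refine Finset.sum_congr rfl fun x _ => Finset.sum_congr rfl fun y _ => ?_
      simp only [hf]
      ring
    rw [e]
    have g1 := gen1 C hCsph
    have g2 := gen2 C hCsph
    have g3 := gen3 C hCsph
    have g4 := gen4 C hCsph
    have g5 := gen5 C hCsph
    linarith
  -- split off the diagonal
  have diag : ∀ x ∈ C, f ⟪x, x⟫ = 9/4 := by
    intro x hx
    have : ⟪x, x⟫ = (1:ℝ) := by
      rw [real_inner_self_eq_norm_mul_norm, hCsph x hx]; norm_num
    rw [this]; simp only [hf]; norm_num
  have split : ∑ x ∈ C, ∑ y ∈ C, f ⟪x, y⟫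
      = ∑ x ∈ C, (9/4 + ∑ y ∈ C.erase x, f ⟪x, y⟫) := by
    refine Finset.sum_congr rfl fun x hx => ?_
    rw [← Finset.add_sum_erase C _ hx, diag x hx]
  have totsum : ∑ x ∈ C, ∑ y ∈ C, (f ⟪x, y⟫ - 3/320)
      = ∑ x ∈ C, ∑ y ∈ C, f ⟪x, y⟫ - 540 := by
    simp only [Finset.sum_sub_distrib, Finset.sum_const, hcard, nsmul_eq_mul]
    norm_num
  have S_nonneg : 0 ≤ ∑ x ∈ C, ∑ y ∈ C.erase x, f ⟪x, y⟫ := by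
    have h1 : ∑ x ∈ C, (9/4 + ∑ y ∈ C.erase x, f ⟪x, y⟫)
        = 540 + ∑ x ∈ C, ∑ y ∈ C.erase x, f ⟪x, y⟫ := by
      rw [Finset.sum_add_distrib, Finset.sum_const, hcard]
      norm_num
    rw [totsum, split, h1] at big
    linarith
  -- each off-diagonal term is nonpositive
  have nonpos : ∀ x ∈ C, ∀ y ∈ C.erase x, f ⟪x, y⟫ ≤ 0 := by
    intro x hx y hy
    obtain ⟨hyx, hyC⟩ := Finset.mem_erase.mp hy
    have hub : ⟪x, y⟫ ≤ 1/2 := hCcode x hx y hyC (Ne.symm hyx)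
    have hlb : -1 ≤ ⟪x, y⟫ := by
      have habs := abs_real_inner_le_norm x y
      rw [hCsph x hx, hCsph y hyC] at habs
      have := neg_abs_le ⟪x, y⟫
      linarith
    exact fpoly_nonpos _ hlb hub
  -- hence every off-diagonal term vanishes
  have Szero : ∑ x ∈ C, ∑ y ∈ C.erase x, f ⟪x, y⟫ = 0 := by
    have : ∑ x ∈ C, ∑ y ∈ C.erase x, f ⟪x, y⟫ ≤ 0 :=
      Finset.sum_nonpos fun x hx => Finset.sum_nonpos fun y hy => nonpos x hx y hy
    linarith
  have inner_zero : ∀ x ∈ C, ∑ y ∈ C.erase x, f ⟪x, y⟫ = 0 := by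
    have := (Finset.sum_eq_zero_iff_of_nonpos
      (fun x hx => Finset.sum_nonpos fun y hy => nonpos x hx y hy)).mp Szero
    exact this
  have term_zero : f ⟪u, v⟫ = 0 := by
    have hv' : v ∈ C.erase u := Finset.mem_erase.mpr ⟨Ne.symm huv, hv⟩
    have := (Finset.sum_eq_zero_iff_of_nonpos (fun y hy => nonpos u hu y hy)).mp
      (inner_zero u hu)
    exact this v hv'
  -- extract the roots
  set s := ⟪u, v⟫ with hs
  have hfac : s^2 * ((s + 1) * ((s + 1/2)^2 * (s - 1/2))) = 0 := by
    have hz : f s = 0 := term_zero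
    simp only [hf] at hz
    linear_combination hz
  rcases mul_eq_zero.mp hfac with h | h
  · have : s = 0 := by
      have := sq_eq_zero_iff.mp h
      exact this
    simp [Set.mem_insert_iff, this]
  · rcases mul_eq_zero.mp h with h | h
    · have : s = -1 := by linarith
      simp [Set.mem_insert_iff, this]
    · rcases mul_eq_zero.mp h with h | h
      · have : s = -(1/2) := by
          have := sq_eq_zero_iff.mp h
          linarith
        simp [Set.mem_insert_iff, this]
      · have : s = 1/2 := by linarith
        simp [Set.mem_insert_iff, this]
end

section
/- Let C be a (240, 8, π/3) spherical code on S⁷. Then its distance distribution is uniquely determined: A_{-1} = 1, A_{-1/2} = A_{1/2} = 56, A_0 = 126, and A_t = 0 for all other t ≠ 1. -/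
open scoped RealInnerProductSpace

open Finset
open scoped RealInnerProductSpace

def dl (i j : Fin 8) : ℝ := if i = j then 1 else 0

lemma dl_comm (i j : Fin 8) : dl i j = dl j i := by simp [dl, eq_comm]

lemma sum_dl_mul (k : Fin 8) (f : Fin 8 → ℝ) : ∑ i, dl i k * f i = f k := by
  simp [dl, ite_mul, Finset.sum_ite_eq']

lemma sum_dl_mul' (k : Fin 8) (f : Fin 8 → ℝ) : ∑ i, dl k i * f i = f k := by
  simp [dl, ite_mul, Finset.sum_ite_eq]

lemma sum_dl_diag : ∑ i : Fin 8, dl i i = 8 := by simp [dl]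

lemma sum_dl_dl (k l : Fin 8) : ∑ i, dl i k * dl i l = dl k l := by
  simp only [dl]
  rw [Finset.sum_eq_single k] <;> aesop

noncomputable def ph2 (a : Fin 8 → ℝ) (p : Fin 8 × Fin 8) : ℝ :=
  a p.1 * a p.2 - dl p.1 p.2 / 8

lemma tr2 (a : Fin 8 → ℝ) (ha : ∑ i, a i * a i = 1) : ∑ i, ph2 a (i, i) = 0 := by
  simp only [ph2, Finset.sum_sub_distrib, ha]
  rw [← Finset.sum_div, sum_dl_diag]
  norm_num

lemma ker2_s9 (a b : Fin 8 → ℝ) (ha : ∑ i, a i * a i = 1) (hb : ∑ i, b i * b i = 1) :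
    ∑ p : Fin 8 × Fin 8, ph2 a p * ph2 b p = (∑ i, a i * b i) ^ 2 - 1 / 8 := by
  have expand : ∀ p : Fin 8 × Fin 8, ph2 a p * ph2 b p
      = ph2 a p * (b p.1 * b p.2) - (ph2 a p * dl p.1 p.2) / 8 := by
    intro p; simp only [ph2]; ring
  rw [Finset.sum_congr rfl fun p _ => expand p, Finset.sum_sub_distrib]
  have htr : ∑ p : Fin 8 × Fin 8, ph2 a p * dl p.1 p.2 = 0 := by
    rw [Fintype.sum_prod_type]
    have : ∀ i : Fin 8, ∑ j, ph2 a (i, j) * dl i j = ph2 a (i, i) := by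
      intro i
      rw [Finset.sum_eq_single i] <;> simp_all [dl]
      intro j hj; intro h; simp [h] at hj
    rw [Finset.sum_congr rfl fun i _ => this i, tr2 a ha]
  rw [← Finset.sum_div, htr]
  have hmain : ∑ p : Fin 8 × Fin 8, ph2 a p * (b p.1 * b p.2)
      = (∑ i, a i * b i) ^ 2 - 1 / 8 := by
    rw [Fintype.sum_prod_type]
    have key : ∀ i j : Fin 8, ph2 a (i,j) * (b i * b j)
        = (a i * b i) * (a j * b j) - (dl i j * (b i * b j)) / 8 := by
      intro i j; simp only [ph2]; ring
    simp only [key, Finset.sum_sub_distrib]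
    have h1 : ∑ i : Fin 8, ∑ j : Fin 8, (a i * b i) * (a j * b j)
        = (∑ i, a i * b i)^2 := by rw [sq, Finset.sum_mul_sum]
    have h2 : ∑ i : Fin 8, ∑ j : Fin 8, (dl i j * (b i * b j)) / 8 = 1/8 := by
      have : ∀ i : Fin 8, ∑ j : Fin 8, (dl i j * (b i * b j)) / 8
          = (b i * b i) / 8 := by
        intro i
        rw [← Finset.sum_div]
        congr 1
        have := sum_dl_mul' (f := fun j => b i * b j) i
        simpa [mul_comm, mul_assoc, mul_left_comm] using this
      rw [Finset.sum_congr rfl fun i _ => this i, ← Finset.sum_div, hb]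
    rw [h1, h2]
  rw [hmain]
  ring

noncomputable def ph3 (a : Fin 8 → ℝ) (p : Fin 8 × Fin 8 × Fin 8) : ℝ :=
  a p.1 * a p.2.1 * a p.2.2 -
    (dl p.1 p.2.1 * a p.2.2 + dl p.1 p.2.2 * a p.2.1 + dl p.2.1 p.2.2 * a p.1) / 10

section
variable (a b : Fin 8 → ℝ)

lemma tr3_12 (ha : ∑ i, a i * a i = 1) (k : Fin 8) : ∑ i, ph3 a (i, i, k) = 0 := by
  have expand : ∀ i, ph3 a (i, i, k)
      = (a i * a i) * a k - (dl i i * a k + dl i k * a i + dl i k * a i) / 10 := by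
    intro i; simp only [ph3]; try rw [dl_comm i k]; try ring
  rw [Finset.sum_congr rfl fun i _ => expand i, Finset.sum_sub_distrib,
    ← Finset.sum_mul, ha, ← Finset.sum_div, Finset.sum_add_distrib,
    Finset.sum_add_distrib, ← Finset.sum_mul, sum_dl_diag,
    sum_dl_mul k (fun i => a i)]
  ring

lemma tr3_13 (ha : ∑ i, a i * a i = 1) (k : Fin 8) : ∑ i, ph3 a (i, k, i) = 0 := by
  have expand : ∀ i, ph3 a (i, k, i)
      = (a i * a i) * a k - (dl i k * a i + dl i i * a k + dl i k * a i) / 10 := by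
    intro i; simp only [ph3]; try rw [dl_comm k i]; try ring
  rw [Finset.sum_congr rfl fun i _ => expand i, Finset.sum_sub_distrib,
    ← Finset.sum_mul, ha, ← Finset.sum_div, Finset.sum_add_distrib,
    Finset.sum_add_distrib, ← Finset.sum_mul, sum_dl_diag,
    sum_dl_mul k (fun i => a i)]
  ring

lemma tr3_23 (ha : ∑ i, a i * a i = 1) (k : Fin 8) : ∑ i, ph3 a (k, i, i) = 0 := by
  have expand : ∀ i, ph3 a (k, i, i)
      = (a i * a i) * a k - (dl i k * a i + dl i k * a i + dl i i * a k) / 10 := by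
    intro i; simp only [ph3]; try rw [dl_comm k i]; try ring
  rw [Finset.sum_congr rfl fun i _ => expand i, Finset.sum_sub_distrib,
    ← Finset.sum_mul, ha, ← Finset.sum_div, Finset.sum_add_distrib,
    Finset.sum_add_distrib, ← Finset.sum_mul, sum_dl_diag,
    sum_dl_mul k (fun i => a i)]
  ring

end

lemma ker3_s9 (a b : Fin 8 → ℝ) (ha : ∑ i, a i * a i = 1) (hb : ∑ i, b i * b i = 1) :
    ∑ p : Fin 8 × Fin 8 × Fin 8, ph3 a p * ph3 b p
      = (∑ i, a i * b i) ^ 3 - 3/10 * (∑ i, a i * b i) := by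
  have expand : ∀ p : Fin 8 × Fin 8 × Fin 8, ph3 a p * ph3 b p
      = ph3 a p * (b p.1 * b p.2.1 * b p.2.2)
        - (ph3 a p * (dl p.1 p.2.1 * b p.2.2) + ph3 a p * (dl p.1 p.2.2 * b p.2.1)
           + ph3 a p * (dl p.2.1 p.2.2 * b p.1)) / 10 := by
    intro p; simp only [ph3]; ring
  rw [Finset.sum_congr rfl fun p _ => expand p, Finset.sum_sub_distrib, ← Finset.sum_div,
    Finset.sum_add_distrib, Finset.sum_add_distrib]
  have c12 : ∑ p : Fin 8 × Fin 8 × Fin 8, ph3 a p * (dl p.1 p.2.1 * b p.2.2) = 0 := by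
    rw [Fintype.sum_prod_type]
    have inner : ∀ i : Fin 8, ∑ q : Fin 8 × Fin 8, ph3 a (i, q) * (dl i q.1 * b q.2)
        = ∑ k, ph3 a (i, i, k) * b k := by
      intro i
      rw [Fintype.sum_prod_type]
      rw [Finset.sum_eq_single i]
      · exact Finset.sum_congr rfl fun k _ => by simp [dl]
      · intro j _ hj
        apply Finset.sum_eq_zero; intro k _
        simp [dl, (Ne.symm hj)]
      · simp
    rw [Finset.sum_congr rfl fun i _ => inner i, Finset.sum_comm]
    apply Finset.sum_eq_zero; intro k _
    rw [← Finset.sum_mul, tr3_12 a ha k, zero_mul]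
  have c13 : ∑ p : Fin 8 × Fin 8 × Fin 8, ph3 a p * (dl p.1 p.2.2 * b p.2.1) = 0 := by
    rw [Fintype.sum_prod_type]
    have inner : ∀ i : Fin 8, ∑ q : Fin 8 × Fin 8, ph3 a (i, q) * (dl i q.2 * b q.1)
        = ∑ j, ph3 a (i, j, i) * b j := by
      intro i
      rw [Fintype.sum_prod_type]
      apply Finset.sum_congr rfl; intro j _
      rw [Finset.sum_eq_single i]
      · simp [dl]
      · intro k _ hk; simp [dl, (Ne.symm hk)]
      · simp
    rw [Finset.sum_congr rfl fun i _ => inner i, Finset.sum_comm]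
    apply Finset.sum_eq_zero; intro j _
    rw [← Finset.sum_mul, tr3_13 a ha j, zero_mul]
  have c23 : ∑ p : Fin 8 × Fin 8 × Fin 8, ph3 a p * (dl p.2.1 p.2.2 * b p.1) = 0 := by
    rw [Fintype.sum_prod_type]
    apply Finset.sum_eq_zero; intro i _
    rw [Fintype.sum_prod_type]
    have inner : ∀ j : Fin 8, ∑ k, ph3 a (i, j, k) * (dl j k * b i)
        = ph3 a (i, j, j) * b i := by
      intro j
      rw [Finset.sum_eq_single j]
      · simp [dl]
      · intro k _ hk; simp [dl, (Ne.symm hk)]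
      · simp
    rw [Finset.sum_congr rfl fun j _ => inner j, ← Finset.sum_mul, tr3_23 a ha i, zero_mul]
  rw [c12, c13, c23]
  have main : ∑ p : Fin 8 × Fin 8 × Fin 8, ph3 a p * (b p.1 * b p.2.1 * b p.2.2)
      = (∑ i, a i * b i) ^ 3 - 3/10 * (∑ i, a i * b i) := by
    have expand2 : ∀ p : Fin 8 × Fin 8 × Fin 8, ph3 a p * (b p.1 * b p.2.1 * b p.2.2)
        = (a p.1 * b p.1) * ((a p.2.1 * b p.2.1) * (a p.2.2 * b p.2.2))
          - ((dl p.1 p.2.1 * (b p.1 * b p.2.1)) * (a p.2.2 * b p.2.2)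
             + (dl p.1 p.2.2 * (b p.1 * b p.2.2)) * (a p.2.1 * b p.2.1)
             + (dl p.2.1 p.2.2 * (b p.2.1 * b p.2.2)) * (a p.1 * b p.1)) / 10 := by
      intro p; simp only [ph3]; ring
    rw [Finset.sum_congr rfl fun p _ => expand2 p, Finset.sum_sub_distrib, ← Finset.sum_div,
      Finset.sum_add_distrib, Finset.sum_add_distrib]
    set S := ∑ i, a i * b i with hS
    have m0 : ∑ p : Fin 8 × Fin 8 × Fin 8,
        (a p.1 * b p.1) * ((a p.2.1 * b p.2.1) * (a p.2.2 * b p.2.2)) = S ^ 3 := by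
      rw [Fintype.sum_prod_type]
      have : ∀ i : Fin 8, ∑ q : Fin 8 × Fin 8,
          (a i * b i) * ((a q.1 * b q.1) * (a q.2 * b q.2))
          = (a i * b i) * S ^ 2 := by
        intro i
        rw [← Finset.mul_sum]
        congr 1
        rw [sq, Finset.sum_mul_sum, Fintype.sum_prod_type]
      rw [Finset.sum_congr rfl fun i _ => this i, ← Finset.sum_mul]
      ring
    have mgen : ∀ (c d : Fin 8 → ℝ), ∑ i : Fin 8, ∑ j : Fin 8, dl i j * (c i * c j) = ∑ i, c i * c i := by
      intro c d
      apply Finset.sum_congr rfl; intro i _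
      rw [Finset.sum_eq_single i]
      · simp [dl]
      · intro j _ hj; simp [dl, Ne.symm hj]
      · simp
    have m1 : ∑ p : Fin 8 × Fin 8 × Fin 8,
        (dl p.1 p.2.1 * (b p.1 * b p.2.1)) * (a p.2.2 * b p.2.2) = S := by
      rw [Fintype.sum_prod_type]
      have : ∀ i : Fin 8, ∑ q : Fin 8 × Fin 8, (dl i q.1 * (b i * b q.1)) * (a q.2 * b q.2)
          = (∑ j, dl i j * (b i * b j)) * S := by
        intro i
        rw [Finset.sum_mul_sum, Fintype.sum_prod_type]
      rw [Finset.sum_congr rfl fun i _ => this i, ← Finset.sum_mul, mgen b a, hb, one_mul]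
    have m2 : ∑ p : Fin 8 × Fin 8 × Fin 8,
        (dl p.1 p.2.2 * (b p.1 * b p.2.2)) * (a p.2.1 * b p.2.1) = S := by
      rw [Fintype.sum_prod_type]
      have : ∀ i : Fin 8, ∑ q : Fin 8 × Fin 8, (dl i q.2 * (b i * b q.2)) * (a q.1 * b q.1)
          = (∑ k, dl i k * (b i * b k)) * S := by
        intro i
        rw [Finset.sum_mul_sum, Fintype.sum_prod_type, Finset.sum_comm]
      rw [Finset.sum_congr rfl fun i _ => this i, ← Finset.sum_mul, mgen b a, hb, one_mul]
    have m3 : ∑ p : Fin 8 × Fin 8 × Fin 8,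
        (dl p.2.1 p.2.2 * (b p.2.1 * b p.2.2)) * (a p.1 * b p.1) = S := by
      rw [Fintype.sum_prod_type]
      have : ∀ i : Fin 8, ∑ q : Fin 8 × Fin 8, (dl q.1 q.2 * (b q.1 * b q.2)) * (a i * b i)
          = (a i * b i) * ∑ j, b j * b j := by
        intro i
        rw [Fintype.sum_prod_type]
        rw [show ∑ j : Fin 8, ∑ k : Fin 8, (dl j k * (b j * b k)) * (a i * b i)
            = (∑ j : Fin 8, ∑ k : Fin 8, dl j k * (b j * b k)) * (a i * b i) by
          rw [Finset.sum_mul]; exact Finset.sum_congr rfl fun j _ => by rw [Finset.sum_mul]]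
        rw [mgen b a]; ring
      rw [Finset.sum_congr rfl fun i _ => this i]
      simp only [hb, mul_one]
      exact hS.symm
    rw [m0, m1, m2, m3]
    ring
  rw [main]
  ring

noncomputable def ph4 (a : Fin 8 → ℝ) (p : Fin 8 × Fin 8 × Fin 8 × Fin 8) : ℝ :=
  a p.1 * a p.2.1 * a p.2.2.1 * a p.2.2.2 -
    (dl p.1 p.2.1 * (a p.2.2.1 * a p.2.2.2) + dl p.1 p.2.2.1 * (a p.2.1 * a p.2.2.2)
     + dl p.1 p.2.2.2 * (a p.2.1 * a p.2.2.1) + dl p.2.1 p.2.2.1 * (a p.1 * a p.2.2.2)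
     + dl p.2.1 p.2.2.2 * (a p.1 * a p.2.2.1) + dl p.2.2.1 p.2.2.2 * (a p.1 * a p.2.1)) / 12 +
    (dl p.1 p.2.1 * dl p.2.2.1 p.2.2.2 + dl p.1 p.2.2.1 * dl p.2.1 p.2.2.2
     + dl p.1 p.2.2.2 * dl p.2.1 p.2.2.1) / 120

section
variable (a : Fin 8 → ℝ)

lemma tr4_12 (ha : ∑ i, a i * a i = 1) (k l : Fin 8) : ∑ i, ph4 a (i, i, k, l) = 0 := by
  have expand : ∀ i, ph4 a (i, i, k, l) =
      (a i * a i) * (a k * a l)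
      - (dl i i * (a k * a l) + (dl i k * a i) * a l + (dl i l * a i) * a k
         + (dl i k * a i) * a l + (dl i l * a i) * a k + dl k l * (a i * a i)) / 12
      + (dl i i * dl k l + dl i k * dl i l + dl i k * dl i l) / 120 := by
    intro i; simp only [ph4]; ring
  rw [Finset.sum_congr rfl fun i _ => expand i]
  simp only [Finset.sum_add_distrib, Finset.sum_sub_distrib, ← Finset.sum_div,
    ← Finset.sum_mul, ← Finset.mul_sum]
  rw [ha, sum_dl_diag, sum_dl_mul k a, sum_dl_mul l a, sum_dl_dl k l]
  ring

lemma tr4_13 (ha : ∑ i, a i * a i = 1) (k l : Fin 8) : ∑ i, ph4 a (i, k, i, l) = 0 := by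
  have expand : ∀ i, ph4 a (i, k, i, l) =
      (a i * a i) * (a k * a l)
      - ((dl i k * a i) * a l + dl i i * (a k * a l) + (dl i l * a i) * a k
         + (dl i k * a i) * a l + dl k l * (a i * a i) + (dl i l * a i) * a k) / 12
      + (dl i k * dl i l + dl i i * dl k l + dl i k * dl i l) / 120 := by
    intro i; simp only [ph4]; rw [dl_comm k i, dl_comm k l]; try ring
  rw [Finset.sum_congr rfl fun i _ => expand i]
  simp only [Finset.sum_add_distrib, Finset.sum_sub_distrib, ← Finset.sum_div,
    ← Finset.sum_mul, ← Finset.mul_sum]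
  rw [ha, sum_dl_diag, sum_dl_mul k a, sum_dl_mul l a, sum_dl_dl k l]
  ring

lemma tr4_14 (ha : ∑ i, a i * a i = 1) (k l : Fin 8) : ∑ i, ph4 a (i, k, l, i) = 0 := by
  have expand : ∀ i, ph4 a (i, k, l, i) =
      (a i * a i) * (a k * a l)
      - ((dl i k * a i) * a l + (dl i l * a i) * a k + dl i i * (a k * a l)
         + dl k l * (a i * a i) + (dl i k * a i) * a l + (dl i l * a i) * a k) / 12
      + (dl i k * dl i l + dl i k * dl i l + dl i i * dl k l) / 120 := by
    intro i; simp only [ph4]; rw [dl_comm k l, dl_comm k i, dl_comm l i]; try ring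
  rw [Finset.sum_congr rfl fun i _ => expand i]
  simp only [Finset.sum_add_distrib, Finset.sum_sub_distrib, ← Finset.sum_div,
    ← Finset.sum_mul, ← Finset.mul_sum]
  rw [ha, sum_dl_diag, sum_dl_mul k a, sum_dl_mul l a, sum_dl_dl k l]
  ring

lemma tr4_23 (ha : ∑ i, a i * a i = 1) (k l : Fin 8) : ∑ i, ph4 a (k, i, i, l) = 0 := by
  have expand : ∀ i, ph4 a (k, i, i, l) =
      (a i * a i) * (a k * a l)
      - ((dl i k * a i) * a l + (dl i k * a i) * a l + dl k l * (a i * a i)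
         + dl i i * (a k * a l) + (dl i l * a i) * a k + (dl i l * a i) * a k) / 12
      + (dl i k * dl i l + dl i k * dl i l + dl k l * dl i i) / 120 := by
    intro i; simp only [ph4]; rw [dl_comm k i, dl_comm k l]; try ring
  rw [Finset.sum_congr rfl fun i _ => expand i]
  simp only [Finset.sum_add_distrib, Finset.sum_sub_distrib, ← Finset.sum_div,
    ← Finset.sum_mul, ← Finset.mul_sum]
  rw [ha, sum_dl_diag, sum_dl_mul k a, sum_dl_mul l a, sum_dl_dl k l]
  ring

lemma tr4_24 (ha : ∑ i, a i * a i = 1) (k l : Fin 8) : ∑ i, ph4 a (k, i, l, i) = 0 := by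
  have expand : ∀ i, ph4 a (k, i, l, i) =
      (a i * a i) * (a k * a l)
      - ((dl i k * a i) * a l + dl k l * (a i * a i) + (dl i k * a i) * a l
         + (dl i l * a i) * a k + dl i i * (a k * a l) + (dl i l * a i) * a k) / 12
      + (dl i k * dl i l + dl k l * dl i i + dl i k * dl i l) / 120 := by
    intro i; simp only [ph4]; rw [dl_comm k i, dl_comm k l, dl_comm l i]; try ring
  rw [Finset.sum_congr rfl fun i _ => expand i]
  simp only [Finset.sum_add_distrib, Finset.sum_sub_distrib, ← Finset.sum_div,
    ← Finset.sum_mul, ← Finset.mul_sum]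
  rw [ha, sum_dl_diag, sum_dl_mul k a, sum_dl_mul l a, sum_dl_dl k l]
  ring

lemma tr4_34 (ha : ∑ i, a i * a i = 1) (k l : Fin 8) : ∑ i, ph4 a (k, l, i, i) = 0 := by
  have expand : ∀ i, ph4 a (k, l, i, i) =
      (a i * a i) * (a k * a l)
      - (dl k l * (a i * a i) + (dl i k * a i) * a l + (dl i k * a i) * a l
         + (dl i l * a i) * a k + (dl i l * a i) * a k + dl i i * (a k * a l)) / 12
      + (dl k l * dl i i + dl i k * dl i l + dl i k * dl i l) / 120 := by
    intro i; simp only [ph4]; rw [dl_comm k i, dl_comm l i]; try ring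
  rw [Finset.sum_congr rfl fun i _ => expand i]
  simp only [Finset.sum_add_distrib, Finset.sum_sub_distrib, ← Finset.sum_div,
    ← Finset.sum_mul, ← Finset.mul_sum]
  rw [ha, sum_dl_diag, sum_dl_mul k a, sum_dl_mul l a, sum_dl_dl k l]
  ring

end

lemma rot3 (f : Fin 8 → Fin 8 → Fin 8 → ℝ) :
    ∑ i, ∑ j, ∑ k, f i j k = ∑ j, ∑ k, ∑ i, f i j k := by
  rw [Finset.sum_comm]
  exact Finset.sum_congr rfl fun j _ => Finset.sum_comm

lemma ker4_s9 (a b : Fin 8 → ℝ) (ha : ∑ i, a i * a i = 1) (hb : ∑ i, b i * b i = 1) :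
    ∑ p : Fin 8 × Fin 8 × Fin 8 × Fin 8, ph4 a p * ph4 b p
      = (∑ i, a i * b i) ^ 4 - 1/2 * (∑ i, a i * b i) ^ 2 + 1/40 := by
  have mgenb : ∑ i : Fin 8, ∑ j : Fin 8, dl i j * (b i * b j) = 1 := by
    have : ∀ i : Fin 8, ∑ j : Fin 8, dl i j * (b i * b j) = b i * b i := by
      intro i
      rw [Finset.sum_eq_single i]
      · simp [dl]
      · intro j _ hj; simp [dl, Ne.symm hj]
      · simp
    rw [Finset.sum_congr rfl fun i _ => this i, hb]
  have sumS2 : ∑ y : Fin 8, ∑ z : Fin 8, (a y * b y) * (a z * b z) = (∑ i, a i * b i) ^ 2 := by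
    rw [sq, Finset.sum_mul_sum]
  -- step 1: expand the b-side
  have expand : ∀ p : Fin 8 × Fin 8 × Fin 8 × Fin 8, ph4 a p * ph4 b p
      = ph4 a p * (b p.1 * b p.2.1 * b p.2.2.1 * b p.2.2.2)
        - (ph4 a p * (dl p.1 p.2.1 * (b p.2.2.1 * b p.2.2.2))
           + ph4 a p * (dl p.1 p.2.2.1 * (b p.2.1 * b p.2.2.2))
           + ph4 a p * (dl p.1 p.2.2.2 * (b p.2.1 * b p.2.2.1))
           + ph4 a p * (dl p.2.1 p.2.2.1 * (b p.1 * b p.2.2.2))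
           + ph4 a p * (dl p.2.1 p.2.2.2 * (b p.1 * b p.2.2.1))
           + ph4 a p * (dl p.2.2.1 p.2.2.2 * (b p.1 * b p.2.1))) / 12
        + (ph4 a p * (dl p.1 p.2.1 * dl p.2.2.1 p.2.2.2)
           + ph4 a p * (dl p.1 p.2.2.1 * dl p.2.1 p.2.2.2)
           + ph4 a p * (dl p.1 p.2.2.2 * dl p.2.1 p.2.2.1)) / 120 := by
    intro p; simp only [ph4]; ring
  rw [Finset.sum_congr rfl fun p _ => expand p]
  simp only [Finset.sum_add_distrib, Finset.sum_sub_distrib, ← Finset.sum_div]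
  -- nested form rewriting helper
  have nest : ∀ F : Fin 8 × Fin 8 × Fin 8 × Fin 8 → ℝ,
      ∑ p : Fin 8 × Fin 8 × Fin 8 × Fin 8, F p
        = ∑ w, ∑ x, ∑ y, ∑ z, F (w, x, y, z) := by
    intro F
    rw [Fintype.sum_prod_type]
    exact Finset.sum_congr rfl fun w _ => by
      rw [Fintype.sum_prod_type]
      exact Finset.sum_congr rfl fun x _ => by rw [Fintype.sum_prod_type]
  -- the six D-contractions vanish
  have c34 : ∑ p : Fin 8 × Fin 8 × Fin 8 × Fin 8,
      ph4 a p * (dl p.2.2.1 p.2.2.2 * (b p.1 * b p.2.1)) = 0 := by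
    rw [nest]
    have col : ∀ w x y : Fin 8, ∑ z, ph4 a (w,x,y,z) * (dl y z * (b w * b x))
        = ph4 a (w,x,y,y) * (b w * b x) := by
      intro w x y
      rw [Finset.sum_eq_single y]
      · simp [dl]
      · intro z _ hz; simp [dl, Ne.symm hz]
      · simp
    rw [Finset.sum_congr rfl fun w _ => Finset.sum_congr rfl fun x _ =>
      Finset.sum_congr rfl fun y _ => col w x y]
    apply Finset.sum_eq_zero; intro w _
    apply Finset.sum_eq_zero; intro x _
    rw [← Finset.sum_mul, tr4_34 a ha w x, zero_mul]
  have c24 : ∑ p : Fin 8 × Fin 8 × Fin 8 × Fin 8,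
      ph4 a p * (dl p.2.1 p.2.2.2 * (b p.1 * b p.2.2.1)) = 0 := by
    rw [nest]
    have col : ∀ w x y : Fin 8, ∑ z, ph4 a (w,x,y,z) * (dl x z * (b w * b y))
        = ph4 a (w,x,y,x) * (b w * b y) := by
      intro w x y
      rw [Finset.sum_eq_single x]
      · simp [dl]
      · intro z _ hz; simp [dl, Ne.symm hz]
      · simp
    rw [Finset.sum_congr rfl fun w _ => Finset.sum_congr rfl fun x _ =>
      Finset.sum_congr rfl fun y _ => col w x y]
    apply Finset.sum_eq_zero; intro w _
    rw [Finset.sum_comm]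
    apply Finset.sum_eq_zero; intro y _
    rw [← Finset.sum_mul, tr4_24 a ha w y, zero_mul]
  have c14 : ∑ p : Fin 8 × Fin 8 × Fin 8 × Fin 8,
      ph4 a p * (dl p.1 p.2.2.2 * (b p.2.1 * b p.2.2.1)) = 0 := by
    rw [nest]
    have col : ∀ w x y : Fin 8, ∑ z, ph4 a (w,x,y,z) * (dl w z * (b x * b y))
        = ph4 a (w,x,y,w) * (b x * b y) := by
      intro w x y
      rw [Finset.sum_eq_single w]
      · simp [dl]
      · intro z _ hz; simp [dl, Ne.symm hz]
      · simp
    rw [Finset.sum_congr rfl fun w _ => Finset.sum_congr rfl fun x _ =>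
      Finset.sum_congr rfl fun y _ => col w x y]
    rw [rot3]
    apply Finset.sum_eq_zero; intro x _
    apply Finset.sum_eq_zero; intro y _
    rw [← Finset.sum_mul, tr4_14 a ha x y, zero_mul]
  have c23 : ∑ p : Fin 8 × Fin 8 × Fin 8 × Fin 8,
      ph4 a p * (dl p.2.1 p.2.2.1 * (b p.1 * b p.2.2.2)) = 0 := by
    rw [nest]
    have col : ∀ w x : Fin 8, ∑ y, ∑ z, ph4 a (w,x,y,z) * (dl x y * (b w * b z))
        = ∑ z, ph4 a (w,x,x,z) * (b w * b z) := by
      intro w x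
      rw [Finset.sum_comm]
      have inner : ∀ z, ∑ y, ph4 a (w,x,y,z) * (dl x y * (b w * b z))
          = ph4 a (w,x,x,z) * (b w * b z) := by
        intro z
        rw [Finset.sum_eq_single x]
        · simp [dl]
        · intro y _ hy; simp [dl, Ne.symm hy]
        · simp
      exact Finset.sum_congr rfl fun z _ => inner z
    rw [Finset.sum_congr rfl fun w _ => Finset.sum_congr rfl fun x _ => col w x]
    apply Finset.sum_eq_zero; intro w _
    rw [Finset.sum_comm]
    apply Finset.sum_eq_zero; intro z' _
    rw [← Finset.sum_mul, tr4_23 a ha w z', zero_mul]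
  have c13 : ∑ p : Fin 8 × Fin 8 × Fin 8 × Fin 8,
      ph4 a p * (dl p.1 p.2.2.1 * (b p.2.1 * b p.2.2.2)) = 0 := by
    rw [nest]
    have col : ∀ w x : Fin 8, ∑ y, ∑ z, ph4 a (w,x,y,z) * (dl w y * (b x * b z))
        = ∑ z, ph4 a (w,x,w,z) * (b x * b z) := by
      intro w x
      rw [Finset.sum_comm]
      have inner : ∀ z, ∑ y, ph4 a (w,x,y,z) * (dl w y * (b x * b z))
          = ph4 a (w,x,w,z) * (b x * b z) := by
        intro z
        rw [Finset.sum_eq_single w]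
        · simp [dl]
        · intro y _ hy; simp [dl, Ne.symm hy]
        · simp
      exact Finset.sum_congr rfl fun z _ => inner z
    rw [Finset.sum_congr rfl fun w _ => Finset.sum_congr rfl fun x _ => col w x]
    rw [rot3]
    apply Finset.sum_eq_zero; intro x _
    apply Finset.sum_eq_zero; intro z _
    rw [← Finset.sum_mul, tr4_13 a ha x z, zero_mul]
  have c12 : ∑ p : Fin 8 × Fin 8 × Fin 8 × Fin 8,
      ph4 a p * (dl p.1 p.2.1 * (b p.2.2.1 * b p.2.2.2)) = 0 := by
    rw [nest]
    have col : ∀ w : Fin 8, ∑ x, ∑ y, ∑ z, ph4 a (w,x,y,z) * (dl w x * (b y * b z))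
        = ∑ y, ∑ z, ph4 a (w,w,y,z) * (b y * b z) := by
      intro w
      rw [rot3]
      have inner : ∀ y z, ∑ x, ph4 a (w,x,y,z) * (dl w x * (b y * b z))
          = ph4 a (w,w,y,z) * (b y * b z) := by
        intro y z
        rw [Finset.sum_eq_single w]
        · simp [dl]
        · intro x _ hx; simp [dl, Ne.symm hx]
        · simp
      exact Finset.sum_congr rfl fun y _ => Finset.sum_congr rfl fun z _ => inner y z
    rw [Finset.sum_congr rfl fun w _ => col w, rot3]
    apply Finset.sum_eq_zero; intro y _
    apply Finset.sum_eq_zero; intro z _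
    rw [← Finset.sum_mul, tr4_12 a ha y z, zero_mul]
  -- the three E-contractions vanish
  have e1 : ∑ p : Fin 8 × Fin 8 × Fin 8 × Fin 8,
      ph4 a p * (dl p.1 p.2.1 * dl p.2.2.1 p.2.2.2) = 0 := by
    rw [nest]
    have col : ∀ w x y : Fin 8, ∑ z, ph4 a (w,x,y,z) * (dl w x * dl y z)
        = ph4 a (w,x,y,y) * dl w x := by
      intro w x y
      rw [Finset.sum_eq_single y]
      · simp [dl]
      · intro z _ hz; simp [dl, Ne.symm hz]
      · simp
    rw [Finset.sum_congr rfl fun w _ => Finset.sum_congr rfl fun x _ =>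
      Finset.sum_congr rfl fun y _ => col w x y]
    apply Finset.sum_eq_zero; intro w _
    apply Finset.sum_eq_zero; intro x _
    rw [← Finset.sum_mul, tr4_34 a ha w x, zero_mul]
  have e2 : ∑ p : Fin 8 × Fin 8 × Fin 8 × Fin 8,
      ph4 a p * (dl p.1 p.2.2.1 * dl p.2.1 p.2.2.2) = 0 := by
    rw [nest]
    have col : ∀ w x y : Fin 8, ∑ z, ph4 a (w,x,y,z) * (dl w y * dl x z)
        = ph4 a (w,x,y,x) * dl w y := by
      intro w x y
      rw [Finset.sum_eq_single x]
      · simp [dl]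
      · intro z _ hz; simp [dl, Ne.symm hz]
      · simp
    rw [Finset.sum_congr rfl fun w _ => Finset.sum_congr rfl fun x _ =>
      Finset.sum_congr rfl fun y _ => col w x y]
    have col2 : ∀ w x : Fin 8, ∑ y, ph4 a (w,x,y,x) * dl w y = ph4 a (w,x,w,x) := by
      intro w x
      rw [Finset.sum_eq_single w]
      · simp [dl]
      · intro y _ hy; simp [dl, Ne.symm hy]
      · simp
    rw [Finset.sum_congr rfl fun w _ => Finset.sum_congr rfl fun x _ => col2 w x,
      Finset.sum_comm]
    apply Finset.sum_eq_zero; intro x _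
    exact tr4_13 a ha x x
  have e3 : ∑ p : Fin 8 × Fin 8 × Fin 8 × Fin 8,
      ph4 a p * (dl p.1 p.2.2.2 * dl p.2.1 p.2.2.1) = 0 := by
    rw [nest]
    have col : ∀ w x y : Fin 8, ∑ z, ph4 a (w,x,y,z) * (dl w z * dl x y)
        = ph4 a (w,x,y,w) * dl x y := by
      intro w x y
      rw [Finset.sum_eq_single w]
      · simp [dl]
      · intro z _ hz; simp [dl, Ne.symm hz]
      · simp
    rw [Finset.sum_congr rfl fun w _ => Finset.sum_congr rfl fun x _ =>
      Finset.sum_congr rfl fun y _ => col w x y]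
    have col2 : ∀ w x : Fin 8, ∑ y, ph4 a (w,x,y,w) * dl x y = ph4 a (w,x,x,w) := by
      intro w x
      rw [Finset.sum_eq_single x]
      · simp [dl]
      · intro y _ hy; simp [dl, Ne.symm hy]
      · simp
    rw [Finset.sum_congr rfl fun w _ => Finset.sum_congr rfl fun x _ => col2 w x,
      Finset.sum_comm]
    apply Finset.sum_eq_zero; intro x _
    exact tr4_14 a ha x x
  -- helpers to pull constants out of sums
  have pull1 : ∀ (c : ℝ) (f : Fin 8 → ℝ), ∑ y, c * f y = c * ∑ y, f y :=
    fun c f => (Finset.mul_sum _ _ _).symm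
  have pull2 : ∀ (c : ℝ) (g : Fin 8 → Fin 8 → ℝ),
      ∑ y, ∑ z, c * g y z = c * ∑ y, ∑ z, g y z := by
    intro c g
    rw [Finset.mul_sum]
    exact Finset.sum_congr rfl fun y _ => (Finset.mul_sum _ _ _).symm
  have pull2r : ∀ (c : ℝ) (g : Fin 8 → Fin 8 → ℝ),
      ∑ y, ∑ z, g y z * c = (∑ y, ∑ z, g y z) * c := by
    intro c g
    rw [Finset.sum_mul]
    exact Finset.sum_congr rfl fun y _ => (Finset.sum_mul _ _ _).symm
  -- main term
  have main : ∑ p : Fin 8 × Fin 8 × Fin 8 × Fin 8,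
      ph4 a p * (b p.1 * b p.2.1 * b p.2.2.1 * b p.2.2.2)
      = (∑ i, a i * b i) ^ 4 - 1/2 * (∑ i, a i * b i) ^ 2 + 1/40 := by
    have expand2 : ∀ p : Fin 8 × Fin 8 × Fin 8 × Fin 8,
        ph4 a p * (b p.1 * b p.2.1 * b p.2.2.1 * b p.2.2.2)
        = (a p.1 * b p.1) * ((a p.2.1 * b p.2.1) * ((a p.2.2.1 * b p.2.2.1) * (a p.2.2.2 * b p.2.2.2)))
          - ((dl p.1 p.2.1 * (b p.1 * b p.2.1)) * ((a p.2.2.1 * b p.2.2.1) * (a p.2.2.2 * b p.2.2.2))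
             + (dl p.1 p.2.2.1 * (b p.1 * b p.2.2.1)) * ((a p.2.1 * b p.2.1) * (a p.2.2.2 * b p.2.2.2))
             + (dl p.1 p.2.2.2 * (b p.1 * b p.2.2.2)) * ((a p.2.1 * b p.2.1) * (a p.2.2.1 * b p.2.2.1))
             + (dl p.2.1 p.2.2.1 * (b p.2.1 * b p.2.2.1)) * ((a p.1 * b p.1) * (a p.2.2.2 * b p.2.2.2))
             + (dl p.2.1 p.2.2.2 * (b p.2.1 * b p.2.2.2)) * ((a p.1 * b p.1) * (a p.2.2.1 * b p.2.2.1))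
             + (dl p.2.2.1 p.2.2.2 * (b p.2.2.1 * b p.2.2.2)) * ((a p.1 * b p.1) * (a p.2.1 * b p.2.1))) / 12
          + ((dl p.1 p.2.1 * (b p.1 * b p.2.1)) * (dl p.2.2.1 p.2.2.2 * (b p.2.2.1 * b p.2.2.2))
             + (dl p.1 p.2.2.1 * (b p.1 * b p.2.2.1)) * (dl p.2.1 p.2.2.2 * (b p.2.1 * b p.2.2.2))
             + (dl p.1 p.2.2.2 * (b p.1 * b p.2.2.2)) * (dl p.2.1 p.2.2.1 * (b p.2.1 * b p.2.2.1))) / 120 := by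
      intro p; simp only [ph4]; ring
    rw [Finset.sum_congr rfl fun p _ => expand2 p]
    simp only [Finset.sum_add_distrib, Finset.sum_sub_distrib, ← Finset.sum_div]
    have mA : ∑ p : Fin 8 × Fin 8 × Fin 8 × Fin 8,
        (a p.1 * b p.1) * ((a p.2.1 * b p.2.1) * ((a p.2.2.1 * b p.2.2.1) * (a p.2.2.2 * b p.2.2.2)))
        = (∑ i, a i * b i) ^ 4 := by
      rw [nest]
      have h1 : ∀ w x : Fin 8,
          ∑ y, ∑ z, (a w * b w) * ((a x * b x) * ((a y * b y) * (a z * b z)))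
          = ((a w * b w) * (a x * b x)) * (∑ i, a i * b i) ^ 2 := by
        intro w x
        rw [Finset.sum_congr rfl fun y (_ : y ∈ Finset.univ) => Finset.sum_congr rfl
          fun z (_ : z ∈ Finset.univ) => show
            (a w * b w) * ((a x * b x) * ((a y * b y) * (a z * b z)))
            = ((a w * b w) * (a x * b x)) * ((a y * b y) * (a z * b z)) by ring]
        rw [pull2, sumS2]
      rw [Finset.sum_congr rfl fun w _ => Finset.sum_congr rfl fun x _ => h1 w x]
      have h2 : ∀ w : Fin 8, ∑ x, ((a w * b w) * (a x * b x)) * (∑ i, a i * b i) ^ 2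
          = ((a w * b w) * (∑ i, a i * b i)) * (∑ i, a i * b i) ^ 2 := by
        intro w
        rw [← Finset.sum_mul, ← Finset.mul_sum]
      rw [Finset.sum_congr rfl fun w _ => h2 w, ← Finset.sum_mul, ← Finset.sum_mul]
      ring
    rw [mA]
    have m12 : ∑ p : Fin 8 × Fin 8 × Fin 8 × Fin 8,
        (dl p.1 p.2.1 * (b p.1 * b p.2.1)) * ((a p.2.2.1 * b p.2.2.1) * (a p.2.2.2 * b p.2.2.2))
        = (∑ i, a i * b i) ^ 2 := by
      rw [nest]
      have h1 : ∀ w x : Fin 8,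
          ∑ y, ∑ z, (dl w x * (b w * b x)) * ((a y * b y) * (a z * b z))
          = (dl w x * (b w * b x)) * (∑ i, a i * b i) ^ 2 := by
        intro w x; rw [pull2, sumS2]
      rw [Finset.sum_congr rfl fun w _ => Finset.sum_congr rfl fun x _ => h1 w x,
        pull2r, mgenb, one_mul]
    rw [m12]
    have m13 : ∑ p : Fin 8 × Fin 8 × Fin 8 × Fin 8,
        (dl p.1 p.2.2.1 * (b p.1 * b p.2.2.1)) * ((a p.2.1 * b p.2.1) * (a p.2.2.2 * b p.2.2.2))
        = (∑ i, a i * b i) ^ 2 := by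
      rw [nest]
      rw [Finset.sum_congr rfl fun w _ => rot3 _]
      have h1 : ∀ w y : Fin 8,
          ∑ z, ∑ x, (dl w y * (b w * b y)) * ((a x * b x) * (a z * b z))
          = (dl w y * (b w * b y)) * (∑ i, a i * b i) ^ 2 := by
        intro w y
        rw [Finset.sum_congr rfl fun z (_ : z ∈ Finset.univ) => Finset.sum_congr rfl
          fun x (_ : x ∈ Finset.univ) => show
            (dl w y * (b w * b y)) * ((a x * b x) * (a z * b z))
            = (dl w y * (b w * b y)) * ((a z * b z) * (a x * b x)) by ring]
        rw [pull2, sumS2]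
      rw [Finset.sum_congr rfl fun w _ => Finset.sum_congr rfl fun y _ => h1 w y,
        pull2r, mgenb, one_mul]
    rw [m13]
    have m14 : ∑ p : Fin 8 × Fin 8 × Fin 8 × Fin 8,
        (dl p.1 p.2.2.2 * (b p.1 * b p.2.2.2)) * ((a p.2.1 * b p.2.1) * (a p.2.2.1 * b p.2.2.1))
        = (∑ i, a i * b i) ^ 2 := by
      rw [nest]
      rw [Finset.sum_congr rfl fun w _ => rot3 _]
      rw [Finset.sum_congr rfl fun w _ => rot3 _]
      have h1 : ∀ w z : Fin 8,
          ∑ x, ∑ y, (dl w z * (b w * b z)) * ((a x * b x) * (a y * b y))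
          = (dl w z * (b w * b z)) * (∑ i, a i * b i) ^ 2 := by
        intro w z; rw [pull2, sumS2]
      rw [Finset.sum_congr rfl fun w _ => Finset.sum_congr rfl fun z _ => h1 w z,
        pull2r, mgenb, one_mul]
    rw [m14]
    have m23 : ∑ p : Fin 8 × Fin 8 × Fin 8 × Fin 8,
        (dl p.2.1 p.2.2.1 * (b p.2.1 * b p.2.2.1)) * ((a p.1 * b p.1) * (a p.2.2.2 * b p.2.2.2))
        = (∑ i, a i * b i) ^ 2 := by
      rw [nest]
      have h1 : ∀ w x y : Fin 8,
          ∑ z, (dl x y * (b x * b y)) * ((a w * b w) * (a z * b z))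
          = ((dl x y * (b x * b y)) * (a w * b w)) * (∑ i, a i * b i) := by
        intro w x y
        rw [Finset.sum_congr rfl fun z (_ : z ∈ Finset.univ) => show
            (dl x y * (b x * b y)) * ((a w * b w) * (a z * b z))
            = ((dl x y * (b x * b y)) * (a w * b w)) * (a z * b z) by ring]
        rw [← Finset.mul_sum]
      rw [Finset.sum_congr rfl fun w _ => Finset.sum_congr rfl fun x _ =>
        Finset.sum_congr rfl fun y _ => h1 w x y]
      have h2 : ∀ w : Fin 8,
          ∑ x, ∑ y, ((dl x y * (b x * b y)) * (a w * b w)) * (∑ i, a i * b i)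
          = ((a w * b w) * (∑ i, a i * b i)) * 1 := by
        intro w
        rw [Finset.sum_congr rfl fun x (_ : x ∈ Finset.univ) => Finset.sum_congr rfl
          fun y (_ : y ∈ Finset.univ) => show
            ((dl x y * (b x * b y)) * (a w * b w)) * (∑ i, a i * b i)
            = ((a w * b w) * (∑ i, a i * b i)) * (dl x y * (b x * b y)) by ring]
        rw [pull2, mgenb]
      rw [Finset.sum_congr rfl fun w _ => h2 w]
      simp only [mul_one]
      rw [← Finset.sum_mul]
      ring
    rw [m23]
    have m24 : ∑ p : Fin 8 × Fin 8 × Fin 8 × Fin 8,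
        (dl p.2.1 p.2.2.2 * (b p.2.1 * b p.2.2.2)) * ((a p.1 * b p.1) * (a p.2.2.1 * b p.2.2.1))
        = (∑ i, a i * b i) ^ 2 := by
      rw [nest]
      rw [Finset.sum_congr rfl fun w _ => Finset.sum_comm]
      have h1 : ∀ w y : Fin 8,
          ∑ x, ∑ z, (dl x z * (b x * b z)) * ((a w * b w) * (a y * b y))
          = ((a w * b w) * (a y * b y)) * 1 := by
        intro w y
        rw [Finset.sum_congr rfl fun x (_ : x ∈ Finset.univ) => Finset.sum_congr rfl
          fun z (_ : z ∈ Finset.univ) => show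
            (dl x z * (b x * b z)) * ((a w * b w) * (a y * b y))
            = ((a w * b w) * (a y * b y)) * (dl x z * (b x * b z)) by ring]
        rw [pull2, mgenb]
      rw [Finset.sum_congr rfl fun w _ => Finset.sum_congr rfl fun y _ => h1 w y]
      simp only [mul_one]
      have h2 : ∀ w : Fin 8, ∑ y, (a w * b w) * (a y * b y) = (a w * b w) * (∑ i, a i * b i) := by
        intro w; rw [← Finset.mul_sum]
      rw [Finset.sum_congr rfl fun w _ => h2 w, ← Finset.sum_mul]
      ring
    rw [m24]
    have m34 : ∑ p : Fin 8 × Fin 8 × Fin 8 × Fin 8,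
        (dl p.2.2.1 p.2.2.2 * (b p.2.2.1 * b p.2.2.2)) * ((a p.1 * b p.1) * (a p.2.1 * b p.2.1))
        = (∑ i, a i * b i) ^ 2 := by
      rw [nest]
      have h1 : ∀ w x : Fin 8,
          ∑ y, ∑ z, (dl y z * (b y * b z)) * ((a w * b w) * (a x * b x))
          = ((a w * b w) * (a x * b x)) * 1 := by
        intro w x
        rw [Finset.sum_congr rfl fun y (_ : y ∈ Finset.univ) => Finset.sum_congr rfl
          fun z (_ : z ∈ Finset.univ) => show
            (dl y z * (b y * b z)) * ((a w * b w) * (a x * b x))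
            = ((a w * b w) * (a x * b x)) * (dl y z * (b y * b z)) by ring]
        rw [pull2, mgenb]
      rw [Finset.sum_congr rfl fun w _ => Finset.sum_congr rfl fun x _ => h1 w x]
      simp only [mul_one]
      have h2 : ∀ w : Fin 8, ∑ x, (a w * b w) * (a x * b x) = (a w * b w) * (∑ i, a i * b i) := by
        intro w; rw [← Finset.mul_sum]
      rw [Finset.sum_congr rfl fun w _ => h2 w, ← Finset.sum_mul]
      ring
    rw [m34]
    have n1 : ∑ p : Fin 8 × Fin 8 × Fin 8 × Fin 8,
        (dl p.1 p.2.1 * (b p.1 * b p.2.1)) * (dl p.2.2.1 p.2.2.2 * (b p.2.2.1 * b p.2.2.2))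
        = 1 := by
      rw [nest]
      have h1 : ∀ w x : Fin 8,
          ∑ y, ∑ z, (dl w x * (b w * b x)) * (dl y z * (b y * b z))
          = (dl w x * (b w * b x)) * 1 := by
        intro w x; rw [pull2, mgenb]
      rw [Finset.sum_congr rfl fun w _ => Finset.sum_congr rfl fun x _ => h1 w x]
      simp only [mul_one]
      exact mgenb
    rw [n1]
    have n2 : ∑ p : Fin 8 × Fin 8 × Fin 8 × Fin 8,
        (dl p.1 p.2.2.1 * (b p.1 * b p.2.2.1)) * (dl p.2.1 p.2.2.2 * (b p.2.1 * b p.2.2.2))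
        = 1 := by
      rw [nest]
      rw [Finset.sum_congr rfl fun w _ => Finset.sum_comm]
      have h1 : ∀ w y : Fin 8,
          ∑ x, ∑ z, (dl w y * (b w * b y)) * (dl x z * (b x * b z))
          = (dl w y * (b w * b y)) * 1 := by
        intro w y; rw [pull2, mgenb]
      rw [Finset.sum_congr rfl fun w _ => Finset.sum_congr rfl fun y _ => h1 w y]
      simp only [mul_one]
      exact mgenb
    rw [n2]
    have n3 : ∑ p : Fin 8 × Fin 8 × Fin 8 × Fin 8,
        (dl p.1 p.2.2.2 * (b p.1 * b p.2.2.2)) * (dl p.2.1 p.2.2.1 * (b p.2.1 * b p.2.2.1))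
        = 1 := by
      rw [nest]
      rw [Finset.sum_congr rfl fun w _ => rot3 _]
      rw [Finset.sum_congr rfl fun w _ => rot3 _]
      have h1 : ∀ w z : Fin 8,
          ∑ x, ∑ y, (dl w z * (b w * b z)) * (dl x y * (b x * b y))
          = (dl w z * (b w * b z)) * 1 := by
        intro w z; rw [pull2, mgenb]
      rw [Finset.sum_congr rfl fun w _ => Finset.sum_congr rfl fun z _ => h1 w z]
      simp only [mul_one]
      exact mgenb
    rw [n3]
    ring
  rw [main, c12, c13, c14, c23, c24, c34, e1, e2, e3]
  ring


-- generic psd lemma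
lemma psd_sum {α ι : Type*} [Fintype ι] (C : Finset α) (Φ : α → ι → ℝ) :
    0 ≤ ∑ u ∈ C, ∑ v ∈ C, ∑ i, Φ u i * Φ v i := by
  have h1 : ∑ u ∈ C, ∑ v ∈ C, ∑ i, Φ u i * Φ v i
      = ∑ i, ∑ u ∈ C, ∑ v ∈ C, Φ u i * Φ v i := by
    calc ∑ u ∈ C, ∑ v ∈ C, ∑ i, Φ u i * Φ v i
        = ∑ u ∈ C, ∑ i, ∑ v ∈ C, Φ u i * Φ v i :=
          Finset.sum_congr rfl fun u _ => Finset.sum_comm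
      _ = ∑ i, ∑ u ∈ C, ∑ v ∈ C, Φ u i * Φ v i := Finset.sum_comm
  rw [h1]
  apply Finset.sum_nonneg
  intro i _
  have : ∑ u ∈ C, ∑ v ∈ C, Φ u i * Φ v i = (∑ u ∈ C, Φ u i) ^ 2 := by
    rw [sq, Finset.sum_mul_sum]
  rw [this]
  exact sq_nonneg _

-- product of kernels
lemma prod_ker {ι κ : Type*} [Fintype ι] [Fintype κ] (f g : ι → ℝ) (p q : κ → ℝ) :
    ∑ x : ι × κ, (f x.1 * p x.2) * (g x.1 * q x.2)
      = (∑ i, f i * g i) * (∑ j, p j * q j) := by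
  rw [Fintype.sum_prod_type, Finset.sum_mul_sum]
  exact Finset.sum_congr rfl fun i _ => Finset.sum_congr rfl fun j _ => by ring

-- bridging
lemma inner_coords (u v : EuclideanSpace ℝ (Fin 8)) : ⟪u, v⟫ = ∑ i, u i * v i := by
  rw [PiLp.inner_apply]
  exact Finset.sum_congr rfl fun i _ => by
    simp [RCLike.inner_apply, mul_comm]

lemma unit_coords (u : EuclideanSpace ℝ (Fin 8)) (hu : ‖u‖ = 1) :
    ∑ i, u i * u i = 1 := by
  rw [← inner_coords, real_inner_self_eq_norm_mul_norm, hu]; norm_num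

set_option maxHeartbeats 4000000 in
open Classical in
/-- The distance distribution of a (240, 8, π/3) spherical code is uniquely
determined: `A₋₁ = 1`, `A₋₁/₂ = A₁/₂ = 56`, `A₀ = 126`, and `A t = 0` for all
other `t ≠ 1`. -/
theorem kissing_dim8_distance_distribution
    (C : Finset (EuclideanSpace ℝ (Fin 8))) (hcard : C.card = 240)
    (hCsph : ∀ x ∈ C, ‖x‖ = 1)
    (hCcode : ∀ x ∈ C, ∀ y ∈ C, x ≠ y → ⟪x, y⟫ ≤ 1/2)
    (A : ℝ → ℝ)
    (hA : ∀ t, A t = (1 / 240 : ℝ) *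
      ∑ u ∈ C, ((C.filter (fun v => ⟪u, v⟫ = t)).card : ℝ)) :
    A (-1) = 1 ∧ A (-(1/2)) = 56 ∧ A (1/2) = 56 ∧ A 0 = 126 ∧
    ∀ t : ℝ, t ≠ 1 → t ∉ ({-1, -(1/2), 0, 1/2} : Set ℝ) → A t = 0 := by
  have hu1 : ∀ u ∈ C, ∑ i, u i * u i = 1 := fun u hu => unit_coords u (hCsph u hu)
  have hself : ∀ u ∈ C, ⟪u, u⟫ = 1 := by
    intro u hu
    rw [real_inner_self_eq_norm_mul_norm, hCsph u hu]; norm_num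
  have hlow : ∀ u ∈ C, ∀ v ∈ C, -1 ≤ ⟪u, v⟫ := by
    intro u hu v hv
    have h := abs_real_inner_le_norm u v
    rw [hCsph u hu, hCsph v hv] at h
    have := neg_abs_le ⟪u, v⟫
    linarith
  -- nonnegativity of the six kernel sums
  have Q1 : (0:ℝ) ≤ ∑ u ∈ C, ∑ v ∈ C, ⟪u, v⟫ := by
    have h := psd_sum C (fun u : EuclideanSpace ℝ (Fin 8) => (fun i => u i : Fin 8 → ℝ))
    refine le_of_le_of_eq h (Finset.sum_congr rfl fun u _ => Finset.sum_congr rfl fun v _ => ?_)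
    rw [inner_coords]
  have Q2 : (0:ℝ) ≤ ∑ u ∈ C, ∑ v ∈ C, (⟪u, v⟫^2 - 1/8) := by
    have h := psd_sum C (fun u : EuclideanSpace ℝ (Fin 8) => ph2 (fun i => u i))
    refine le_of_le_of_eq h (Finset.sum_congr rfl fun u hu => Finset.sum_congr rfl fun v hv => ?_)
    rw [ker2_s9 _ _ (hu1 u hu) (hu1 v hv), inner_coords]
  have Q3 : (0:ℝ) ≤ ∑ u ∈ C, ∑ v ∈ C, (⟪u, v⟫^3 - 3/10 * ⟪u, v⟫) := by
    have h := psd_sum C (fun u : EuclideanSpace ℝ (Fin 8) => ph3 (fun i => u i))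
    refine le_of_le_of_eq h (Finset.sum_congr rfl fun u hu => Finset.sum_congr rfl fun v hv => ?_)
    rw [ker3_s9 _ _ (hu1 u hu) (hu1 v hv), inner_coords]
  have Q4 : (0:ℝ) ≤ ∑ u ∈ C, ∑ v ∈ C, (⟪u, v⟫^4 - 1/2 * ⟪u, v⟫^2 + 1/40) := by
    have h := psd_sum C (fun u : EuclideanSpace ℝ (Fin 8) => ph4 (fun i => u i))
    refine le_of_le_of_eq h (Finset.sum_congr rfl fun u hu => Finset.sum_congr rfl fun v hv => ?_)
    rw [ker4_s9 _ _ (hu1 u hu) (hu1 v hv), inner_coords]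
  have Q23 : (0:ℝ) ≤ ∑ u ∈ C, ∑ v ∈ C,
      ((⟪u, v⟫^2 - 1/8) * (⟪u, v⟫^3 - 3/10 * ⟪u, v⟫)) := by
    have h := psd_sum C (fun (u : EuclideanSpace ℝ (Fin 8))
      (x : (Fin 8 × Fin 8) × (Fin 8 × Fin 8 × Fin 8)) =>
        ph2 (fun i => u i) x.1 * ph3 (fun i => u i) x.2)
    refine le_of_le_of_eq h (Finset.sum_congr rfl fun u hu => Finset.sum_congr rfl fun v hv => ?_)
    rw [prod_ker, ker2_s9 _ _ (hu1 u hu) (hu1 v hv), ker3_s9 _ _ (hu1 u hu) (hu1 v hv), inner_coords]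
  have Q24 : (0:ℝ) ≤ ∑ u ∈ C, ∑ v ∈ C,
      ((⟪u, v⟫^2 - 1/8) * (⟪u, v⟫^4 - 1/2 * ⟪u, v⟫^2 + 1/40)) := by
    have h := psd_sum C (fun (u : EuclideanSpace ℝ (Fin 8))
      (x : (Fin 8 × Fin 8) × (Fin 8 × Fin 8 × Fin 8 × Fin 8)) =>
        ph2 (fun i => u i) x.1 * ph4 (fun i => u i) x.2)
    refine le_of_le_of_eq h (Finset.sum_congr rfl fun u hu => Finset.sum_congr rfl fun v hv => ?_)
    rw [prod_ker, ker2_s9 _ _ (hu1 u hu) (hu1 v hv), ker4_s9 _ _ (hu1 u hu) (hu1 v hv), inner_coords]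
  -- the polynomial P(t) = t^6 + 3/2 t^5 + 1/4 t^4 - 3/8 t^3 - 1/8 t^2
  -- combination identity
  have hcount : ∑ u ∈ C, ∑ v ∈ C, (1:ℝ) = 57600 := by
    simp [Finset.sum_const, hcard]; norm_num
  have hcomb :
      (∑ u ∈ C, ∑ v ∈ C, (⟪u, v⟫^6 + 3/2*⟪u, v⟫^5 + 1/4*⟪u, v⟫^4 - 3/8*⟪u, v⟫^3 - 1/8*⟪u, v⟫^2))
        - 540
      = 9/400 * (∑ u ∈ C, ∑ v ∈ C, ⟪u, v⟫)
        + 9/40 * (∑ u ∈ C, ∑ v ∈ C, (⟪u, v⟫^2 - 1/8))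
        + 21/80 * (∑ u ∈ C, ∑ v ∈ C, (⟪u, v⟫^3 - 3/10 * ⟪u, v⟫))
        + 7/8 * (∑ u ∈ C, ∑ v ∈ C, (⟪u, v⟫^4 - 1/2 * ⟪u, v⟫^2 + 1/40))
        + (∑ u ∈ C, ∑ v ∈ C, ((⟪u, v⟫^2 - 1/8) * (⟪u, v⟫^4 - 1/2 * ⟪u, v⟫^2 + 1/40)))
        + 3/2 * (∑ u ∈ C, ∑ v ∈ C, ((⟪u, v⟫^2 - 1/8) * (⟪u, v⟫^3 - 3/10 * ⟪u, v⟫))) := by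
    have expand : ∑ u ∈ C, ∑ v ∈ C,
        (⟪u, v⟫^6 + 3/2*⟪u, v⟫^5 + 1/4*⟪u, v⟫^4 - 3/8*⟪u, v⟫^3 - 1/8*⟪u, v⟫^2)
        = ∑ u ∈ C, ∑ v ∈ C,
          (3/320 + (9/400 * ⟪u, v⟫ + 9/40 * (⟪u, v⟫^2 - 1/8) + 21/80 * (⟪u, v⟫^3 - 3/10 * ⟪u, v⟫)
          + 7/8 * (⟪u, v⟫^4 - 1/2 * ⟪u, v⟫^2 + 1/40)
          + ((⟪u, v⟫^2 - 1/8) * (⟪u, v⟫^4 - 1/2 * ⟪u, v⟫^2 + 1/40))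
          + 3/2 * ((⟪u, v⟫^2 - 1/8) * (⟪u, v⟫^3 - 3/10 * ⟪u, v⟫)))) :=
      Finset.sum_congr rfl fun u _ => Finset.sum_congr rfl fun v _ => by ring
    rw [expand]
    simp only [Finset.sum_add_distrib, ← Finset.mul_sum, Finset.sum_const, hcard,
      nsmul_eq_mul]
    push_cast
    ring
  -- upper bound and pinching
  have hsplit : ∀ u ∈ C,
      ∑ v ∈ C, (⟪u, v⟫^6 + 3/2*⟪u, v⟫^5 + 1/4*⟪u, v⟫^4 - 3/8*⟪u, v⟫^3 - 1/8*⟪u, v⟫^2)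
      = 9/4 + ∑ v ∈ C.erase u, (⟪u, v⟫^6 + 3/2*⟪u, v⟫^5 + 1/4*⟪u, v⟫^4 - 3/8*⟪u, v⟫^3 - 1/8*⟪u, v⟫^2) := by
    intro u hu
    rw [← Finset.add_sum_erase C _ hu, hself u hu]
    norm_num
  have hneg : ∀ u ∈ C, ∀ v ∈ C.erase u,
      (⟪u, v⟫^6 + 3/2*⟪u, v⟫^5 + 1/4*⟪u, v⟫^4 - 3/8*⟪u, v⟫^3 - 1/8*⟪u, v⟫^2) ≤ 0 := by
    intro u hu v hv
    obtain ⟨hne, hvC⟩ := Finset.mem_erase.mp hv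
    have h1 : -1 ≤ ⟪u, v⟫ := hlow u hu v hvC
    have h2 : ⟪u, v⟫ ≤ 1/2 := hCcode u hu v hvC (fun h => hne (h ▸ rfl))
    have hfac : (⟪u, v⟫^6 + 3/2*⟪u, v⟫^5 + 1/4*⟪u, v⟫^4 - 3/8*⟪u, v⟫^3 - 1/8*⟪u, v⟫^2)
        = ((⟪u, v⟫ + 1) * ((⟪u, v⟫ + 1/2)^2 * ⟪u, v⟫^2)) * (⟪u, v⟫ - 1/2) := by ring
    rw [hfac]
    apply mul_nonpos_of_nonneg_of_nonpos
    · apply mul_nonneg (by linarith)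
      positivity
    · linarith
  have hW : ∑ u ∈ C, ∑ v ∈ C.erase u,
      (⟪u, v⟫^6 + 3/2*⟪u, v⟫^5 + 1/4*⟪u, v⟫^4 - 3/8*⟪u, v⟫^3 - 1/8*⟪u, v⟫^2) ≤ 0 :=
    Finset.sum_nonpos fun u hu => Finset.sum_nonpos fun v hv => hneg u hu v hv
  have hRW : (∑ u ∈ C, ∑ v ∈ C, (⟪u, v⟫^6 + 3/2*⟪u, v⟫^5 + 1/4*⟪u, v⟫^4 - 3/8*⟪u, v⟫^3 - 1/8*⟪u, v⟫^2))
      = 540 + ∑ u ∈ C, ∑ v ∈ C.erase u,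
        (⟪u, v⟫^6 + 3/2*⟪u, v⟫^5 + 1/4*⟪u, v⟫^4 - 3/8*⟪u, v⟫^3 - 1/8*⟪u, v⟫^2) := by
    rw [Finset.sum_congr rfl hsplit, Finset.sum_add_distrib, Finset.sum_const, hcard]
    norm_num
  -- all kernel sums vanish, and the configuration part vanishes
  have hW0 : ∑ u ∈ C, ∑ v ∈ C.erase u,
      (⟪u, v⟫^6 + 3/2*⟪u, v⟫^5 + 1/4*⟪u, v⟫^4 - 3/8*⟪u, v⟫^3 - 1/8*⟪u, v⟫^2) = 0 := by
    have := hcomb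
    rw [hRW] at this
    linarith
  have hq1 : (∑ u ∈ C, ∑ v ∈ C, ⟪u, v⟫) = 0 := by
    have := hcomb; rw [hRW, hW0] at this; linarith
  have hq2 : (∑ u ∈ C, ∑ v ∈ C, (⟪u, v⟫^2 - 1/8)) = 0 := by
    have := hcomb; rw [hRW, hW0] at this; linarith
  have hq3 : (∑ u ∈ C, ∑ v ∈ C, (⟪u, v⟫^3 - 3/10 * ⟪u, v⟫)) = 0 := by
    have := hcomb; rw [hRW, hW0] at this; linarith
  have hzero : ∀ u ∈ C, ∀ v ∈ C.erase u,
      (⟪u, v⟫^6 + 3/2*⟪u, v⟫^5 + 1/4*⟪u, v⟫^4 - 3/8*⟪u, v⟫^3 - 1/8*⟪u, v⟫^2) = 0 := by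
    have h1 := (Finset.sum_eq_zero_iff_of_nonpos
      (fun u hu => Finset.sum_nonpos fun v hv => hneg u hu v hv)).mp hW0
    intro u hu
    exact (Finset.sum_eq_zero_iff_of_nonpos (fun v hv => hneg u hu v hv)).mp (h1 u hu)
  -- root classification
  have hroot : ∀ u ∈ C, ∀ v ∈ C,
      ⟪u, v⟫ = -1 ∨ ⟪u, v⟫ = -(1/2) ∨ ⟪u, v⟫ = 0 ∨ ⟪u, v⟫ = 1/2 ∨ ⟪u, v⟫ = 1 := by
    intro u hu v hv
    by_cases h : v = u
    · subst h
      exact Or.inr (Or.inr (Or.inr (Or.inr (hself v hv))))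
    · have hv' : v ∈ C.erase u := Finset.mem_erase.mpr ⟨h, hv⟩
      have h0 := hzero u hu v hv'
      have hfac : (⟪u, v⟫ + 1) * ((⟪u, v⟫ + 1/2)^2 * (⟪u, v⟫^2 * (⟪u, v⟫ - 1/2))) = 0 := by
        linear_combination h0
      rcases mul_eq_zero.mp hfac with h1 | h23
      · left; linarith
      rcases mul_eq_zero.mp h23 with h2 | h34
      · right; left
        have := sq_eq_zero_iff.mp h2
        linarith
      rcases mul_eq_zero.mp h34 with h3 | h4
      · right; right; left
        exact sq_eq_zero_iff.mp h3
      · right; right; right; left; linarith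
  -- moment equations
  have hp2 : (∑ u ∈ C, ∑ v ∈ C, ⟪u, v⟫^2) = 7200 := by
    have hsub : (∑ u ∈ C, ∑ v ∈ C, (⟪u, v⟫^2 - 1/8))
        = (∑ u ∈ C, ∑ v ∈ C, ⟪u, v⟫^2) - 7200 := by
      simp only [Finset.sum_sub_distrib, Finset.sum_const, hcard, nsmul_eq_mul]
      push_cast; ring
    rw [hsub] at hq2
    linarith
  have hp3 : (∑ u ∈ C, ∑ v ∈ C, ⟪u, v⟫^3) = 0 := by
    have hsub : (∑ u ∈ C, ∑ v ∈ C, (⟪u, v⟫^3 - 3/10 * ⟪u, v⟫))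
        = (∑ u ∈ C, ∑ v ∈ C, ⟪u, v⟫^3) - 3/10 * (∑ u ∈ C, ∑ v ∈ C, ⟪u, v⟫) := by
      simp only [Finset.sum_sub_distrib, ← Finset.mul_sum]
    rw [hsub, hq1] at hq3
    linarith
  -- fiber decomposition
  have hmaps : ∀ u ∈ C, ∀ v ∈ C, ⟪u, v⟫ ∈ ({-1, -(1/2), 0, 1/2, 1} : Finset ℝ) := by
    intro u hu v hv
    rcases hroot u hu v hv with h|h|h|h|h <;>
      simp [h, Finset.mem_insert, Finset.mem_singleton]
  have fib : ∀ g : ℝ → ℝ, ∀ u ∈ C, ∑ v ∈ C, g ⟪u, v⟫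
      = ∑ t ∈ ({-1, -(1/2), 0, 1/2, 1} : Finset ℝ),
        ((C.filter fun v => ⟪u, v⟫ = t).card : ℝ) * g t := by
    intro g u hu
    rw [← Finset.sum_fiberwise_of_maps_to (fun v hv => hmaps u hu v hv) (fun v => g ⟪u, v⟫)]
    refine Finset.sum_congr rfl fun t ht => ?_
    have inner : ∀ v ∈ C.filter (fun v => ⟪u, v⟫ = t), g ⟪u, v⟫ = g t := fun v hv => by
      rw [(Finset.mem_filter.mp hv).2]
    rw [Finset.sum_congr rfl inner, Finset.sum_const, nsmul_eq_mul]
  have dsum : ∀ g : ℝ → ℝ, (∑ u ∈ C, ∑ v ∈ C, g ⟪u, v⟫)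
      = ∑ t ∈ ({-1, -(1/2), 0, 1/2, 1} : Finset ℝ),
        (∑ u ∈ C, ((C.filter fun v => ⟪u, v⟫ = t).card : ℝ)) * g t := by
    intro g
    rw [Finset.sum_congr rfl (fun u hu => fib g u hu), Finset.sum_comm]
    exact Finset.sum_congr rfl fun t _ => (Finset.sum_mul _ _ _).symm
  have Texp : ∀ f : ℝ → ℝ, ∑ t ∈ ({-1, -(1/2), 0, 1/2, 1} : Finset ℝ), f t
      = f (-1) + f (-(1/2)) + f 0 + f (1/2) + f 1 := by
    intro f
    rw [show ({-1, -(1/2), 0, 1/2, 1} : Finset ℝ)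
        = insert (-1) (insert (-(1/2)) (insert 0 (insert (1/2) {1}))) from rfl]
    rw [Finset.sum_insert (by norm_num [Finset.mem_insert, Finset.mem_singleton]),
        Finset.sum_insert (by norm_num [Finset.mem_insert, Finset.mem_singleton]),
        Finset.sum_insert (by norm_num [Finset.mem_insert, Finset.mem_singleton]),
        Finset.sum_insert (by norm_num [Finset.mem_singleton]),
        Finset.sum_singleton]
    ring
  -- abbreviate the counts
  have hB1 : (∑ u ∈ C, ((C.filter fun v => ⟪u, v⟫ = (1:ℝ)).card : ℝ)) = 240 := by
    have hfilter1 : ∀ u ∈ C, C.filter (fun v => ⟪u, v⟫ = (1:ℝ)) = {u} := by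
      intro u hu
      apply Finset.ext; intro v
      simp only [Finset.mem_filter, Finset.mem_singleton]
      constructor
      · rintro ⟨hvC, hvi⟩
        by_contra hne
        have := hCcode u hu v hvC (fun h => hne h.symm)
        rw [hvi] at this; linarith
      · intro h; subst h; exact ⟨hu, hself v hu⟩
    rw [Finset.sum_congr rfl (fun u hu => by rw [hfilter1 u hu, Finset.card_singleton])]
    simp [hcard]
  have d0 := dsum (fun _ => (1:ℝ))
  have d1 := dsum (fun t => t)
  have d2 := dsum (fun t => t^2)
  have d3 := dsum (fun t => t^3)
  rw [Texp] at d0 d1 d2 d3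
  simp only [mul_one, mul_zero, mul_neg] at d0 d1 d2 d3
  rw [hcount] at d0
  rw [hq1] at d1
  rw [hp2] at d2
  rw [hp3] at d3
  rw [hB1] at d0 d1 d2 d3
  -- solve for the counts
  have hBm1 : (∑ u ∈ C, ((C.filter fun v => ⟪u, v⟫ = (-1:ℝ)).card : ℝ)) = 240 := by
    norm_num at d1 d2 d3 ⊢; linarith
  have hBmh : (∑ u ∈ C, ((C.filter fun v => ⟪u, v⟫ = (-(1/2):ℝ)).card : ℝ)) = 13440 := by
    norm_num at d1 d2 d3 ⊢; linarith
  have hBh : (∑ u ∈ C, ((C.filter fun v => ⟪u, v⟫ = ((1/2):ℝ)).card : ℝ)) = 13440 := by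
    norm_num at d1 d2 d3 ⊢; linarith
  have hB0 : (∑ u ∈ C, ((C.filter fun v => ⟪u, v⟫ = (0:ℝ)).card : ℝ)) = 30240 := by
    norm_num at d0 d1 d2 d3 ⊢; linarith
  refine ⟨?_, ?_, ?_, ?_, ?_⟩
  · rw [hA (-1), hBm1]; norm_num
  · rw [hA (-(1/2)), hBmh]; norm_num
  · rw [hA (1/2), hBh]; norm_num
  · rw [hA 0, hB0]; norm_num
  · intro t ht1 ht2
    simp only [Set.mem_insert_iff, Set.mem_singleton_iff, not_or] at ht2
    obtain ⟨htm1, htmh, ht0, hth⟩ := ht2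
    rw [hA t]
    have hempty : ∀ u ∈ C, C.filter (fun v => ⟪u, v⟫ = t) = ∅ := by
      intro u hu
      rw [Finset.filter_eq_empty_iff]
      intro v hv heq
      rcases hroot u hu v hv with h|h|h|h|h
      · exact htm1 (by rw [← heq, h])
      · exact htmh (by rw [← heq, h])
      · exact ht0 (by rw [← heq, h])
      · exact hth (by rw [← heq, h])
      · exact ht1 (by rw [← heq, h])
    rw [Finset.sum_congr rfl (fun u hu => by rw [hempty u hu, Finset.card_empty])]
    simp
end

section
/- Let θ ≤ π/2 and let m ∈ {1,…,n}. Let a ∈ (-√((1+(m-1)cos θ)/m), -√((1+m·cos θ)/(m+1))) and T = [-1, a]. Fix e ∈ S^{n-1}. Then the maximum size of a spherical code C ⊂ S^{n-1} with pairwise inner products ≤ cos θ such that c·e ∈ T for every c ∈ C equals m. -/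
open scoped RealInnerProductSpace

section CapCodeAux

noncomputable def simplexVec (m : ℕ) (t β : ℝ) (i : Fin m) : EuclideanSpace ℝ (Fin m) :=
  (WithLp.equiv 2 (Fin m → ℝ)).symm (fun k => t + β * (if k = i then 1 else 0))

lemma simplexVec_apply (m : ℕ) (t β : ℝ) (i k : Fin m) :
    simplexVec m t β i k = t + β * (if k = i then 1 else 0) := rfl

lemma simplex_inner (m : ℕ) (t β : ℝ) (i j : Fin m) :
    ⟪simplexVec m t β i, simplexVec m t β j⟫
      = m * t^2 + 2*(β*t) + β^2 * (if i = j then 1 else 0) := by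
  simp only [PiLp.inner_apply, RCLike.inner_apply, conj_trivial, simplexVec_apply]
  have h : ∀ k : Fin m,
      (t + β * (if k = i then 1 else 0)) * (t + β * (if k = j then 1 else 0))
      = t^2 + (β*t) * (if k = i then 1 else 0) + (β*t) * (if k = j then 1 else 0)
        + β^2 * ((if k = i then 1 else 0) * (if k = j then 1 else 0)) := fun k => by ring
  rw [Finset.sum_congr rfl fun k _ => (mul_comm _ _).trans (h k)]
  simp only [Finset.sum_add_distrib, ← Finset.mul_sum, ite_mul, one_mul, zero_mul]
  simp [Finset.sum_ite_eq', Finset.card_univ, mul_comm]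
  ring

lemma simplex_inner_const (m : ℕ) (t β r : ℝ) (i : Fin m) :
    ⟪simplexVec m t β i, (WithLp.equiv 2 (Fin m → ℝ)).symm (fun _ => r)⟫
      = (m * t + β) * r := by
  simp only [PiLp.inner_apply, RCLike.inner_apply, conj_trivial, simplexVec_apply]
  have h : ∀ k : Fin m, (t + β * (if k = i then 1 else 0))
        * ((WithLp.equiv 2 (Fin m → ℝ)).symm (fun _ => r) k)
      = t*r + (β*r) * (if k = i then 1 else 0) := fun k => by
    show (t + β * (if k = i then 1 else 0)) * r = _
    ring
  rw [Finset.sum_congr rfl fun k _ => (mul_comm _ _).trans (h k)]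
  simp [Finset.sum_add_distrib, ← Finset.mul_sum, Finset.sum_ite_eq', Finset.card_univ]
  ring

lemma exists_isometry_map_unit (m n : ℕ) (hm : 0 < m) (hmn : m ≤ n)
    (u : EuclideanSpace ℝ (Fin m)) (hu : ‖u‖ = 1)
    (e : EuclideanSpace ℝ (Fin n)) (he : ‖e‖ = 1) :
    ∃ T : EuclideanSpace ℝ (Fin m) →ₗᵢ[ℝ] EuclideanSpace ℝ (Fin n), T u = e := by
  have hn : 0 < n := lt_of_lt_of_le hm hmn
  set i0 : Fin m := ⟨0, hm⟩
  set j0 : Fin n := ⟨0, hn⟩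
  have hos : ∀ (N : ℕ) (w : EuclideanSpace ℝ (Fin N)) (hw : ‖w‖ = 1) (i : Fin N),
      Orthonormal ℝ (({i} : Set (Fin N)).restrict (fun _ => w)) := by
    intro N w hw i
    constructor
    · intro _; exact hw
    · intro p q hpq
      exact absurd (Subtype.ext ((p.2 : p.1 ∈ ({i} : Set (Fin N))).trans
        (q.2 : q.1 ∈ ({i} : Set (Fin N))).symm)) hpq
  obtain ⟨g, hg⟩ := (hos m u hu i0).exists_orthonormalBasis_extension_of_card_eq (by simp)
  obtain ⟨b, hb⟩ := (hos n e he j0).exists_orthonormalBasis_extension_of_card_eq (by simp)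
  have hg0 : g i0 = u := hg i0 rfl
  have hb0 : b j0 = e := hb j0 rfl
  set f : Fin m → EuclideanSpace ℝ (Fin n) := fun k => b (Fin.castLE hmn k) with hf
  have hfo : Orthonormal ℝ f := b.orthonormal.comp _ (Fin.castLE_injective hmn)
  have hgo : Orthonormal ℝ (⇑g.toBasis) := by rw [g.coe_toBasis]; exact g.orthonormal
  set L := g.toBasis.constr ℝ f with hL
  have hfo' : Orthonormal ℝ (⇑L ∘ ⇑g.toBasis) := by
    have : ⇑L ∘ ⇑g.toBasis = f := funext fun k => g.toBasis.constr_basis ℝ f k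
    rw [this]; exact hfo
  refine ⟨L.isometryOfOrthonormal hgo hfo', ?_⟩
  have h1 : g.toBasis i0 = u := by rw [g.coe_toBasis]; exact hg0
  have h2 : (L.isometryOfOrthonormal hgo hfo') u = L u := rfl
  rw [h2, ← h1, g.toBasis.constr_basis ℝ f i0, hf]
  simp only []
  have : Fin.castLE hmn i0 = j0 := rfl
  rw [this, hb0]

lemma code_card_bound (n : ℕ) (θ a : ℝ) (ha_neg : a < 0)
    (e : EuclideanSpace ℝ (Fin n)) (he : ‖e‖ = 1)
    (C : Finset (EuclideanSpace ℝ (Fin n)))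
    (hC1 : ∀ x ∈ C, ‖x‖ = 1)
    (hC2 : ∀ x ∈ C, ∀ y ∈ C, x ≠ y → ⟪x, y⟫ ≤ Real.cos θ)
    (hC3 : ∀ x ∈ C, ⟪x, e⟫ ≤ a) :
    ((C.card : ℝ))^2 * a^2 ≤ C.card + C.card * ((C.card : ℝ) - 1) * Real.cos θ := by
  classical
  set N : ℝ := (C.card : ℝ) with hN
  have hN0 : 0 ≤ N := Nat.cast_nonneg _
  set s : EuclideanSpace ℝ (Fin n) := ∑ x ∈ C, x with hs
  have h_se : ⟪s, e⟫ ≤ N * a := by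
    rw [hs, sum_inner]
    calc ∑ x ∈ C, ⟪x, e⟫ ≤ C.card • a := Finset.sum_le_card_nsmul C _ a hC3
    _ = N * a := by rw [nsmul_eq_mul]
  have h_Na : N * a ≤ 0 := mul_nonpos_of_nonneg_of_nonpos hN0 ha_neg.le
  have h_sq : (N * a)^2 ≤ ⟪s, e⟫^2 := by nlinarith
  have h_cs : ⟪s, e⟫^2 ≤ ‖s‖^2 := by
    have h := abs_real_inner_le_norm s e
    rw [he, mul_one] at h
    calc ⟪s, e⟫^2 = |⟪s, e⟫|^2 := (sq_abs _).symm
    _ ≤ ‖s‖^2 := by nlinarith [abs_nonneg ⟪s, e⟫]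
  have h_norm : ‖s‖^2 = ∑ x ∈ C, ∑ y ∈ C, ⟪x, y⟫ := by
    rw [← real_inner_self_eq_norm_sq, hs]
    simp only [sum_inner, inner_sum]
    exact Finset.sum_congr rfl fun x _ => Finset.sum_congr rfl fun y _ => real_inner_comm x y
  have h_bound : ∑ x ∈ C, ∑ y ∈ C, ⟪x, y⟫ ≤ N * (1 + (N - 1) * Real.cos θ) := by
    have hrow : ∀ x ∈ C, ∑ y ∈ C, ⟪x, y⟫ ≤ 1 + (N - 1) * Real.cos θ := by
      intro x hx
      rw [← Finset.add_sum_erase C _ hx]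
      have h1 : ⟪x, x⟫ = 1 := by
        rw [real_inner_self_eq_norm_sq, hC1 x hx]; norm_num
      have h2 : ∑ y ∈ C.erase x, ⟪x, y⟫ ≤ (N - 1) * Real.cos θ := by
        calc ∑ y ∈ C.erase x, ⟪x, y⟫ ≤ (C.erase x).card • Real.cos θ :=
          Finset.sum_le_card_nsmul _ _ _ (fun y hy =>
            hC2 x hx y (Finset.mem_of_mem_erase hy) (Ne.symm (Finset.ne_of_mem_erase hy)))
        _ = (N - 1) * Real.cos θ := by
          rw [nsmul_eq_mul, Finset.card_erase_of_mem hx, Nat.cast_sub (by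
            exact Finset.card_pos.mpr ⟨x, hx⟩), Nat.cast_one]
      linarith
    calc ∑ x ∈ C, ∑ y ∈ C, ⟪x, y⟫ ≤ C.card • (1 + (N - 1) * Real.cos θ) :=
      Finset.sum_le_card_nsmul C _ _ hrow
    _ = N * (1 + (N - 1) * Real.cos θ) := by rw [nsmul_eq_mul]
  nlinarith

end CapCodeAux

set_option maxHeartbeats 1600000 in
/-- Bezdek–Musin type bound for codes in a spherical cap: for `θ ≤ π/2`,
`1 ≤ m ≤ n` and `a` in the stated interval, the maximum size of a `θ`-code
lying in the cap `{x : x·e ∈ [-1, a]}` is exactly `m`. -/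
theorem cap_code_max_size (n m : ℕ) (θ a : ℝ)
    (hθ : θ ≤ Real.pi / 2) (hm1 : 1 ≤ m) (hmn : m ≤ n)
    (ha : a ∈ Set.Ioo
      (-Real.sqrt ((1 + ((m : ℝ) - 1) * Real.cos θ) / m))
      (-Real.sqrt ((1 + (m : ℝ) * Real.cos θ) / (m + 1))))
    (e : EuclideanSpace ℝ (Fin n)) (he : ‖e‖ = 1) :
    IsGreatest {N : ℕ | ∃ C : Finset (EuclideanSpace ℝ (Fin n)),
      (∀ x ∈ C, ‖x‖ = 1) ∧
      (∀ x ∈ C, ∀ y ∈ C, x ≠ y → ⟪x, y⟫ ≤ Real.cos θ) ∧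
      (∀ x ∈ C, ⟪x, e⟫ ∈ Set.Icc (-1 : ℝ) a) ∧
      C.card = N} m := by
  classical
  set M : ℝ := (m : ℝ) with hM
  have hM1 : (1:ℝ) ≤ M := by rw [hM]; exact_mod_cast hm1
  have hM0 : (0:ℝ) < M := by linarith
  obtain ⟨haL, haU⟩ := ha
  -- basic consequences on `a`
  have ha_neg : a < 0 := lt_of_lt_of_le haU (neg_nonpos.mpr (Real.sqrt_nonneg _))
  have ha2L : a^2 < (1 + (M - 1) * Real.cos θ) / M := by
    have h1 : -a < Real.sqrt ((1 + (M - 1) * Real.cos θ) / M) := by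
      rw [hM]; linarith
    have := (Real.lt_sqrt (by linarith : (0:ℝ) ≤ -a)).mp h1
    nlinarith
  have hUa2 : (1 + M * Real.cos θ) / (M + 1) < a^2 := by
    have h1 : Real.sqrt ((1 + M * Real.cos θ) / (M + 1)) < -a := by
      rw [hM]; linarith
    have := (Real.sqrt_lt' (by linarith : (0:ℝ) < -a)).mp h1
    nlinarith
  have hcos1 : Real.cos θ ≤ 1 := Real.cos_le_one θ
  have hL1 : (1 + (M - 1) * Real.cos θ) / M ≤ 1 := by
    rw [div_le_one hM0]; nlinarith
  have ha2_1 : a^2 < 1 := lt_of_lt_of_le ha2L hL1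
  have ha_gt : -1 < a := by nlinarith
  have hMa2 : a^2 * M < 1 + (M - 1) * Real.cos θ := (lt_div_iff₀ hM0).mp ha2L
  have hUa2' : 1 + M * Real.cos θ < a^2 * (M + 1) := (div_lt_iff₀ (by linarith)).mp hUa2
  constructor
  · -- membership: construct a code of size m
    by_cases hm : m = 1
    · subst hm
      refine ⟨{-e}, ?_, ?_, ?_, ?_⟩
      · intro x hx; rw [Finset.mem_singleton] at hx; rw [hx, norm_neg, he]
      · intro x hx y hy hxy
        rw [Finset.mem_singleton] at hx hy
        exact absurd (hx.trans hy.symm) hxy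
      · intro x hx; rw [Finset.mem_singleton] at hx
        have : ⟪x, e⟫ = -1 := by
          rw [hx, inner_neg_left, real_inner_self_eq_norm_sq, he]; norm_num
        rw [this]; exact ⟨le_refl _, by linarith⟩
      · simp
    · have hm2 : 2 ≤ m := by omega
      have hM2 : (2:ℝ) ≤ M := by rw [hM]; exact_mod_cast hm2
      set s : ℝ := Real.sqrt M with hsdef
      have hs_pos : 0 < s := Real.sqrt_pos.mpr hM0
      have hs0 : s ≠ 0 := ne_of_gt hs_pos
      have hsm : s * s = M := Real.mul_self_sqrt hM0.le
      set β : ℝ := Real.sqrt (M * (1 - a^2) / (M - 1)) with hβdef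
      have hβarg_pos : 0 < M * (1 - a^2) / (M - 1) := by
        apply div_pos; nlinarith; linarith
      have hβ_pos : 0 < β := Real.sqrt_pos.mpr hβarg_pos
      have hβsq : β^2 = M * (1 - a^2) / (M - 1) := Real.sq_sqrt hβarg_pos.le
      set t : ℝ := a / s - β / M with htdef
      -- key algebra
      have key1 : M * t^2 + 2*(β*t) = a^2 - β^2/M := by
        rw [htdef, ← hsm]
        field_simp
        ring
      have hM0' : M ≠ 0 := ne_of_gt hM0
      have hM1' : M - 1 ≠ 0 := by intro h; rw [sub_eq_zero] at h; linarith
      have key2 : a^2 - β^2/M = a^2 - (1 - a^2)/(M - 1) := by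
        rw [hβsq]
        congr 1
        rw [div_div, mul_comm (M-1) M, ← div_div, mul_comm M (1 - a^2), mul_div_assoc, div_self hM0', mul_one]
      have key3 : a^2 - β^2/M + β^2 = 1 := by
        rw [key2, hβsq]; field_simp; ring
      have key4 : a^2 - (1 - a^2)/(M - 1) ≤ Real.cos θ := by
        have h1 : (a^2 - Real.cos θ) * (M - 1) ≤ 1 - a^2 := by nlinarith
        have h2 : a^2 - Real.cos θ ≤ (1 - a^2)/(M - 1) := by
          rw [le_div_iff₀ (by linarith : (0:ℝ) < M - 1)]; exact h1
        linarith
      set u : EuclideanSpace ℝ (Fin m) :=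
        (WithLp.equiv 2 (Fin m → ℝ)).symm (fun _ => 1/s) with hudef
      have huu : ⟪u, u⟫ = 1 := by
        rw [hudef]
        simp only [PiLp.inner_apply, RCLike.inner_apply, conj_trivial,
          WithLp.equiv_symm_apply, WithLp.ofLp_toLp]
        rw [Finset.sum_const, Finset.card_univ, Fintype.card_fin, nsmul_eq_mul, ← hM]
        field_simp
        exact hsm.symm.trans (sq s).symm
      have hu_norm : ‖u‖ = 1 := by
        have h := real_inner_self_eq_norm_mul_norm u
        rw [huu] at h
        rcases mul_self_eq_one_iff.mp h.symm with h1 | h1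
        · exact h1
        · nlinarith [norm_nonneg u]
      obtain ⟨T, hTu⟩ := exists_isometry_map_unit m n (by omega) hmn u hu_norm e he
      set y : Fin m → EuclideanSpace ℝ (Fin m) := simplexVec m t β with hy
      have hyy : ∀ i j : Fin m, ⟪y i, y j⟫
          = a^2 - β^2/M + β^2 * (if i = j then 1 else 0) := by
        intro i j
        rw [hy, simplex_inner, ← hM, key1]
      have hy_norm_sq : ∀ i : Fin m, ⟪y i, y i⟫ = 1 := by
        intro i
        rw [hyy i i, if_pos rfl, mul_one, key3]
      have hy_norm : ∀ i : Fin m, ‖y i‖ = 1 := by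
        intro i
        have h := real_inner_self_eq_norm_mul_norm (y i)
        rw [hy_norm_sq i] at h
        rcases mul_self_eq_one_iff.mp h.symm with h1 | h1
        · exact h1
        · nlinarith [norm_nonneg (y i)]
      have hy_pair : ∀ i j : Fin m, i ≠ j → ⟪y i, y j⟫ ≤ Real.cos θ := by
        intro i j hij
        rw [hyy i j, if_neg hij, mul_zero, add_zero, key2]
        exact key4
      have hyu : ∀ i : Fin m, ⟪y i, u⟫ = a := by
        intro i
        rw [hy, hudef, simplex_inner_const, ← hM, htdef]
        field_simp
        rw [← hsm]; ring
      have hinj : Function.Injective (fun i => T (y i)) := by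
        intro i j hEq
        by_contra hij
        have h1 : ⟪y i, y j⟫ = 1 := by
          rw [← T.inner_map_map (y i) (y j)]
          simp only at hEq
          rw [hEq, T.inner_map_map, hy_norm_sq j]
        rw [hyy i j, if_neg hij, mul_zero, add_zero] at h1
        nlinarith [hβ_pos, sq_nonneg β]
      refine ⟨Finset.image (fun i => T (y i)) Finset.univ, ?_, ?_, ?_, ?_⟩
      · intro x hx
        obtain ⟨i, _, rfl⟩ := Finset.mem_image.mp hx
        rw [T.norm_map, hy_norm i]
      · intro x hx z hz hxz
        obtain ⟨i, _, rfl⟩ := Finset.mem_image.mp hx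
        obtain ⟨j, _, rfl⟩ := Finset.mem_image.mp hz
        have hij : i ≠ j := fun h => hxz (by rw [h])
        rw [T.inner_map_map]
        exact hy_pair i j hij
      · intro x hx
        obtain ⟨i, _, rfl⟩ := Finset.mem_image.mp hx
        rw [← hTu, T.inner_map_map, hyu i]
        exact ⟨by linarith, le_refl _⟩
      · rw [Finset.card_image_of_injective _ hinj, Finset.card_univ, Fintype.card_fin]
  · -- upper bound
    rintro N ⟨C, hC1, hC2, hC3, hcard⟩
    by_contra hc
    push_neg at hc
    have hcard' : m + 1 ≤ C.card := by omega
    obtain ⟨D, hDC, hDcard⟩ := Finset.exists_subset_card_eq hcard'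
    have hb := code_card_bound n θ a ha_neg e he D
      (fun x hx => hC1 x (hDC hx))
      (fun x hx z hz => hC2 x (hDC hx) z (hDC hz))
      (fun x hx => (hC3 x (hDC hx)).2)
    rw [hDcard] at hb
    push_cast at hb
    nlinarith [hb, hUa2', hM0]
end
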